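/- arXiv:1605.08795 — 9 statements merged into one kernel-verified Lean document; each statement's English description precedes it below -/
import Mathlib

section
/- Let A ∈ ℝ^{m×n_A} and let B ∈ ℝ^{m×n_B} have unit-norm columns. Let k ≤ n_B and let OPT_k be a set of k columns of B maximizing f_A among all k-element subsets of B's columns, and assume σ := σ_min(OPT_k) > 0. Then for every ε > 0, every greedy sequence (T_i) for (A, B), and every natural number r ≥ 16k/(ε·σ), we have f_A(T_r) ≥ (1 − ε)·f_A(OPT_k). -/
open scoped RealInnerProductSpace

attribute [local instance] Classical.decEq

noncomputable def fVec {m : ℕ} (u : EuclideanSpace ℝ (Fin m))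
    (S : Finset (EuclideanSpace ℝ (Fin m))) : ℝ :=
  ‖(Submodule.orthogonalProjectionOnto (Submodule.span ℝ (S : Set (EuclideanSpace ℝ (Fin m)))) u :
      EuclideanSpace ℝ (Fin m))‖ ^ 2

noncomputable def fMat {m n : ℕ} (A : Fin n → EuclideanSpace ℝ (Fin m))
    (S : Finset (EuclideanSpace ℝ (Fin m))) : ℝ :=
  ∑ j, fVec (A j) S

noncomputable def sigmaMin {m : ℕ} (S : Finset (EuclideanSpace ℝ (Fin m))) : ℝ :=
  sInf {r : ℝ | ∃ α : S → ℝ, ∑ v, (α v) ^ 2 = 1 ∧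
    r = ‖∑ v, α v • (v : EuclideanSpace ℝ (Fin m))‖ ^ 2}

noncomputable def sigmaMax {m : ℕ} (S : Finset (EuclideanSpace ℝ (Fin m))) : ℝ :=
  sSup {r : ℝ | ∃ α : S → ℝ, ∑ v, (α v) ^ 2 = 1 ∧
    r = ‖∑ v, α v • (v : EuclideanSpace ℝ (Fin m))‖ ^ 2}

namespace GreedyAux

variable {m : ℕ}

local notation "E" => EuclideanSpace ℝ (Fin m)

noncomputable def pr (S : Finset E) (u : E) : E :=
  (Submodule.orthogonalProjectionOnto (Submodule.span ℝ (S : Set E)) u : E)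

lemma fVec_eq (u : E) (S : Finset E) : fVec u S = ‖pr S u‖ ^ 2 := rfl

lemma fVec_nonneg (u : E) (S : Finset E) : 0 ≤ fVec u S := sq_nonneg _

lemma pr_mem (S : Finset E) (u : E) : pr S u ∈ Submodule.span ℝ (S : Set E) :=
  SetLike.coe_mem _

lemma inner_pr_orthogonal (S : Finset E) (u z : E)
    (hz : z ∈ Submodule.span ℝ (S : Set E)) : ⟪u - pr S u, z⟫ = 0 :=
  Submodule.starProjection_inner_eq_zero u z hz

lemma norm_pr_le (S : Finset E) (u : E) : ‖pr S u‖ ≤ ‖u‖ := by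
  have h1 := (Submodule.orthogonalProjectionOnto (Submodule.span ℝ (S : Set E))).le_opNorm u
  have h2 := Submodule.orthogonalProjectionOnto_norm_le (Submodule.span ℝ (S : Set E))
  have h3 : ‖Submodule.orthogonalProjectionOnto (Submodule.span ℝ (S : Set E)) u‖ = ‖pr S u‖ := rfl
  rw [h3] at h1
  nlinarith [norm_nonneg u]

lemma fVec_mono (u : E) {S S' : Finset E} (h : S ⊆ S') : fVec u S ≤ fVec u S' := by
  have hle : Submodule.span ℝ (S : Set E) ≤ Submodule.span ℝ (S' : Set E) :=
    Submodule.span_mono (by exact_mod_cast h)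
  have key : pr S u = pr S (pr S' u) := by
    unfold pr
    exact congrArg Subtype.val (Submodule.orthogonalProjectionOnto_starProjection_of_le hle u).symm
  rw [fVec_eq, fVec_eq]
  have h2 : ‖pr S u‖ ≤ ‖pr S' u‖ := by
    rw [show pr S u = pr S (pr S' u) from key]
    exact norm_pr_le _ _
  exact pow_le_pow_left₀ (norm_nonneg _) h2 2
lemma pr_congr {K K' : Submodule ℝ (EuclideanSpace ℝ (Fin m))} (h : K = K') (u : E) :
    (Submodule.orthogonalProjectionOnto K u : E) = Submodule.orthogonalProjectionOnto K' u := by subst h; rfl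

lemma norm_residual_sq (S : Finset E) (v : E) :
    ‖v - pr S v‖ ^ 2 = ‖v‖ ^ 2 - ‖pr S v‖ ^ 2 := by
  have h : ⟪pr S v, v - pr S v⟫ = 0 := by
    rw [real_inner_comm]
    exact inner_pr_orthogonal S v _ (pr_mem S v)
  have hv : pr S v + (v - pr S v) = v := by abel
  have hns := norm_add_sq_real (pr S v) (v - pr S v)
  rw [hv, h] at hns
  linarith

lemma fVec_insert_ge (S : Finset E) (v u : E) (hv : ‖v‖ ≤ 1) :
    fVec u S + ⟪v - pr S v, u⟫ ^ 2 ≤ fVec u (insert v S) := by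
  classical
  set w := v - pr S v with hw
  by_cases hw0 : w = 0
  · have hvmem : v ∈ Submodule.span ℝ (S : Set E) := by
      have hveq : v = pr S v := by
        have := sub_eq_zero.mp hw0
        exact this
      rw [hveq]; exact pr_mem S v
    have hspan : Submodule.span ℝ ((insert v S : Finset E) : Set E)
        = Submodule.span ℝ (S : Set E) := by
      rw [Finset.coe_insert]
      exact Submodule.span_insert_eq_span hvmem
    have : fVec u (insert v S) = fVec u S := by
      unfold fVec; rw [pr_congr hspan]
    rw [this, hw0]
    simp
  · have hwK : ∀ z ∈ Submodule.span ℝ (S : Set E), ⟪w, z⟫ = 0 := fun z hz =>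
      inner_pr_orthogonal S v z hz
    have hKw : ⟪pr S u, w⟫ = 0 := by
      rw [real_inner_comm]; exact hwK _ (pr_mem S u)
    have hwn : (0:ℝ) < ‖w‖ ^ 2 := by
      have : 0 < ‖w‖ := norm_pos_iff.mpr hw0
      positivity
    set c := ⟪w, u⟫ / ‖w‖ ^ 2 with hc
    set L := Submodule.span ℝ ((insert v S : Finset E) : Set E) with hL
    have hLset : ((insert v S : Finset E) : Set E) = insert v (S : Set E) :=
      Finset.coe_insert v S
    have hKL : Submodule.span ℝ (S : Set E) ≤ L := by
      rw [hL, hLset]; exact Submodule.span_mono (Set.subset_insert v _)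
    have hvL : v ∈ L := by
      rw [hL, hLset]; exact Submodule.subset_span (Set.mem_insert v _)
    have hwL : w ∈ L := Submodule.sub_mem L hvL (hKL (pr_mem S v))
    have hpL : pr S u + c • w ∈ L :=
      Submodule.add_mem L (hKL (pr_mem S u)) (Submodule.smul_mem L c hwL)
    have hy_K : ∀ z ∈ Submodule.span ℝ (S : Set E), ⟪u - (pr S u + c • w), z⟫ = 0 := by
      intro z hz
      have h1 : ⟪u - pr S u, z⟫ = 0 := inner_pr_orthogonal S u z hz
      have h2 : ⟪w, z⟫ = 0 := hwK z hz
      have : u - (pr S u + c • w) = (u - pr S u) - c • w := by abel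
      rw [this, inner_sub_left, h1, real_inner_smul_left, h2]
      ring
    have hy_w : ⟪u - (pr S u + c • w), w⟫ = 0 := by
      rw [inner_sub_left, inner_add_left, hKw, real_inner_smul_left,
        real_inner_self_eq_norm_sq, hc, div_mul_cancel₀ _ (ne_of_gt hwn),
        real_inner_comm]
      ring
    have horth : ∀ z ∈ L, ⟪u - (pr S u + c • w), z⟫ = 0 := by
      intro z hz
      rw [hL, hLset] at hz
      induction hz using Submodule.span_induction with
      | mem x hx =>
        rcases Set.mem_insert_iff.mp hx with hx | hx
        · subst hx
          have hsplit : x = pr S x + w := by rw [hw]; abel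
          rw [hsplit, inner_add_right, hy_w, hy_K _ (pr_mem S x)]
          ring
        · exact hy_K x (Submodule.subset_span hx)
      | zero => simp
      | add x y hx hy ihx ihy => rw [inner_add_right, ihx, ihy]; ring
      | smul a x hx ih => rw [real_inner_smul_right, ih]; ring
    have hproj : (Submodule.orthogonalProjectionOnto L u : E) = pr S u + c • w :=
      Submodule.eq_starProjection_of_mem_of_inner_eq_zero hpL horth
    have hfv : fVec u (insert v S) = ‖pr S u + c • w‖ ^ 2 := by
      have : fVec u (insert v S) = ‖(Submodule.orthogonalProjectionOnto L u : E)‖ ^ 2 := rfl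
      rw [this, hproj]
    rw [hfv, norm_add_sq_real]
    have h1 : ⟪pr S u, c • w⟫ = 0 := by rw [real_inner_smul_right, hKw]; ring
    have h2 : ‖c • w‖ ^ 2 = c ^ 2 * ‖w‖ ^ 2 := by
      rw [norm_smul, mul_pow, Real.norm_eq_abs, sq_abs]
    have hwle : ‖w‖ ^ 2 ≤ 1 := by
      have hres := norm_residual_sq S v
      rw [← hw] at hres
      nlinarith [sq_nonneg ‖pr S v‖, norm_nonneg v]
    have hfin : ⟪w, u⟫ ^ 2 ≤ c ^ 2 * ‖w‖ ^ 2 := by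
      have hceq : c ^ 2 * ‖w‖ ^ 2 = ⟪w, u⟫ ^ 2 / ‖w‖ ^ 2 := by
        rw [hc]; field_simp
      rw [hceq, le_div_iff₀ hwn]
      nlinarith [sq_nonneg ⟪w, u⟫]
    rw [fVec_eq u S]
    have : ⟪v - pr S v, u⟫ = ⟪w, u⟫ := by rw [hw]
    rw [this]
    linarith
lemma sigmaSet_bddBelow (S : Finset E) :
    BddBelow {r : ℝ | ∃ α : S → ℝ, ∑ v, (α v) ^ 2 = 1 ∧
      r = ‖∑ v, α v • (v : E)‖ ^ 2} := by
  refine ⟨0, fun r hr => ?_⟩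
  obtain ⟨α, -, hr⟩ := hr
  rw [hr]; positivity

lemma sigmaMin_le_of_mem (S : Finset E) (α : S → ℝ) (hα : ∑ v, (α v) ^ 2 = 1) :
    sigmaMin S ≤ ‖∑ v, α v • (v : E)‖ ^ 2 := by
  exact csInf_le (sigmaSet_bddBelow S) ⟨α, hα, rfl⟩

lemma sigmaMin_mul_le (S : Finset E) (β : S → ℝ) :
    sigmaMin S * ∑ v, β v ^ 2 ≤ ‖∑ v, β v • (v : E)‖ ^ 2 := by
  by_cases h : ∑ v, β v ^ 2 = 0
  · have hz : ∀ v : S, β v = 0 := by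
      intro v
      have h0 := (Finset.sum_eq_zero_iff_of_nonneg
        (fun i _ => sq_nonneg (β i))).mp h v (Finset.mem_univ v)
      exact pow_eq_zero_iff two_ne_zero |>.mp h0
    have : ∀ v : S, β v • (v : E) = 0 := fun v => by rw [hz v, zero_smul]
    rw [h, Finset.sum_congr rfl (fun v _ => this v)]
    simp
  · have hnn : (0:ℝ) ≤ ∑ v, β v ^ 2 :=
      Finset.sum_nonneg fun i _ => sq_nonneg (β i)
    have hpos : 0 < ∑ v, β v ^ 2 := hnn.lt_of_ne (Ne.symm h)
    set s := Real.sqrt (∑ v, β v ^ 2) with hs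
    have hspos : 0 < s := Real.sqrt_pos.mpr hpos
    have hs2 : s ^ 2 = ∑ v, β v ^ 2 := Real.sq_sqrt hnn
    have hα : ∑ v : S, (β v / s) ^ 2 = 1 := by
      simp only [div_pow, ← Finset.sum_div, hs2]
      exact div_self h
    have hle := sigmaMin_le_of_mem S (fun v => β v / s) hα
    have hsum : ∑ v : S, (β v / s) • (v : E) = s⁻¹ • ∑ v : S, β v • (v : E) := by
      rw [Finset.smul_sum]
      refine Finset.sum_congr rfl fun v _ => ?_
      rw [smul_smul, div_eq_inv_mul]
    have heq : ‖∑ v : S, (β v / s) • (v : E)‖ ^ 2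
        = ‖∑ v : S, β v • (v : E)‖ ^ 2 / s ^ 2 := by
      rw [hsum, norm_smul, mul_pow, norm_inv, Real.norm_eq_abs,
        abs_of_pos hspos]
      field_simp
    rw [heq, le_div_iff₀ (by positivity)] at hle
    calc sigmaMin S * ∑ v, β v ^ 2 = sigmaMin S * s ^ 2 := by rw [hs2]
      _ ≤ _ := hle

lemma nonempty_of_sigmaMin_pos {S : Finset E} (hσ : 0 < sigmaMin S) : S.Nonempty := by
  by_contra h
  rw [Finset.not_nonempty_iff_eq_empty] at h
  subst h
  have : sigmaMin (∅ : Finset E) = 0 := by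
    have hset : {r : ℝ | ∃ α : (∅ : Finset E) → ℝ, ∑ v, (α v) ^ 2 = 1 ∧
        r = ‖∑ v, α v • (v : E)‖ ^ 2} = ∅ := by
      ext r
      simp only [Set.mem_setOf_eq, Set.mem_empty_iff_false, iff_false]
      rintro ⟨α, hα, -⟩
      have : ∑ v : ({} : Finset E), (α v) ^ 2 = 0 := by
        apply Finset.sum_eq_zero
        rintro ⟨v, hv⟩
        exact absurd hv (Finset.notMem_empty v)
      rw [this] at hα
      exact one_ne_zero hα.symm
    rw [sigmaMin, hset, Real.sInf_empty]
  rw [this] at hσ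
  exact lt_irrefl 0 hσ

lemma sigmaMin_le_one {S : Finset E} (hne : S.Nonempty) (hunit : ∀ v ∈ S, ‖v‖ = 1) :
    sigmaMin S ≤ 1 := by
  obtain ⟨v₀, hv₀⟩ := hne
  classical
  have hle := sigmaMin_le_of_mem S (fun v => if v = (⟨v₀, hv₀⟩ : S) then 1 else 0) ?_
  · calc sigmaMin S ≤ _ := hle
      _ = 1 := by
        rw [show (∑ v : S, (if v = (⟨v₀, hv₀⟩ : S) then (1:ℝ) else 0) • (v : E)) = v₀ by
          simp [ite_smul]]
        rw [hunit v₀ hv₀]; norm_num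
  · simp [ite_pow]
lemma sigmaMin_fVec_le (S : Finset E) (u : E) :
    sigmaMin S * fVec u S ≤ ∑ v ∈ S, ⟪v, u⟫ ^ 2 := by
  classical
  set p := pr S u with hp
  have hpmem : p ∈ Submodule.span ℝ (S : Set E) := pr_mem S u
  obtain ⟨f, -, hf⟩ := Submodule.mem_span_finset.mp hpmem
  have hinner : ∀ v ∈ S, ⟪v, u⟫ = ⟪v, p⟫ := by
    intro v hv
    have h0 := inner_pr_orthogonal S u v (Submodule.subset_span hv)
    have : ⟪u - p, v⟫ = 0 := h0
    rw [inner_sub_left] at this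
    linarith [real_inner_comm v u, real_inner_comm v p,
      real_inner_comm u v, real_inner_comm p v]
  have hnormp : ‖p‖ ^ 2 = ∑ v ∈ S, f v * ⟪v, p⟫ := by
    rw [← real_inner_self_eq_norm_sq]
    calc ⟪p, p⟫ = ⟪∑ v ∈ S, f v • v, p⟫ := by rw [hf]
      _ = ∑ v ∈ S, ⟪f v • v, p⟫ := sum_inner S _ p
      _ = ∑ v ∈ S, f v * ⟪v, p⟫ :=
        Finset.sum_congr rfl fun v _ => by rw [real_inner_smul_left]
  have hCS := Finset.sum_mul_sq_le_sq_mul_sq S f (fun v => ⟪v, p⟫)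
  have hβ : sigmaMin S * ∑ v ∈ S, f v ^ 2 ≤ ‖p‖ ^ 2 := by
    have h1 := sigmaMin_mul_le S (fun v : S => f v)
    have h2 : ∑ v : S, f (v : E) ^ 2 = ∑ v ∈ S, f v ^ 2 :=
      Finset.sum_coe_sort S (fun v => f v ^ 2)
    have h3 : ∑ v : S, f (v : E) • (v : E) = ∑ v ∈ S, f v • v :=
      Finset.sum_coe_sort S (fun v => f v • v)
    rw [h2, h3, hf] at h1
    exact h1
  have hqnn : (0:ℝ) ≤ ∑ v ∈ S, ⟪v, p⟫ ^ 2 :=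
    Finset.sum_nonneg fun i _ => sq_nonneg _
  have hgoal : sigmaMin S * ‖p‖ ^ 2 ≤ ∑ v ∈ S, ⟪v, p⟫ ^ 2 := by
    by_cases hp0 : ‖p‖ ^ 2 = 0
    · rw [hp0, mul_zero]; exact hqnn
    · have hppos : 0 < ‖p‖ ^ 2 :=
        (sq_nonneg ‖p‖).lt_of_ne (Ne.symm hp0)
      -- σ * ‖p‖^4 ≤ σ * (Σf²)(Σ⟪⟫²) ≤ ‖p‖² Σ⟪⟫²
      have hσnn : 0 ≤ sigmaMin S := by
        apply Real.sInf_nonneg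
        rintro r ⟨α, -, hr⟩
        rw [hr]; positivity
      have key : sigmaMin S * (‖p‖ ^ 2) ^ 2 ≤ ‖p‖ ^ 2 * ∑ v ∈ S, ⟪v, p⟫ ^ 2 := by
        calc sigmaMin S * (‖p‖ ^ 2) ^ 2
            = sigmaMin S * (∑ v ∈ S, f v * ⟪v, p⟫) ^ 2 := by rw [hnormp]
          _ ≤ sigmaMin S * ((∑ v ∈ S, f v ^ 2) * ∑ v ∈ S, ⟪v, p⟫ ^ 2) := by
              apply mul_le_mul_of_nonneg_left hCS hσnn
          _ = (sigmaMin S * ∑ v ∈ S, f v ^ 2) * ∑ v ∈ S, ⟪v, p⟫ ^ 2 := by ring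
          _ ≤ ‖p‖ ^ 2 * ∑ v ∈ S, ⟪v, p⟫ ^ 2 :=
              mul_le_mul_of_nonneg_right hβ hqnn
      nlinarith
  calc sigmaMin S * fVec u S = sigmaMin S * ‖p‖ ^ 2 := by rw [fVec_eq]
    _ ≤ ∑ v ∈ S, ⟪v, p⟫ ^ 2 := hgoal
    _ = ∑ v ∈ S, ⟪v, u⟫ ^ 2 :=
      Finset.sum_congr rfl fun v hv => by rw [hinner v hv]
lemma pr_sub (O : Finset E) (u q : E) : pr O (u - q) = pr O u - pr O q := by
  unfold pr
  rw [map_sub]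
  rfl

lemma residual_fVec_ge (O T : Finset E) (u : E) (h : fVec u T < fVec u O) :
    (fVec u O - fVec u T) ^ 2 / (4 * fVec u O) ≤ fVec (u - pr T u) O := by
  have h1 : pr O (u - pr T u) = pr O u - pr O (pr T u) := pr_sub O u (pr T u)
  have h2 : ‖pr O (pr T u)‖ ≤ ‖pr T u‖ := norm_pr_le O (pr T u)
  have h3 : ‖pr O u‖ - ‖pr O (pr T u)‖ ≤ ‖pr O u - pr O (pr T u)‖ :=
    norm_sub_norm_le _ _
  rw [fVec_eq u O, fVec_eq u T] at h ⊢
  rw [fVec_eq, h1]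
  set a := ‖pr O u‖
  set b := ‖pr T u‖
  set b' := ‖pr O (pr T u)‖
  set c := ‖pr O u - pr O (pr T u)‖
  have ha : 0 ≤ a := norm_nonneg _
  have hb : 0 ≤ b := norm_nonneg _
  have hb' : 0 ≤ b' := norm_nonneg _
  have hc : 0 ≤ c := norm_nonneg _
  have hab : b < a := by nlinarith
  have hapos : 0 < a := lt_of_le_of_lt hb hab
  rw [div_le_iff₀ (by positivity)]
  have hcab : a - b ≤ c := by linarith
  nlinarith [sq_nonneg (a - b), sq_nonneg (a + b), mul_le_mul hcab hcab (by linarith) hc]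

lemma sum_ratio_ge {ι : Type*} [DecidableEq ι] (s : Finset ι) (P Q : ι → ℝ)
    (hP : ∀ j ∈ s, 0 ≤ P j) (hQ : ∀ j ∈ s, 0 ≤ Q j)
    (hΔ : 0 < ∑ j ∈ s, (P j - Q j)) :
    (∑ j ∈ s, (P j - Q j)) ^ 2 / (4 * ∑ j ∈ s, P j) ≤
      ∑ j ∈ s, (if Q j < P j then (P j - Q j) ^ 2 / (4 * P j) else 0) := by
  classical
  set J := s.filter (fun j => Q j < P j) with hJ
  have hJs : J ⊆ s := Finset.filter_subset _ _
  have hPJpos : ∀ j ∈ J, 0 < P j := by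
    intro j hj
    have := Finset.mem_filter.mp hj
    exact lt_of_le_of_lt (hQ j this.1) this.2
  have hFpos : 0 < ∑ j ∈ s, P j := by
    have hsumQ : 0 ≤ ∑ j ∈ s, Q j := Finset.sum_nonneg hQ
    rw [Finset.sum_sub_distrib] at hΔ
    linarith
  have hJd : ∑ j ∈ s, (P j - Q j) ≤ ∑ j ∈ J, (P j - Q j) := by
    rw [← Finset.sum_filter_add_sum_filter_not s (fun j => Q j < P j)]
    have : ∑ j ∈ s.filter (fun j => ¬ Q j < P j), (P j - Q j) ≤ 0 := by
      apply Finset.sum_nonpos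
      intro j hj
      have := Finset.mem_filter.mp hj
      linarith [this.2, not_lt.mp this.2]
    rw [← hJ]
    linarith
  have hCS := Finset.sum_mul_sq_le_sq_mul_sq J
    (fun j => (P j - Q j) / Real.sqrt (P j)) (fun j => Real.sqrt (P j))
  have hfg : ∀ j ∈ J, (P j - Q j) / Real.sqrt (P j) * Real.sqrt (P j) = P j - Q j := by
    intro j hj
    have hs := Real.sqrt_pos.mpr (hPJpos j hj)
    field_simp
  have hg2 : ∀ j ∈ J, (Real.sqrt (P j)) ^ 2 = P j := fun j hj =>
    Real.sq_sqrt (hPJpos j hj).le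
  have hf2 : ∀ j ∈ J, ((P j - Q j) / Real.sqrt (P j)) ^ 2 = (P j - Q j) ^ 2 / P j := by
    intro j hj
    rw [div_pow, hg2 j hj]
  rw [Finset.sum_congr rfl hfg] at hCS
  rw [Finset.sum_congr rfl hf2, Finset.sum_congr rfl hg2] at hCS
  have hsumP : ∑ j ∈ J, P j ≤ ∑ j ∈ s, P j :=
    Finset.sum_le_sum_of_subset_of_nonneg hJs (fun j hj _ => hP j hj)
  have hR : ∑ j ∈ s, (if Q j < P j then (P j - Q j) ^ 2 / (4 * P j) else 0)
      = ∑ j ∈ J, (P j - Q j) ^ 2 / (4 * P j) := by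
    rw [hJ, Finset.sum_filter]
  rw [hR]
  rw [div_le_iff₀ (by positivity)]
  have hquarter : ∑ j ∈ J, (P j - Q j) ^ 2 / (4 * P j)
      = (∑ j ∈ J, (P j - Q j) ^ 2 / P j) / 4 := by
    rw [Finset.sum_div]
    refine Finset.sum_congr rfl fun j hj => ?_
    rw [div_div]
    ring_nf
  rw [hquarter]
  have hsq : (∑ j ∈ s, (P j - Q j)) ^ 2 ≤ (∑ j ∈ J, (P j - Q j)) ^ 2 := by
    have h0 : 0 < ∑ j ∈ J, (P j - Q j) := lt_of_lt_of_le hΔ hJd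
    nlinarith
  have hf2nn : 0 ≤ ∑ j ∈ J, (P j - Q j) ^ 2 / P j :=
    Finset.sum_nonneg fun j hj => div_nonneg (sq_nonneg _) (hPJpos j hj).le
  calc (∑ j ∈ s, (P j - Q j)) ^ 2 ≤ (∑ j ∈ J, (P j - Q j)) ^ 2 := hsq
    _ ≤ (∑ j ∈ J, (P j - Q j) ^ 2 / P j) * ∑ j ∈ J, P j := hCS
    _ ≤ (∑ j ∈ J, (P j - Q j) ^ 2 / P j) * ∑ j ∈ s, P j :=
        mul_le_mul_of_nonneg_left hsumP hf2nn
    _ = (∑ j ∈ J, (P j - Q j) ^ 2 / P j) / 4 * (4 * ∑ j ∈ s, P j) := by ring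

lemma key_arith (a F x t : ℝ) (ha : 2 ≤ a) (hF : 0 < F) (hx : 0 < x) (hxF : x ≤ F)
    (hxt : x * t ≤ a * F) (ht : 1 ≤ t) : x - x ^ 2 / (a * F) ≤ a * F / (t + 1) := by
  have hs : 0 < a * F := by nlinarith
  have hax : a * x ≤ a * F := by nlinarith
  have hq : 0 ≤ (a*F) ^ 2 - (t+1) * x * (a*F) + (t+1) * x ^ 2 := by
    rcases le_total t a with h | h
    · nlinarith [mul_nonneg (sub_nonneg.mpr hax)
        (show (0:ℝ) ≤ a*F + a*x - (t+1)*x by nlinarith),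
        mul_nonneg (mul_pos hx hx).le (sub_nonneg.mpr h)]
    · nlinarith [mul_nonneg (sub_nonneg.mpr hxt)
        (show (0:ℝ) ≤ a*F + x*t - (t+1)*x by nlinarith),
        mul_pos hx hx]
  have heq : x - x ^ 2 / (a * F) = (x * (a * F) - x ^ 2) / (a * F) := by
    field_simp
  rw [heq, div_le_div_iff₀ hs (by linarith : (0:ℝ) < t + 1)]
  nlinarith
lemma fMat_nonneg {nA : ℕ} (A : Fin nA → E) (S : Finset E) : 0 ≤ fMat A S :=
  Finset.sum_nonneg fun j _ => fVec_nonneg (A j) S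

lemma fMat_mono {nA : ℕ} (A : Fin nA → E) {S S' : Finset E} (h : S ⊆ S') :
    fMat A S ≤ fMat A S' :=
  Finset.sum_le_sum fun j _ => fVec_mono (A j) h

lemma exists_gain {nA : ℕ} (A : Fin nA → E) (OPT Tset : Finset E)
    (hσ : 0 < sigmaMin OPT) (hunit : ∀ v ∈ OPT, ‖v‖ = 1)
    (hlt : fMat A Tset < fMat A OPT) :
    ∃ v ∈ OPT, fMat A Tset + sigmaMin OPT * (fMat A OPT - fMat A Tset) ^ 2 /
      (4 * OPT.card * fMat A OPT) ≤ fMat A (insert v Tset) := by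
  classical
  set σ := sigmaMin OPT with hσdef
  have hne : OPT.Nonempty := nonempty_of_sigmaMin_pos hσ
  have hk : 0 < (OPT.card : ℝ) := by
    exact_mod_cast Finset.card_pos.mpr hne
  set F := fMat A OPT with hFdef
  set fT := fMat A Tset with hfTdef
  have hfTnn : 0 ≤ fT := fMat_nonneg A Tset
  have hFpos : 0 < F := lt_of_le_of_lt hfTnn hlt
  set Δ := F - fT with hΔdef
  have hΔpos : 0 < Δ := by rw [hΔdef]; linarith
  have hFsum : F = ∑ j, fVec (A j) OPT := rfl
  have hfTsum : fT = ∑ j, fVec (A j) Tset := rfl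
  have chain : σ * Δ ^ 2 / (4 * F) ≤ ∑ v ∈ OPT, (fMat A (insert v Tset) - fT) := by
    have hE := sum_ratio_ge (Finset.univ : Finset (Fin nA))
      (fun j => fVec (A j) OPT) (fun j => fVec (A j) Tset)
      (fun j _ => fVec_nonneg _ _) (fun j _ => fVec_nonneg _ _)
      (by
        rw [Finset.sum_sub_distrib, ← hFsum, ← hfTsum]
        exact hΔpos)
    rw [Finset.sum_sub_distrib, ← hFsum, ← hfTsum, ← hΔdef] at hE
    have hD : ∀ j : Fin nA, (if fVec (A j) Tset < fVec (A j) OPT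
          then (fVec (A j) OPT - fVec (A j) Tset) ^ 2 / (4 * fVec (A j) OPT) else 0)
        ≤ fVec (A j - pr Tset (A j)) OPT := by
      intro j
      split
      · exact residual_fVec_ge OPT Tset (A j) (by assumption)
      · exact fVec_nonneg _ _
    have hC : ∀ j : Fin nA, σ * fVec (A j - pr Tset (A j)) OPT
        ≤ ∑ v ∈ OPT, ⟪v, A j - pr Tset (A j)⟫ ^ 2 := fun j =>
      sigmaMin_fVec_le OPT _
    have hBeq : ∀ (v : E) (j : Fin nA),
        ⟪v, A j - pr Tset (A j)⟫ = ⟪v - pr Tset v, A j⟫ := by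
      intro v j
      rw [inner_sub_right, inner_sub_left]
      have h2 : ⟪pr Tset v, A j⟫ = ⟪v, pr Tset (A j)⟫ :=
        Submodule.inner_starProjection_left_eq_right
          (Submodule.span ℝ (Tset : Set E)) v (A j)
      linarith
    have hA : ∀ v ∈ OPT,
        ∑ j, ⟪v - pr Tset v, A j⟫ ^ 2 ≤ fMat A (insert v Tset) - fT := by
      intro v hv
      have h1 : ∀ j : Fin nA, fVec (A j) Tset + ⟪v - pr Tset v, A j⟫ ^ 2
          ≤ fVec (A j) (insert v Tset) :=
        fun j => fVec_insert_ge Tset v (A j) (le_of_eq (hunit v hv))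
      have h2 := Finset.sum_le_sum (fun j (_ : j ∈ Finset.univ) => h1 j)
      rw [Finset.sum_add_distrib] at h2
      have h3 : fMat A (insert v Tset) = ∑ j, fVec (A j) (insert v Tset) := rfl
      rw [hfTsum, h3]
      linarith
    have hσnn : 0 ≤ σ := hσ.le
    calc σ * Δ ^ 2 / (4 * F)
        = σ * (Δ ^ 2 / (4 * F)) := by ring
      _ ≤ σ * ∑ j, (if fVec (A j) Tset < fVec (A j) OPT
            then (fVec (A j) OPT - fVec (A j) Tset) ^ 2 / (4 * fVec (A j) OPT)
            else 0) := mul_le_mul_of_nonneg_left hE hσnn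
      _ = ∑ j, σ * (if fVec (A j) Tset < fVec (A j) OPT
            then (fVec (A j) OPT - fVec (A j) Tset) ^ 2 / (4 * fVec (A j) OPT)
            else 0) := Finset.mul_sum _ _ _
      _ ≤ ∑ j, σ * fVec (A j - pr Tset (A j)) OPT :=
          Finset.sum_le_sum fun j _ => mul_le_mul_of_nonneg_left (hD j) hσnn
      _ ≤ ∑ j, ∑ v ∈ OPT, ⟪v, A j - pr Tset (A j)⟫ ^ 2 :=
          Finset.sum_le_sum fun j _ => hC j
      _ = ∑ j, ∑ v ∈ OPT, ⟪v - pr Tset v, A j⟫ ^ 2 := by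
          refine Finset.sum_congr rfl fun j _ => Finset.sum_congr rfl fun v _ => ?_
          rw [hBeq v j]
      _ = ∑ v ∈ OPT, ∑ j, ⟪v - pr Tset v, A j⟫ ^ 2 := Finset.sum_comm
      _ ≤ ∑ v ∈ OPT, (fMat A (insert v Tset) - fT) :=
          Finset.sum_le_sum hA
  by_contra hcon
  push_neg at hcon
  have hsum := Finset.sum_lt_sum_of_nonempty hne hcon
  have h1 : ∑ v ∈ OPT, (fMat A (insert v Tset) - fT)
      = ∑ v ∈ OPT, fMat A (insert v Tset) - OPT.card * fT := by
    rw [Finset.sum_sub_distrib, Finset.sum_const, nsmul_eq_mul]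
  have h2 : ∑ v ∈ OPT, (fT + σ * Δ ^ 2 / (4 * OPT.card * F))
      = OPT.card * fT + σ * Δ ^ 2 / (4 * F) := by
    rw [Finset.sum_const, nsmul_eq_mul]
    have : (OPT.card : ℝ) * (σ * Δ ^ 2 / (4 * OPT.card * F)) = σ * Δ ^ 2 / (4 * F) := by
      field_simp
    nlinarith [this]
  rw [h2] at hsum
  linarith
end GreedyAux

def IsGreedySeq {m nA nB : ℕ} (A : Fin nA → EuclideanSpace ℝ (Fin m))
    (B : Fin nB → EuclideanSpace ℝ (Fin m))
    (T : ℕ → Finset (EuclideanSpace ℝ (Fin m))) (b : ℕ → Fin nB) : Prop :=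
  T 0 = ∅ ∧ ∀ i, T (i + 1) = insert (B (b i)) (T i) ∧
    ∀ j, fMat A (insert (B j) (T i)) ≤ fMat A (insert (B (b i)) (T i))

/-- Greedy column subset selection guarantee against the optimal k-subset of columns. -/
theorem greedy_css_optimal {m nA nB : ℕ}
    (A : Fin nA → EuclideanSpace ℝ (Fin m)) (B : Fin nB → EuclideanSpace ℝ (Fin m))
    (hB : ∀ j, ‖B j‖ = 1) (k : ℕ) (hk : k ≤ nB)
    (OPT : Finset (EuclideanSpace ℝ (Fin m)))
    (hOPTsub : OPT ⊆ Finset.image B Finset.univ) (hOPTcard : OPT.card = k)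
    (hOPTopt : ∀ C : Finset (EuclideanSpace ℝ (Fin m)),
      C ⊆ Finset.image B Finset.univ → C.card = k → fMat A C ≤ fMat A OPT)
    (hσ : 0 < sigmaMin OPT) :
    ∀ ε : ℝ, 0 < ε →
    ∀ (T : ℕ → Finset (EuclideanSpace ℝ (Fin m))) (b : ℕ → Fin nB),
      IsGreedySeq A B T b →
    ∀ r : ℕ, (16 * k : ℝ) / (ε * sigmaMin OPT) ≤ r →
      (1 - ε) * fMat A OPT ≤ fMat A (T r) := by
  intro ε hε T b hgreedy r hr
  obtain ⟨hT0, hstep⟩ := hgreedy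
  classical
  set σ := sigmaMin OPT with hσdef
  set F := fMat A OPT with hFdef
  have hF0 : 0 ≤ F := GreedyAux.fMat_nonneg A OPT
  have hfnn : ∀ i, 0 ≤ fMat A (T i) := fun i => GreedyAux.fMat_nonneg A (T i)
  have hmono : ∀ i, fMat A (T i) ≤ fMat A (T (i + 1)) := by
    intro i
    rw [(hstep i).1]
    exact GreedyAux.fMat_mono A (Finset.subset_insert _ _)
  have hne : OPT.Nonempty := GreedyAux.nonempty_of_sigmaMin_pos hσ
  have hunit : ∀ v ∈ OPT, ‖v‖ = 1 := by
    intro v hv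
    obtain ⟨j, -, hj⟩ := Finset.mem_image.mp (hOPTsub hv)
    rw [← hj]; exact hB j
  have hk1 : 1 ≤ (k : ℝ) := by
    have hcp := Finset.card_pos.mpr hne
    rw [hOPTcard] at hcp
    exact_mod_cast hcp
  have hσ1 : σ ≤ 1 := GreedyAux.sigmaMin_le_one hne hunit
  set a := 4 * (k : ℝ) / σ with hadef
  have ha2 : 2 ≤ a := by
    rw [hadef, le_div_iff₀ hσ]
    nlinarith
  have hapos : 0 < a := lt_of_lt_of_le two_pos ha2
  have hstepΔ : ∀ i, fMat A (T i) < F →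
      F - fMat A (T (i + 1)) ≤
        (F - fMat A (T i)) - (F - fMat A (T i)) ^ 2 / (a * F) := by
    intro i hi
    obtain ⟨v, hvO, hv⟩ := GreedyAux.exists_gain A OPT (T i) hσ hunit hi
    obtain ⟨j, -, hj⟩ := Finset.mem_image.mp (hOPTsub hvO)
    have h2 := (hstep i).2 j
    rw [hj] at h2
    have h3 : fMat A (T i) + σ * (F - fMat A (T i)) ^ 2 / (4 * OPT.card * F)
        ≤ fMat A (T (i + 1)) := by
      rw [(hstep i).1]
      exact le_trans hv h2
    have hFpos : 0 < F := lt_of_le_of_lt (hfnn i) hi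
    have hid : σ * (F - fMat A (T i)) ^ 2 / (4 * OPT.card * F)
        = (F - fMat A (T i)) ^ 2 / (a * F) := by
      rw [hOPTcard, hadef]
      rw [div_eq_div_iff (by positivity) (by positivity)]
      field_simp
    linarith [hid ▸ h3]
  have main : ∀ i : ℕ, F - fMat A (T i) ≤ a * F / (i + 1) := by
    intro i
    induction i with
    | zero =>
      simp only [Nat.cast_zero, zero_add, div_one]
      nlinarith [hfnn 0]
    | succ i ih =>
      by_cases hi : fMat A (T i) < F
      · have hFpos : 0 < F := lt_of_le_of_lt (hfnn i) hi
        have hx : 0 < F - fMat A (T i) := by linarith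
        have hxF : F - fMat A (T i) ≤ F := by linarith [hfnn i]
        have hxt : (F - fMat A (T i)) * ((i : ℝ) + 1) ≤ a * F := by
          have h6 : (F - fMat A (T i)) * ((i : ℝ) + 1) ≤ a * F / ((i:ℝ)+1) * ((i:ℝ)+1) := by
            apply mul_le_mul_of_nonneg_right ih (by positivity)
          have h7 : a * F / ((i:ℝ)+1) * ((i:ℝ)+1) = a * F := by
            field_simp
          linarith
        have hkey := GreedyAux.key_arith a F (F - fMat A (T i)) ((i : ℝ) + 1)
          ha2 hFpos hx hxF hxt (by linarith [Nat.cast_nonneg (α := ℝ) i])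
        have hs := hstepΔ i hi
        push_cast
        linarith
      · push_neg at hi
        have hle : F - fMat A (T (i + 1)) ≤ 0 := by linarith [hmono i]
        have hpos : 0 ≤ a * F / ((i : ℝ) + 1 + 1) := by positivity
        push_cast
        linarith
  by_cases hε1 : 1 ≤ ε
  · have hle : (1 - ε) * F ≤ 0 := mul_nonpos_of_nonpos_of_nonneg (by linarith) hF0
    linarith [hfnn r]
  · push_neg at hε1
    by_cases hFc : F ≤ 0
    · have hle : (1 - ε) * F ≤ 0 := mul_nonpos_of_nonneg_of_nonpos (by linarith) hFc
      linarith [hfnn r]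
    · push_neg at hFc
      have hq : 0 < 16 * (k : ℝ) / (ε * σ) := by positivity
      have hrpos : 0 < (r : ℝ) := lt_of_lt_of_le hq hr
      have h1 : F - fMat A (T r) ≤ a * F / ((r : ℝ) + 1) := main r
      have h2 : a * F / ((r : ℝ) + 1) ≤ a * F / (r : ℝ) :=
        div_le_div_of_nonneg_left (by positivity) hrpos (by linarith)
      have h4 : a * F / (r : ℝ) ≤ a * F / (16 * (k : ℝ) / (ε * σ)) :=
        div_le_div_of_nonneg_left (by positivity) hq hr
      have h5 : a * F / (16 * (k : ℝ) / (ε * σ)) = ε * F / 4 := by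
        rw [hadef]
        field_simp
        ring
      have h6 : ε * F / 4 ≤ ε * F := by nlinarith
      linarith
end

section
/- Let A ∈ ℝ^{m×n_A} and let B ∈ ℝ^{m×n_B} have unit-norm columns. Let C be any set of k columns of B with σ_min(C) > 0. Then for every ε > 0, every greedy sequence (T_i) for (A, B), and every natural number r ≥ 16k/(ε·σ_min(C)), we have f_A(T_r) ≥ (1 − ε)·f_A(C). (The greedy guarantee holds against any k-subset of columns, not only the optimal one.) -/
open scoped RealInnerProductSpace

attribute [local instance] Classical.decEq

namespace GreedyCSS

variable {m : ℕ}

local notation "E" => EuclideanSpace ℝ (Fin m)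

noncomputable def pr (S : Finset (EuclideanSpace ℝ (Fin m))) (u : EuclideanSpace ℝ (Fin m)) :
    EuclideanSpace ℝ (Fin m) :=
  (Submodule.orthogonalProjectionOnto (Submodule.span ℝ (S : Set (EuclideanSpace ℝ (Fin m)))) u :
    EuclideanSpace ℝ (Fin m))

lemma fVec_eq (u : E) (S : Finset E) : fVec u S = ‖pr S u‖ ^ 2 := rfl

lemma norm_pr_le (S : Finset E) (u : E) : ‖pr S u‖ ≤ ‖u‖ := by
  have h := (Submodule.orthogonalProjectionOnto (Submodule.span ℝ (S : Set E))).le_opNorm u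
  have h2 := Submodule.orthogonalProjectionOnto_norm_le (Submodule.span ℝ (S : Set E))
  have h3 : ‖pr S u‖ = ‖Submodule.orthogonalProjectionOnto (Submodule.span ℝ (S : Set E)) u‖ := rfl
  rw [h3]
  nlinarith [norm_nonneg u]

lemma pr_mem (S : Finset E) (u : E) : pr S u ∈ Submodule.span ℝ (S : Set E) :=
  Submodule.coe_mem _

lemma pr_add (S : Finset E) (u v : E) : pr S (u + v) = pr S u + pr S v := by
  unfold pr
  rw [map_add]
  rfl

lemma inner_sub_pr (S : Finset E) (u : E) {w : E}
    (hw : w ∈ Submodule.span ℝ (S : Set E)) : ⟪u - pr S u, w⟫ = 0 :=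
  Submodule.starProjection_inner_eq_zero u w hw

lemma inner_pr_self (S : Finset E) (u : E) : ⟪u, pr S u⟫ = ‖pr S u‖ ^ 2 := by
  have := inner_sub_pr S u (pr_mem S u)
  rw [inner_sub_left] at this
  have h2 : ⟪pr S u, pr S u⟫ = ‖pr S u‖ ^ 2 := real_inner_self_eq_norm_sq _
  linarith

lemma fVec_nonneg (u : E) (S : Finset E) : 0 ≤ fVec u S := sq_nonneg _

lemma fVec_mono (u : E) {S S' : Finset E} (h : S ⊆ S') : fVec u S ≤ fVec u S' := by
  have hle : Submodule.span ℝ (S : Set E) ≤ Submodule.span ℝ (S' : Set E) :=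
    Submodule.span_mono (Finset.coe_subset.2 h)
  have key : pr S u = pr S (pr S' u) := by
    unfold pr
    rw [← Submodule.starProjection_apply (Submodule.span ℝ (S' : Set E)), Submodule.orthogonalProjectionOnto_starProjection_of_le hle]
  have := norm_pr_le S (pr S' u)
  rw [← key] at this
  rw [fVec_eq, fVec_eq]
  have h0 : (0:ℝ) ≤ ‖pr S u‖ := norm_nonneg _
  nlinarith

lemma fVec_gain (u c : E) (S : Finset E) (hc : ‖c‖ ≤ 1) :
    fVec u S + ⟪u - pr S u, c⟫ ^ 2 ≤ fVec u (insert c S) := by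
  set V := Submodule.span ℝ (S : Set E) with hV
  set w : E := c - pr S c with hw
  have hSsub : S ⊆ insert c S := Finset.subset_insert _ _
  have hmono := fVec_mono u hSsub
  have hwV : ∀ v ∈ V, ⟪w, v⟫ = 0 := fun v hv => inner_sub_pr S c hv
  have hinner : ⟪u - pr S u, c⟫ = ⟪u, w⟫ := by
    have h1 : ⟪u - pr S u, pr S c⟫ = 0 := inner_sub_pr S u (pr_mem S c)
    have h2 : ⟪pr S u, w⟫ = 0 := by
      rw [real_inner_comm]; exact hwV _ (pr_mem S u)
    have : ⟪u - pr S u, c⟫ = ⟪u - pr S u, w⟫ + ⟪u - pr S u, pr S c⟫ := by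
      rw [← inner_add_right]
      congr 1
      rw [hw]; abel
    rw [this, h1, inner_sub_left, h2]
    ring
  by_cases hw0 : w = 0
  · rw [hinner, hw0, inner_zero_right]
    simpa using hmono
  · have hwn : (0:ℝ) < ‖w‖ ^ 2 := by
      have := norm_pos_iff.mpr hw0; positivity
    have hwle : ‖w‖ ^ 2 ≤ 1 := by
      have horth : ⟪w, pr S c⟫ = 0 := hwV _ (pr_mem S c)
      have hdecomp : ‖c‖ ^ 2 = ‖w‖ ^ 2 + ‖pr S c‖ ^ 2 := by
        have hceq : c = w + pr S c := by rw [hw]; abel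
        have : ‖c‖ ^ 2 = ‖w + pr S c‖ ^ 2 := by rw [← hceq]
        rw [this, norm_add_sq_real, horth]
        ring
      nlinarith [sq_nonneg ‖pr S c‖, norm_nonneg c]
    set V' := Submodule.span ℝ ((insert c S : Finset E) : Set E) with hV'
    have hVle : V ≤ V' := Submodule.span_mono (Finset.coe_subset.2 hSsub)
    have hcV' : c ∈ V' := Submodule.subset_span (by simp)
    have hwV' : w ∈ V' := Submodule.sub_mem _ hcV' (hVle (pr_mem S c))
    set z : E := pr S u + (⟪u, w⟫ / ‖w‖ ^ 2) • w with hz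
    have hzV' : z ∈ V' := Submodule.add_mem _ (hVle (pr_mem S u)) (Submodule.smul_mem _ _ hwV')
    have hpw : ⟪pr S u, w⟫ = 0 := by rw [real_inner_comm]; exact hwV _ (pr_mem S u)
    have hsm : ‖(⟪u, w⟫ / ‖w‖ ^ 2 : ℝ) • w‖ ^ 2 = ⟪u, w⟫ ^ 2 / ‖w‖ ^ 2 := by
      rw [norm_smul, mul_pow, Real.norm_eq_abs, sq_abs]
      field_simp
    have hnz : ‖z‖ ^ 2 = ‖pr S u‖ ^ 2 + ⟪u, w⟫ ^ 2 / ‖w‖ ^ 2 := by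
      rw [hz, norm_add_sq_real, real_inner_smul_right, hpw, hsm]
      ring
    have huz : ⟪u, z⟫ = ‖z‖ ^ 2 := by
      rw [hz, inner_add_right, inner_pr_self, real_inner_smul_right, hnz]
      ring
    have hprz : ⟪pr (insert c S) u, z⟫ = ‖z‖ ^ 2 := by
      have h1 : ⟪u - pr (insert c S) u, z⟫ = 0 := inner_sub_pr _ u hzV'
      rw [inner_sub_left] at h1
      linarith [huz]
    have hcs : ‖z‖ ^ 2 ≤ ‖pr (insert c S) u‖ * ‖z‖ := by
      rw [← hprz]; exact real_inner_le_norm _ _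
    have hzle : ‖z‖ ^ 2 ≤ ‖pr (insert c S) u‖ ^ 2 := by
      nlinarith [norm_nonneg z, norm_nonneg (pr (insert c S) u)]
    have hdiv : ⟪u, w⟫ ^ 2 ≤ ⟪u, w⟫ ^ 2 / ‖w‖ ^ 2 := by
      rw [le_div_iff₀ hwn]
      nlinarith [sq_nonneg ⟪u, w⟫]
    rw [fVec_eq, fVec_eq, hinner]
    linarith [hnz, hzle]

lemma sigmaMin_bddBelow (S : Finset E) :
    BddBelow {r : ℝ | ∃ α : S → ℝ, ∑ v, (α v) ^ 2 = 1 ∧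
      r = ‖∑ v, α v • (v : E)‖ ^ 2} := by
  refine ⟨0, fun r hr => ?_⟩
  obtain ⟨α, -, rfl⟩ := hr
  positivity

lemma sigmaMin_empty : sigmaMin (∅ : Finset E) = 0 := by
  unfold sigmaMin
  convert Real.sInf_empty using 2
  ext r
  simp only [Set.mem_setOf_eq, Set.mem_empty_iff_false, iff_false]
  rintro ⟨α, h1, -⟩
  haveI : IsEmpty {x // x ∈ (∅ : Finset E)} := ⟨fun v => absurd v.2 (Finset.notMem_empty _)⟩
  rw [Finset.sum_of_isEmpty] at h1
  exact one_ne_zero h1.symm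

lemma sigmaMin_smul_le (S : Finset E) (g : EuclideanSpace ℝ (Fin m) → ℝ) :
    sigmaMin S * ∑ c ∈ S, g c ^ 2 ≤ ‖∑ c ∈ S, g c • c‖ ^ 2 := by
  set t2 : ℝ := ∑ c ∈ S, g c ^ 2 with ht2
  rcases eq_or_lt_of_le (show (0:ℝ) ≤ t2 by positivity) with h0 | hpos
  · have hz : ∀ c ∈ S, g c = 0 := by
      intro c hc
      have := Finset.sum_eq_zero_iff_of_nonneg (fun i _ => sq_nonneg (g i)) |>.mp h0.symm c hc
      exact pow_eq_zero_iff (two_ne_zero) |>.mp this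
    rw [← h0]
    have : ∑ c ∈ S, g c • c = 0 := Finset.sum_eq_zero fun c hc => by rw [hz c hc, zero_smul]
    rw [this]
    simp
  · set t : ℝ := Real.sqrt t2 with ht
    have htpos : 0 < t := Real.sqrt_pos.mpr hpos
    have htsq : t ^ 2 = t2 := Real.sq_sqrt hpos.le
    set β : S → ℝ := fun v => g v / t with hβ
    have hmem : ‖∑ v, β v • (v : E)‖ ^ 2 ∈ {r : ℝ | ∃ α : S → ℝ, ∑ v, (α v) ^ 2 = 1 ∧
        r = ‖∑ v, α v • (v : E)‖ ^ 2} := by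
      refine ⟨β, ?_, rfl⟩
      have : ∑ v : S, β v ^ 2 = (∑ c ∈ S, g c ^ 2) / t ^ 2 := by
        rw [Finset.sum_div, ← Finset.sum_attach S (fun c => g c ^ 2 / t ^ 2)]
        exact Finset.sum_congr rfl fun v _ => by rw [hβ]; ring
      rw [this, htsq]
      field_simp
      exact ht2.symm
    have hle := csInf_le (sigmaMin_bddBelow S) hmem
    have hsum : ∑ v : S, β v • (v : E) = (1/t) • ∑ c ∈ S, g c • c := by
      rw [Finset.smul_sum, ← Finset.sum_attach S (fun c => (1/t) • (g c • c))]
      exact Finset.sum_congr rfl fun v _ => by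
        rw [hβ, smul_smul]; congr 1; ring
    have hns : ‖∑ v : S, β v • (v : E)‖ ^ 2 = ‖∑ c ∈ S, g c • c‖ ^ 2 / t2 := by
      rw [hsum, norm_smul, mul_pow, Real.norm_eq_abs, sq_abs, ← htsq]
      field_simp
    rw [hns] at hle
    calc sigmaMin S * t2 ≤ (‖∑ c ∈ S, g c • c‖ ^ 2 / t2) * t2 :=
          mul_le_mul_of_nonneg_right hle hpos.le
      _ = ‖∑ c ∈ S, g c • c‖ ^ 2 := by field_simp

/-- Key: sum of squared inners with members of C dominates σ times squared proj norm. -/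
lemma sigma_proj_le (C : Finset E) (u : E) :
    sigmaMin C * ‖pr C u‖ ^ 2 ≤ ∑ c ∈ C, ⟪u, c⟫ ^ 2 := by
  set p : E := pr C u with hp
  have hR : (0:ℝ) ≤ ∑ c ∈ C, ⟪u, c⟫ ^ 2 := by positivity
  rcases le_or_gt (sigmaMin C) 0 with hσ | hσ
  · have : sigmaMin C * ‖p‖ ^ 2 ≤ 0 := mul_nonpos_of_nonpos_of_nonneg hσ (sq_nonneg _)
    linarith
  by_cases hp0 : p = 0
  · rw [hp0]
    simpa using hR
  have hpmem := pr_mem C u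
  rw [Submodule.mem_span_finset] at hpmem
  obtain ⟨f, -, hf⟩ := hpmem
  have hip : ∀ c ∈ C, ⟪p, c⟫ = ⟪u, c⟫ := by
    intro c hc
    have := inner_sub_pr C u (Submodule.subset_span hc)
    rw [inner_sub_left] at this
    linarith
  have hps : ‖p‖ ^ 2 = ∑ c ∈ C, f c * ⟪p, c⟫ := by
    have : ⟪p, p⟫ = ⟪p, ∑ c ∈ C, f c • c⟫ := by rw [hf]
    rw [real_inner_self_eq_norm_sq] at this
    rw [this, inner_sum]
    exact Finset.sum_congr rfl fun c _ => real_inner_smul_right _ _ _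
  have hcs := Finset.sum_mul_sq_le_sq_mul_sq C f (fun c => ⟪p, c⟫)
  have hσf : sigmaMin C * ∑ c ∈ C, f c ^ 2 ≤ ‖p‖ ^ 2 := by
    have := sigmaMin_smul_le C f
    rwa [hf] at this
  have hRe : ∑ c ∈ C, ⟪p, c⟫ ^ 2 = ∑ c ∈ C, ⟪u, c⟫ ^ 2 :=
    Finset.sum_congr rfl fun c hc => by rw [hip c hc]
  set a : ℝ := ‖p‖ ^ 2 with ha
  have hap : 0 < a := by
    have := norm_pos_iff.mpr hp0; positivity
  set F : ℝ := ∑ c ∈ C, f c ^ 2 with hF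
  set R : ℝ := ∑ c ∈ C, ⟪p, c⟫ ^ 2 with hRdef
  have hR0 : (0:ℝ) ≤ R := by positivity
  have h4 : a ^ 2 ≤ F * R := by
    rw [hps]
    exact hcs
  rw [← hRe]
  have h5 : sigmaMin C * a ^ 2 ≤ (sigmaMin C * F) * R := by
    have := mul_le_mul_of_nonneg_left h4 hσ.le
    linarith [this]
  have h6 : (sigmaMin C * F) * R ≤ a * R := mul_le_mul_of_nonneg_right hσf hR0
  nlinarith [h5, h6, hap]

lemma fMat_nonneg {nA : ℕ} (A : Fin nA → E) (S : Finset E) : 0 ≤ fMat A S :=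
  Finset.sum_nonneg fun j _ => fVec_nonneg (A j) S

lemma fMat_mono {nA : ℕ} (A : Fin nA → E) {S S' : Finset E} (h : S ⊆ S') :
    fMat A S ≤ fMat A S' :=
  Finset.sum_le_sum fun j _ => fVec_mono (A j) h

/-- Total gain over candidates in C dominates sigma times total residual projection mass. -/
lemma gain_sum_ge {nA : ℕ} (A : Fin nA → E) (T C : Finset E) (hC1 : ∀ c ∈ C, ‖c‖ ≤ 1) :
    sigmaMin C * ∑ j, ‖pr C (A j - pr T (A j))‖ ^ 2 ≤
      ∑ c ∈ C, (fMat A (insert c T) - fMat A T) := by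
  have h1 : ∀ c ∈ C, ∑ j, ⟪A j - pr T (A j), c⟫ ^ 2 ≤ fMat A (insert c T) - fMat A T := by
    intro c hc
    unfold fMat
    rw [← Finset.sum_sub_distrib]
    refine Finset.sum_le_sum fun j _ => ?_
    linarith [fVec_gain (A j) c T (hC1 c hc)]
  calc sigmaMin C * ∑ j, ‖pr C (A j - pr T (A j))‖ ^ 2
      = ∑ j, sigmaMin C * ‖pr C (A j - pr T (A j))‖ ^ 2 := Finset.mul_sum _ _ _
    _ ≤ ∑ j, ∑ c ∈ C, ⟪A j - pr T (A j), c⟫ ^ 2 :=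
        Finset.sum_le_sum fun j _ => sigma_proj_le C (A j - pr T (A j))
    _ = ∑ c ∈ C, ∑ j, ⟪A j - pr T (A j), c⟫ ^ 2 := Finset.sum_comm
    _ ≤ ∑ c ∈ C, (fMat A (insert c T) - fMat A T) := Finset.sum_le_sum h1

/-- The residual projection mass dominates the squared deficit. -/
lemma deficit_sq_le {nA : ℕ} (A : Fin nA → E) (T C : Finset E)
    (hTC : fMat A T ≤ fMat A C) :
    (fMat A C - fMat A T) ^ 2 ≤
      4 * fMat A C * ∑ j, ‖pr C (A j - pr T (A j))‖ ^ 2 := by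
  set a : Fin nA → ℝ := fun j => ‖pr C (A j)‖ with ha
  set bb : Fin nA → ℝ := fun j => ‖pr T (A j)‖ with hb
  set mm : Fin nA → ℝ := fun j => ‖pr C (A j - pr T (A j))‖ with hm
  have hab : ∀ j, a j ≤ mm j + bb j := by
    intro j
    have hsplit : pr C (A j) = pr C (A j - pr T (A j)) + pr C (pr T (A j)) := by
      rw [← pr_add, sub_add_cancel]
    calc a j = ‖pr C (A j - pr T (A j)) + pr C (pr T (A j))‖ := by
          show ‖pr C (A j)‖ = _
          rw [hsplit]
      _ ≤ ‖pr C (A j - pr T (A j))‖ + ‖pr C (pr T (A j))‖ := norm_add_le _ _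
      _ ≤ mm j + bb j := by
          have := norm_pr_le C (pr T (A j))
          rw [hm, hb]
          linarith
  have hΔ : fMat A C - fMat A T = ∑ j, (a j ^ 2 - bb j ^ 2) := by
    unfold fMat
    rw [← Finset.sum_sub_distrib]
    rfl
  have h2 : ∑ j, (a j ^ 2 - bb j ^ 2) ≤ ∑ j, (a j + bb j) * mm j := by
    refine Finset.sum_le_sum fun j _ => ?_
    have h0a : 0 ≤ a j := norm_nonneg _
    have h0b : 0 ≤ bb j := norm_nonneg _
    have h0m : 0 ≤ mm j := norm_nonneg _
    nlinarith [hab j]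
  have hcs := Finset.sum_mul_sq_le_sq_mul_sq Finset.univ (fun j => a j + bb j) mm
  have h3 : ∑ j, (a j + bb j) ^ 2 ≤ 4 * fMat A C := by
    have e1 : fMat A C = ∑ j, a j ^ 2 := rfl
    have e2 : fMat A T = ∑ j, bb j ^ 2 := rfl
    have : ∑ j, (a j + bb j) ^ 2 ≤ ∑ j, (2 * a j ^ 2 + 2 * bb j ^ 2) :=
      Finset.sum_le_sum fun j _ => by nlinarith [sq_nonneg (a j - bb j)]
    rw [Finset.sum_add_distrib, ← Finset.mul_sum, ← Finset.mul_sum] at this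
    rw [e1]
    rw [e2] at hTC
    rw [e1] at hTC
    linarith
  have hXnn : (0:ℝ) ≤ ∑ j, (a j + bb j) * mm j :=
    Finset.sum_nonneg fun j _ => mul_nonneg (by positivity) (norm_nonneg _)
  have hMnn : (0:ℝ) ≤ ∑ j, mm j ^ 2 := by positivity
  have hΔnn : 0 ≤ fMat A C - fMat A T := by linarith
  have hΔX : fMat A C - fMat A T ≤ ∑ j, (a j + bb j) * mm j := by
    rw [hΔ]; exact h2
  have hsq : (fMat A C - fMat A T) ^ 2 ≤ (∑ j, (a j + bb j) * mm j) ^ 2 :=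
    pow_le_pow_left₀ hΔnn hΔX 2
  have hfin : (∑ j, (a j + bb j) * mm j) ^ 2 ≤ 4 * fMat A C * ∑ j, mm j ^ 2 := by
    calc (∑ j, (a j + bb j) * mm j) ^ 2 ≤ (∑ j, (a j + bb j) ^ 2) * ∑ j, mm j ^ 2 := hcs
      _ ≤ 4 * fMat A C * ∑ j, mm j ^ 2 := mul_le_mul_of_nonneg_right h3 hMnn
  calc (fMat A C - fMat A T) ^ 2 ≤ (∑ j, (a j + bb j) * mm j) ^ 2 := hsq
    _ ≤ 4 * fMat A C * ∑ j, mm j ^ 2 := hfin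

end GreedyCSS

/-- Greedy column subset selection guarantee against any k-subset of columns. -/
theorem greedy_css_any_subset {m nA nB : ℕ}
    (A : Fin nA → EuclideanSpace ℝ (Fin m)) (B : Fin nB → EuclideanSpace ℝ (Fin m))
    (hB : ∀ j, ‖B j‖ = 1) (k : ℕ)
    (C : Finset (EuclideanSpace ℝ (Fin m)))
    (hCsub : C ⊆ Finset.image B Finset.univ) (hCcard : C.card = k)
    (hσ : 0 < sigmaMin C) :
    ∀ ε : ℝ, 0 < ε →
    ∀ (T : ℕ → Finset (EuclideanSpace ℝ (Fin m))) (b : ℕ → Fin nB),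
      IsGreedySeq A B T b →
    ∀ r : ℕ, (16 * k : ℝ) / (ε * sigmaMin C) ≤ r →
      (1 - ε) * fMat A C ≤ fMat A (T r) := by
  intro ε hε T tb hgr r hr
  obtain ⟨hT0, hstep⟩ := hgr
  set σ := sigmaMin C with hσdef
  set OPT := fMat A C with hOPTdef
  have hOPTnn : 0 ≤ OPT := GreedyCSS.fMat_nonneg A C
  have hTnn : ∀ i, 0 ≤ fMat A (T i) := fun i => GreedyCSS.fMat_nonneg A (T i)
  rcases le_or_gt ((1 - ε) * OPT) 0 with hle | hpos
  · exact hle.trans (hTnn r)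
  have hOPT : 0 < OPT := by
    rcases mul_pos_iff.mp hpos with ⟨h1, h2⟩ | ⟨h1, h2⟩
    · exact h2
    · linarith
  have hCne : C.Nonempty := by
    rcases Finset.eq_empty_or_nonempty C with rfl | h
    · rw [hσdef, GreedyCSS.sigmaMin_empty] at hσ
      exact absurd hσ (lt_irrefl 0)
    · exact h
  have hk1 : 1 ≤ (k:ℝ) := by
    have := Finset.card_pos.mpr hCne
    rw [hCcard] at this
    exact_mod_cast this
  have hkpos : (0:ℝ) < k := by linarith
  have hC1 : ∀ c ∈ C, ‖c‖ ≤ 1 := by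
    intro c hc
    obtain ⟨j, -, rfl⟩ := Finset.mem_image.mp (hCsub hc)
    rw [hB j]
  have hTsub : ∀ i, T i ⊆ T (i+1) := fun i => by
    rw [(hstep i).1]; exact Finset.subset_insert _ _
  have hTmono : ∀ {i j : ℕ}, i ≤ j → T i ⊆ T j := by
    intro i j hij
    induction hij with
    | refl => exact Finset.Subset.refl _
    | step _ ih => exact ih.trans (hTsub _)
  by_contra hcon
  push_neg at hcon
  have hlow : ∀ i, i ≤ r → fMat A (T i) < (1 - ε) * OPT :=
    fun i hi => lt_of_le_of_lt (GreedyCSS.fMat_mono A (hTmono hi)) hcon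
  set x : ℕ → ℝ := fun i => OPT - fMat A (T i) with hx
  have hεOPT : 0 < ε * OPT := mul_pos hε hOPT
  have hxlow : ∀ i, i ≤ r → ε * OPT < x i := by
    intro i hi
    have := hlow i hi
    simp only [hx]
    nlinarith
  have hxOPT : ∀ i, x i ≤ OPT := fun i => by simp only [hx]; linarith [hTnn i]
  have hxdec : ∀ i, x (i+1) ≤ x i := fun i => by
    simp only [hx]
    have := GreedyCSS.fMat_mono A (hTsub i)
    linarith
  have hrec : ∀ i, i < r → σ * x i ^ 2 ≤ 4 * OPT * k * (x i - x (i+1)) := by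
    intro i hi
    have hTC : fMat A (T i) ≤ OPT := by
      have := hxlow i hi.le
      simp only [hx] at this
      linarith
    have hA := GreedyCSS.gain_sum_ge A (T i) C hC1
    have hBd := GreedyCSS.deficit_sq_le A (T i) C hTC
    set M : ℝ := ∑ j, ‖GreedyCSS.pr C (A j - GreedyCSS.pr (T i) (A j))‖ ^ 2 with hM
    set G : ℝ := ∑ c ∈ C, (fMat A (insert c (T i)) - fMat A (T i)) with hG
    have hcomb : σ * x i ^ 2 ≤ 4 * OPT * G := by
      have h1 : σ * (OPT - fMat A (T i)) ^ 2 ≤ σ * (4 * OPT * M) :=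
        mul_le_mul_of_nonneg_left hBd hσ.le
      have h3 : 4 * OPT * (σ * M) ≤ 4 * OPT * G :=
        mul_le_mul_of_nonneg_left hA (by positivity)
      have hxir : x i = OPT - fMat A (T i) := rfl
      rw [hxir]
      nlinarith [h1, h3]
    obtain ⟨c0, hc0C, hc0max⟩ :=
      Finset.exists_max_image C (fun c => fMat A (insert c (T i)) - fMat A (T i)) hCne
    have hsum_le : G ≤ k * (fMat A (insert c0 (T i)) - fMat A (T i)) := by
      rw [hG]
      calc ∑ c ∈ C, (fMat A (insert c (T i)) - fMat A (T i))
          ≤ ∑ _c ∈ C, (fMat A (insert c0 (T i)) - fMat A (T i)) :=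
            Finset.sum_le_sum fun c hc => hc0max c hc
        _ = C.card * (fMat A (insert c0 (T i)) - fMat A (T i)) := by
            rw [Finset.sum_const, nsmul_eq_mul]
        _ = k * (fMat A (insert c0 (T i)) - fMat A (T i)) := by rw [hCcard]
    obtain ⟨j0, -, hj0⟩ := Finset.mem_image.mp (hCsub hc0C)
    have hgr2 : fMat A (insert c0 (T i)) ≤ fMat A (T (i+1)) := by
      rw [(hstep i).1, ← hj0]
      exact (hstep i).2 j0
    have hgain : fMat A (insert c0 (T i)) - fMat A (T i) ≤ x i - x (i+1) := by
      have hxi : x i = OPT - fMat A (T i) := rfl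
      have hxi1 : x (i+1) = OPT - fMat A (T (i+1)) := rfl
      rw [hxi, hxi1]
      linarith
    have h5 : k * (fMat A (insert c0 (T i)) - fMat A (T i)) ≤ k * (x i - x (i+1)) :=
      mul_le_mul_of_nonneg_left hgain hkpos.le
    have h6 : 4 * OPT * G ≤ 4 * OPT * (k * (x i - x (i+1))) :=
      mul_le_mul_of_nonneg_left (hsum_le.trans h5) (by positivity)
    nlinarith [hcomb, h6]
  have hinv : ∀ i, i ≤ r → 1/OPT + i * (σ / (4*k*OPT)) ≤ 1 / x i := by
    intro i
    induction i with
    | zero =>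
      intro _
      have hx0 : 0 < x 0 := lt_trans hεOPT (hxlow 0 (Nat.zero_le r))
      have := one_div_le_one_div_of_le hx0 (hxOPT 0)
      push_cast
      linarith
    | succ i ih =>
      intro hir
      have hir' : i ≤ r := Nat.le_of_succ_le hir
      have hi : i < r := hir
      have hxi : 0 < x i := lt_trans hεOPT (hxlow i hir')
      have hxi1 : 0 < x (i+1) := lt_trans hεOPT (hxlow (i+1) hir)
      have hrec' := hrec i hi
      have hden : (0:ℝ) < 4*k*OPT := by positivity
      have h1 : σ / (4*k*OPT) ≤ (x i - x (i+1)) / (x i * x (i+1)) := by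
        rw [div_le_div_iff₀ hden (by positivity)]
        nlinarith [hxdec i, mul_le_mul_of_nonneg_left (hxdec i) (mul_pos hσ hxi).le]
      have h2 : 1 / x (i+1) - 1 / x i = (x i - x (i+1)) / (x i * x (i+1)) := by
        rw [div_sub_div _ _ hxi1.ne' hxi.ne', one_mul, mul_one, mul_comm (x (i+1)) (x i)]
      have hih := ih hir'
      push_cast
      push_cast at hih
      linarith
  have hfin := hinv r le_rfl
  have hxrlt : 1 / x r < 1 / (ε * OPT) := one_div_lt_one_div_of_lt hεOPT (hxlow r le_rfl)
  have hterm : (4:ℝ) / (ε * OPT) ≤ r * (σ / (4*k*OPT)) := by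
    have hq : (0:ℝ) < σ / (4*k*OPT) := by positivity
    have hmul := mul_le_mul_of_nonneg_right hr (le_of_lt hq)
    have heq : (16 * (k:ℝ)) / (ε*σ) * (σ/(4*k*OPT)) = 4 / (ε*OPT) := by
      field_simp
      ring
    rw [heq] at hmul
    linarith
  have h1OPT : (0:ℝ) < 1/OPT := by positivity
  have hinvpos : (0:ℝ) < 1/(ε*OPT) := by positivity
  have hdiv4 : (4:ℝ)/(ε*OPT) = 4 * (1/(ε*OPT)) := by ring
  linarith [hfin, hxrlt, hterm, h1OPT, hinvpos]
end

section
/- Let A ∈ ℝ^{m×n_A} and let B ∈ ℝ^{m×n_B} have unit-norm columns. Let W be a nonempty set of columns of B with σ_min(W) > 0, and suppose (T_i) is a greedy sequence for (A, B) such that no element of W is among the columns b_0, …, b_{r−1} selected in the first r steps, where r ≥ 32·|W|/σ_min(W). Then f_A(T_r) ≥ f_A(W)/2. -/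
open scoped RealInnerProductSpace

attribute [local instance] Classical.decEq

section aux
variable {m : ℕ}

local notation "E" => EuclideanSpace ℝ (Fin m)

noncomputable def pr (S : Finset (EuclideanSpace ℝ (Fin m)))
    (u : EuclideanSpace ℝ (Fin m)) : EuclideanSpace ℝ (Fin m) :=
  (Submodule.orthogonalProjectionOnto (Submodule.span ℝ (S : Set (EuclideanSpace ℝ (Fin m)))) u :
      EuclideanSpace ℝ (Fin m))

lemma fVec_eq (u : E) (S : Finset E) : fVec u S = ‖pr S u‖ ^ 2 := rfl

lemma pr_mem (S : Finset E) (u : E) : pr S u ∈ Submodule.span ℝ (S : Set E) :=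
  SetLike.coe_mem _

lemma pr_add (S : Finset E) (u v : E) : pr S (u + v) = pr S u + pr S v := by
  simp [pr, map_add]

lemma sub_pr_inner (S : Finset E) (u : E) {z : E}
    (hz : z ∈ Submodule.span ℝ (S : Set E)) : ⟪u - pr S u, z⟫ = 0 :=
  Submodule.starProjection_inner_eq_zero (K := Submodule.span ℝ (S : Set E)) u z hz

lemma inner_self_pr (S : Finset E) (u : E) : ⟪u, pr S u⟫ = ‖pr S u‖ ^ 2 := by
  have h := sub_pr_inner S u (pr_mem S u)
  rw [inner_sub_left] at h
  have : ⟪u, pr S u⟫ = ⟪pr S u, pr S u⟫ := by linarith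
  rw [this, real_inner_self_eq_norm_sq]

lemma inner_le_norm_pr (S : Finset E) (u : E) {z : E}
    (hz : z ∈ Submodule.span ℝ (S : Set E)) : ⟪u, z⟫ ≤ ‖pr S u‖ * ‖z‖ := by
  have h := sub_pr_inner S u hz
  rw [inner_sub_left] at h
  have : ⟪u, z⟫ = ⟪pr S u, z⟫ := by linarith
  rw [this]
  exact real_inner_le_norm _ _

lemma norm_pr_le (S : Finset E) (u : E) : ‖pr S u‖ ≤ ‖u‖ := by
  have h : ⟪u, pr S u⟫ ≤ ‖u‖ * ‖pr S u‖ := real_inner_le_norm _ _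
  rw [inner_self_pr] at h
  rcases eq_or_lt_of_le (norm_nonneg (pr S u)) with h0 | h0
  · rw [← h0]; exact norm_nonneg u
  · have := (mul_le_mul_iff_left₀ h0).1 (by nlinarith : ‖pr S u‖ * ‖pr S u‖ ≤ ‖u‖ * ‖pr S u‖)
    exact this

lemma fVec_nonneg (u : E) (S : Finset E) : 0 ≤ fVec u S := by
  rw [fVec_eq]; positivity

lemma fVec_mono (u : E) {S S' : Finset E} (h : S ⊆ S') : fVec u S ≤ fVec u S' := by
  have h1 : pr S u ∈ Submodule.span ℝ (S' : Set E) :=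
    Submodule.span_mono (Finset.coe_subset.mpr h) (pr_mem S u)
  have h2 := inner_le_norm_pr S' u h1
  rw [inner_self_pr] at h2
  rw [fVec_eq, fVec_eq]
  rcases eq_or_lt_of_le (norm_nonneg (pr S u)) with h0 | h0
  · rw [← h0]; simpa using sq_nonneg ‖pr S' u‖
  · have hle : ‖pr S u‖ ≤ ‖pr S' u‖ := by
      have := (mul_le_mul_iff_left₀ h0).1 (by nlinarith : ‖pr S u‖ * ‖pr S u‖ ≤ ‖pr S' u‖ * ‖pr S u‖)
      exact this
    exact pow_le_pow_left₀ (norm_nonneg _) hle 2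


lemma norm_sub_pr_le (S : Finset E) (w : E) : ‖w - pr S w‖ ≤ ‖w‖ := by
  have horth : ⟪w - pr S w, pr S w⟫ = 0 := sub_pr_inner S w (pr_mem S w)
  have hdecomp : ‖w‖ ^ 2 = ‖w - pr S w‖ ^ 2 + ‖pr S w‖ ^ 2 := by
    have := norm_add_sq_real (w - pr S w) (pr S w)
    simpa [horth] using this
  nlinarith [norm_nonneg (w - pr S w), norm_nonneg w, sq_nonneg ‖pr S w‖]

lemma fVec_gain (S : Finset E) (u w : E) (hw : ‖w‖ ≤ 1) :
    fVec u S + ⟪u - pr S u, w⟫ ^ 2 ≤ fVec u (insert w S) := by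
  set p := pr S u with hp
  set w' := w - pr S w with hw'
  set t : ℝ := ⟪u, w'⟫ with htdef
  have hsub : (S : Set E) ⊆ ((insert w S : Finset E) : Set E) := by
    intro x hx; simp only [Finset.coe_insert, Set.mem_insert_iff]
    exact Or.inr hx
  have hspan : Submodule.span ℝ (S : Set E) ≤
      Submodule.span ℝ ((insert w S : Finset E) : Set E) := Submodule.span_mono hsub
  have hwmem : w ∈ Submodule.span ℝ ((insert w S : Finset E) : Set E) := by
    apply Submodule.subset_span
    simp
  have hw'mem : w' ∈ Submodule.span ℝ ((insert w S : Finset E) : Set E) :=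
    Submodule.sub_mem _ hwmem (hspan (pr_mem S w))
  have hpmem : p ∈ Submodule.span ℝ ((insert w S : Finset E) : Set E) := hspan (pr_mem S u)
  -- t = ⟪u - p, w⟫
  have h1 : ⟪u - p, pr S w⟫ = 0 := sub_pr_inner S u (pr_mem S w)
  have h2 : ⟪w - pr S w, p⟫ = 0 := sub_pr_inner S w (pr_mem S u)
  have ht : t = ⟪u - p, w⟫ := by
    have e1 : ⟪u, w'⟫ = ⟪u - p, w'⟫ + ⟪p, w'⟫ := by rw [← inner_add_left, sub_add_cancel]
    have e2 : ⟪p, w'⟫ = 0 := by rw [real_inner_comm]; exact h2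
    have e3 : ⟪u - p, w'⟫ = ⟪u - p, w⟫ - ⟪u - p, pr S w⟫ := by
      rw [hw', inner_sub_right]
    rw [htdef, e1, e2, e3, h1]; ring
  -- z := p + t • w'
  set z : E := p + t • w' with hz
  have hzmem : z ∈ Submodule.span ℝ ((insert w S : Finset E) : Set E) :=
    Submodule.add_mem _ hpmem (Submodule.smul_mem _ _ hw'mem)
  have hpw' : ⟪p, w'⟫ = 0 := by rw [real_inner_comm]; exact h2
  have hinner : ⟪u, z⟫ = ‖p‖ ^ 2 + t ^ 2 := by
    rw [hz, inner_add_right, real_inner_smul_right, inner_self_pr, ← htdef]; ring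
  have hznorm : ‖z‖ ^ 2 = ‖p‖ ^ 2 + t ^ 2 * ‖w'‖ ^ 2 := by
    have := norm_add_sq_real p (t • w')
    rw [real_inner_smul_right, hpw', norm_smul] at this
    simpa [mul_pow] using this
  have hw'1 : ‖w'‖ ≤ 1 := le_trans (norm_sub_pr_le S w) hw
  have hzle : ‖z‖ ^ 2 ≤ ‖p‖ ^ 2 + t ^ 2 := by
    rw [hznorm]
    have hb : ‖w'‖ ^ 2 ≤ 1 := pow_le_one₀ (norm_nonneg _) hw'1
    nlinarith [sq_nonneg t]
  have hle := inner_le_norm_pr (insert w S) u hzmem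
  rw [hinner] at hle
  -- (‖p‖² + t²) ≤ ‖pr (insert w S) u‖ * ‖z‖
  set q := ‖pr (insert w S) u‖ with hq
  have hq0 : 0 ≤ q := norm_nonneg _
  have hc0 : 0 ≤ ‖p‖ ^ 2 + t ^ 2 := by positivity
  have key : ‖p‖ ^ 2 + t ^ 2 ≤ q ^ 2 := by
    rcases eq_or_lt_of_le hc0 with h0 | h0
    · rw [← h0]; positivity
    · have hsq : (‖p‖ ^ 2 + t ^ 2) ^ 2 ≤ q ^ 2 * ‖z‖ ^ 2 := by
        calc (‖p‖ ^ 2 + t ^ 2) ^ 2 ≤ (q * ‖z‖) ^ 2 := by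
              apply pow_le_pow_left₀ hc0 hle
          _ = q ^ 2 * ‖z‖ ^ 2 := by ring
      nlinarith [norm_nonneg z, sq_nonneg q]
    -- from c² ≤ q² ‖z‖² ≤ q² c  ⇒ c ≤ q²
  rw [fVec_eq, fVec_eq, ← hq, ← hp, ← ht]
  exact key
end aux

section aux3
variable {m : ℕ}
local notation "E" => EuclideanSpace ℝ (Fin m)

lemma sigmaMin_mul_le (W : Finset E) (β : W → ℝ) :
    sigmaMin W * (∑ v, (β v) ^ 2) ≤ ‖∑ v, β v • (v : E)‖ ^ 2 := by
  have hbdd : BddBelow {r : ℝ | ∃ α : W → ℝ, ∑ v, (α v) ^ 2 = 1 ∧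
      r = ‖∑ v, α v • (v : E)‖ ^ 2} := by
    refine ⟨0, fun r hr => ?_⟩
    obtain ⟨α, _, h2⟩ := hr
    rw [h2]; positivity
  set s : ℝ := ∑ v, (β v) ^ 2 with hs
  have hs0 : 0 ≤ s := by positivity
  rcases eq_or_lt_of_le hs0 with h0 | h0
  · rw [← h0, mul_zero]; positivity
  · set c : ℝ := Real.sqrt s with hc
    have hc0 : 0 < c := Real.sqrt_pos.mpr h0
    have hc2 : c ^ 2 = s := Real.sq_sqrt (le_of_lt h0)
    set α : W → ℝ := fun v => β v / c with hα
    have hα1 : ∑ v, (α v) ^ 2 = 1 := by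
      rw [hα]
      simp only [div_pow]
      rw [← Finset.sum_div, ← hs, hc2]
      exact div_self (ne_of_gt h0)
    have hsum : ∑ v, α v • (v : E) = c⁻¹ • ∑ v, β v • (v : E) := by
      rw [Finset.smul_sum]
      apply Finset.sum_congr rfl
      intro v _
      show α v • (v : E) = c⁻¹ • β v • (v : E)
      rw [smul_smul, hα]
      show (β v / c) • (v : E) = (c⁻¹ * β v) • (v : E)
      rw [div_eq_inv_mul]
    have hmem : ‖∑ v, α v • (v : E)‖ ^ 2 ∈ {r : ℝ | ∃ α : W → ℝ, ∑ v, (α v) ^ 2 = 1 ∧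
        r = ‖∑ v, α v • (v : E)‖ ^ 2} := ⟨α, hα1, rfl⟩
    have hle : sigmaMin W ≤ ‖∑ v, α v • (v : E)‖ ^ 2 := csInf_le hbdd hmem
    have hnorm : ‖∑ v, α v • (v : E)‖ ^ 2 = s⁻¹ * ‖∑ v, β v • (v : E)‖ ^ 2 := by
      rw [hsum, norm_smul]
      simp only [mul_pow, norm_inv, Real.norm_eq_abs, abs_of_pos hc0]
      rw [inv_pow, hc2]
    rw [hnorm] at hle
    have := mul_le_mul_of_nonneg_right hle (le_of_lt h0)
    calc sigmaMin W * s ≤ s⁻¹ * ‖∑ v, β v • (v : E)‖ ^ 2 * s := this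
      _ = ‖∑ v, β v • (v : E)‖ ^ 2 := by field_simp

lemma sigmaMin_mul_fVec_le (W : Finset E) (hσ : 0 ≤ sigmaMin W) (u : E) :
    sigmaMin W * fVec u W ≤ ∑ v ∈ W, ⟪u, v⟫ ^ 2 := by
  obtain ⟨f, -, hf⟩ := Submodule.mem_span_finset.mp (pr_mem W u)
  set p := pr W u with hp
  have hsum : ∑ v : W, f (v : E) • (v : E) = p := by
    rw [← hf]
    exact Finset.sum_coe_sort W (fun v => f v • v)
  have h1 : sigmaMin W * (∑ v : W, (f (v : E)) ^ 2) ≤ ‖p‖ ^ 2 := by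
    have := sigmaMin_mul_le W (fun v => f (v : E))
    rwa [hsum] at this
  have hfs : ∑ v : W, (f (v : E)) ^ 2 = ∑ v ∈ W, (f v) ^ 2 :=
    Finset.sum_coe_sort W (fun v => (f v) ^ 2)
  rw [hfs] at h1
  have h2 : ⟪u, p⟫ = ∑ v ∈ W, f v * ⟪u, v⟫ := by
    rw [← hf, inner_sum]
    apply Finset.sum_congr rfl
    intro v _
    rw [real_inner_smul_right]
  have h3 : ⟪u, p⟫ = ‖p‖ ^ 2 := inner_self_pr W u
  have h4 : (∑ v ∈ W, f v * ⟪u, v⟫) ^ 2 ≤ (∑ v ∈ W, (f v) ^ 2) * ∑ v ∈ W, ⟪u, v⟫ ^ 2 :=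
    Finset.sum_mul_sq_le_sq_mul_sq W _ _
  set X : ℝ := ∑ v ∈ W, ⟪u, v⟫ ^ 2 with hX
  have hX0 : 0 ≤ X := by positivity
  rw [fVec_eq, ← hp]
  rcases eq_or_lt_of_le (sq_nonneg ‖p‖) with h0 | h0
  · rw [← h0, mul_zero]; exact hX0
  · -- σ * ‖p‖⁴ ≤ ‖p‖² * X
    have key : sigmaMin W * (‖p‖ ^ 2) ^ 2 ≤ ‖p‖ ^ 2 * X := by
      calc sigmaMin W * (‖p‖ ^ 2) ^ 2 = sigmaMin W * ⟪u, p⟫ ^ 2 := by rw [h3]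
        _ = sigmaMin W * (∑ v ∈ W, f v * ⟪u, v⟫) ^ 2 := by rw [h2]
        _ ≤ sigmaMin W * ((∑ v ∈ W, (f v) ^ 2) * X) := by
            exact mul_le_mul_of_nonneg_left h4 hσ
        _ = (sigmaMin W * (∑ v ∈ W, (f v) ^ 2)) * X := by ring
        _ ≤ ‖p‖ ^ 2 * X := mul_le_mul_of_nonneg_right h1 hX0
    nlinarith [key, h0]
end aux3

section aux4
variable {m : ℕ}
local notation "E" => EuclideanSpace ℝ (Fin m)

lemma fMat_nonneg {n : ℕ} (A : Fin n → E) (S : Finset E) : 0 ≤ fMat A S :=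
  Finset.sum_nonneg fun j _ => fVec_nonneg (A j) S

lemma fMat_mono {n : ℕ} (A : Fin n → E) {S S' : Finset E} (h : S ⊆ S') :
    fMat A S ≤ fMat A S' :=
  Finset.sum_le_sum fun j _ => fVec_mono (A j) h

lemma sum_sq_quad {n : ℕ} (a c : Fin n → ℝ) (ha : ∀ j, 0 ≤ a j) (hc : ∀ j, 0 ≤ c j)
    (hΦ : ∑ j, (c j) ^ 2 ≤ ∑ j, (a j) ^ 2) :
    (∑ j, (a j) ^ 2 - ∑ j, (c j) ^ 2) ^ 2 ≤
      4 * (∑ j, (a j) ^ 2) * ∑ j, (max (a j - c j) 0) ^ 2 := by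
  set d : Fin n → ℝ := fun j => max (a j - c j) 0 with hd
  have hd0 : ∀ j, 0 ≤ d j := fun j => le_max_right _ _
  have h1 : ∀ j, (a j) ^ 2 - (c j) ^ 2 ≤ 2 * (a j * d j) := by
    intro j
    rcases le_total (a j) (c j) with h | h
    · have : d j = 0 := max_eq_right (by linarith)
      rw [this]
      nlinarith [ha j, hc j]
    · have : d j = a j - c j := max_eq_left (by linarith)
      rw [this]
      nlinarith [sq_nonneg (a j - c j)]
  have h2 : ∑ j, ((a j) ^ 2 - (c j) ^ 2) ≤ ∑ j, 2 * (a j * d j) :=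
    Finset.sum_le_sum fun j _ => h1 j
  rw [Finset.sum_sub_distrib] at h2
  have h2' : ∑ j, 2 * (a j * d j) = 2 * ∑ j, a j * d j := by rw [← Finset.mul_sum]
  rw [h2'] at h2
  have h3 : (∑ j, a j * d j) ^ 2 ≤ (∑ j, (a j) ^ 2) * ∑ j, (d j) ^ 2 :=
    Finset.sum_mul_sq_le_sq_mul_sq Finset.univ a d
  have h4 : 0 ≤ ∑ j, a j * d j :=
    Finset.sum_nonneg fun j _ => mul_nonneg (ha j) (hd0 j)
  nlinarith [h2, h3, h4, sq_nonneg (∑ j, a j * d j)]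

lemma greedy_step {nA : ℕ} (A : Fin nA → E) (W : Finset E)
    (hW1 : ∀ w ∈ W, ‖w‖ ≤ 1) (hσ : 0 ≤ sigmaMin W) (S S' : Finset E)
    (hgr : ∀ w ∈ W, fMat A (insert w S) ≤ fMat A S')
    (hΦ : fMat A S ≤ fMat A W) :
    4 * fMat A W * ((W.card : ℝ) * fMat A S) + sigmaMin W * (fMat A W - fMat A S) ^ 2 ≤
      4 * fMat A W * ((W.card : ℝ) * fMat A S') := by
  set f := fMat A W with hf
  set Φ := fMat A S with hΦdef
  set σ := sigmaMin W with hσdef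
  set k : ℝ := (W.card : ℝ) with hk
  set u' : Fin nA → E := fun j => A j - pr S (A j) with hu'
  set a : Fin nA → ℝ := fun j => ‖pr W (A j)‖ with hadef
  set c : Fin nA → ℝ := fun j => ‖pr S (A j)‖ with hcdef
  set d : Fin nA → ℝ := fun j => max (a j - c j) 0 with hddef
  -- step 1: k * Φ' ≥ k * Φ + σ * ∑ d²
  have hgain : ∀ w ∈ W, Φ + ∑ j, ⟪u' j, w⟫ ^ 2 ≤ fMat A (insert w S) := by
    intro w hw
    have := fun j => fVec_gain S (A j) w (hW1 w hw)
    calc Φ + ∑ j, ⟪u' j, w⟫ ^ 2 = ∑ j, (fVec (A j) S + ⟪u' j, w⟫ ^ 2) := by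
          rw [Finset.sum_add_distrib]; rfl
      _ ≤ ∑ j, fVec (A j) (insert w S) := Finset.sum_le_sum fun j _ => this j
      _ = fMat A (insert w S) := rfl
  have hsum1 : (W.card : ℝ) * Φ + ∑ w ∈ W, ∑ j, ⟪u' j, w⟫ ^ 2 ≤ k * fMat A S' := by
    have h := Finset.sum_le_sum (fun w hw => le_trans (hgain w hw) (hgr w hw))
    rw [Finset.sum_const, nsmul_eq_mul] at h
    calc (W.card : ℝ) * Φ + ∑ w ∈ W, ∑ j, ⟪u' j, w⟫ ^ 2
        = ∑ w ∈ W, (Φ + ∑ j, ⟪u' j, w⟫ ^ 2) := by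
          rw [Finset.sum_add_distrib, Finset.sum_const, nsmul_eq_mul]
      _ ≤ k * fMat A S' := h
  have hswap : ∑ w ∈ W, ∑ j, ⟪u' j, w⟫ ^ 2 = ∑ j, ∑ w ∈ W, ⟪u' j, w⟫ ^ 2 :=
    Finset.sum_comm
  have hspec : ∀ j, σ * fVec (u' j) W ≤ ∑ w ∈ W, ⟪u' j, w⟫ ^ 2 := fun j =>
    sigmaMin_mul_fVec_le W hσ (u' j)
  have hdd : ∀ j, (d j) ^ 2 ≤ fVec (u' j) W := by
    intro j
    have hsplit : pr W (A j) = pr W (u' j) + pr W (pr S (A j)) := by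
      rw [← pr_add]
      congr 1
      rw [hu']
      simp
    have htr : a j ≤ ‖pr W (u' j)‖ + c j := by
      rw [hadef]
      calc ‖pr W (A j)‖ = ‖pr W (u' j) + pr W (pr S (A j))‖ := by rw [hsplit]
        _ ≤ ‖pr W (u' j)‖ + ‖pr W (pr S (A j))‖ := norm_add_le _ _
        _ ≤ ‖pr W (u' j)‖ + ‖pr S (A j)‖ := by
            have := norm_pr_le W (pr S (A j)); linarith
    have hdle : d j ≤ ‖pr W (u' j)‖ := by
      apply max_le _ (norm_nonneg _)
      linarith
    rw [fVec_eq]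
    exact pow_le_pow_left₀ (le_max_right _ _) hdle 2
  have hsum2 : σ * ∑ j, (d j) ^ 2 ≤ ∑ j, ∑ w ∈ W, ⟪u' j, w⟫ ^ 2 := by
    calc σ * ∑ j, (d j) ^ 2 = ∑ j, σ * (d j) ^ 2 := Finset.mul_sum _ _ _
      _ ≤ ∑ j, σ * fVec (u' j) W :=
          Finset.sum_le_sum fun j _ => mul_le_mul_of_nonneg_left (hdd j) hσ
      _ ≤ ∑ j, ∑ w ∈ W, ⟪u' j, w⟫ ^ 2 := Finset.sum_le_sum fun j _ => hspec j
  -- step 2: (f - Φ)² ≤ 4 f ∑ d²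
  have hfa : f = ∑ j, (a j) ^ 2 := rfl
  have hΦc : Φ = ∑ j, (c j) ^ 2 := rfl
  have hquad : (f - Φ) ^ 2 ≤ 4 * f * ∑ j, (d j) ^ 2 := by
    rw [hfa, hΦc]
    exact sum_sq_quad a c (fun j => norm_nonneg _) (fun j => norm_nonneg _)
      (by rw [← hfa, ← hΦc]; exact hΦ)
  have hf0 : 0 ≤ f := fMat_nonneg A W
  have hkey : k * Φ + σ * ∑ j, (d j) ^ 2 ≤ k * fMat A S' := by
    rw [hswap] at hsum1
    linarith [hsum2]
  have h5 : σ * (f - Φ) ^ 2 ≤ σ * (4 * f * ∑ j, (d j) ^ 2) :=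
    mul_le_mul_of_nonneg_left hquad hσ
  nlinarith [mul_le_mul_of_nonneg_left hkey (by linarith : (0:ℝ) ≤ 4 * f)]

lemma decay {k f σ : ℝ} (hk : 1 ≤ k) (hσ0 : 0 < σ) (hσ1 : σ ≤ 1) (hf : 0 < f)
    (Φ : ℕ → ℝ) (hpos : ∀ i, 0 ≤ Φ i) (hmono : ∀ i, Φ i ≤ Φ (i + 1))
    (hstep : ∀ i, Φ i ≤ f →
      4 * f * (k * Φ i) + σ * (f - Φ i) ^ 2 ≤ 4 * f * (k * Φ (i + 1))) :
    ∀ i, (f - Φ i) * (σ * i + 4 * k) ≤ 4 * k * f := by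
  intro i
  induction i with
  | zero =>
    simp only [Nat.cast_zero, mul_zero, zero_add]
    nlinarith [hpos 0]
  | succ i ih =>
    by_cases h : Φ i ≤ f
    · have hs := hstep i h
      have hsy0 : 4 * k * f * (f - Φ (i + 1)) ≤
          4 * k * f * (f - Φ i) - σ * (f - Φ i) ^ 2 := by nlinarith [hs]
      set x := f - Φ i with hx
      set y := f - Φ (i + 1) with hy
      set D : ℝ := σ * i + 4 * k with hD
      have hx0 : 0 ≤ x := by linarith
      have hD4 : 4 * k ≤ D := by
        rw [hD]
        nlinarith [Nat.cast_nonneg (α := ℝ) i]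
      have hxf : x ≤ f := by rw [hx]; linarith [hpos i]
      have hsy : 4 * k * f * y ≤ 4 * k * f * x - σ * x ^ 2 := hsy0
      have hgoal : y * (D + σ) ≤ 4 * k * f := by
        have h1 : 0 ≤ 4 * k * f - x * D := by linarith [ih]
        have h2 : 0 ≤ 4 * k * f - σ * x := by nlinarith
        have h3 : 0 ≤ D + σ := by linarith
        have h4 : (4 * k * f * y) * (D + σ) ≤ (4 * k * f * x - σ * x ^ 2) * (D + σ) :=
          mul_le_mul_of_nonneg_right hsy h3
        nlinarith [mul_nonneg h1 h2, sq_nonneg (σ * x), mul_pos (by linarith : (0:ℝ) < 4 * k) hf]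
      calc (f - Φ (i + 1)) * (σ * (i + 1 : ℕ) + 4 * k) = y * (D + σ) := by
            rw [hy, hD]; push_cast; ring
        _ ≤ 4 * k * f := hgoal
    · push_neg at h
      have hΦ' : f < Φ (i + 1) := lt_of_lt_of_le h (hmono i)
      have hDpos : 0 ≤ σ * ((i : ℝ) + 1) + 4 * k := by
        nlinarith [Nat.cast_nonneg (α := ℝ) i]
      have : (f - Φ (i + 1)) * (σ * ((i : ℝ) + 1) + 4 * k) ≤ 0 :=
        mul_nonpos_of_nonpos_of_nonneg (by linarith) hDpos
      calc (f - Φ (i + 1)) * (σ * ((i + 1 : ℕ) : ℝ) + 4 * k)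
          = (f - Φ (i + 1)) * (σ * ((i : ℝ) + 1) + 4 * k) := by push_cast; ring
        _ ≤ 0 := this
        _ ≤ 4 * k * f := by nlinarith
end aux4

section final
variable {m : ℕ}
local notation "E" => EuclideanSpace ℝ (Fin m)

lemma sigmaMin_le_one (W : Finset E) (hne : W.Nonempty) (h1 : ∀ w ∈ W, ‖w‖ = 1) :
    sigmaMin W ≤ 1 := by
  obtain ⟨w0, hw0⟩ := hne
  have hbdd : BddBelow {r : ℝ | ∃ α : W → ℝ, ∑ v, (α v) ^ 2 = 1 ∧
      r = ‖∑ v, α v • (v : E)‖ ^ 2} := by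
    refine ⟨0, fun r hr => ?_⟩
    obtain ⟨α, _, h2⟩ := hr
    rw [h2]; positivity
  set w0' : W := ⟨w0, hw0⟩ with hw0'
  set α : W → ℝ := fun v => if v = w0' then 1 else 0 with hα
  have hsq : ∑ v, (α v) ^ 2 = 1 := by
    rw [hα]
    simp [apply_ite (fun x : ℝ => x ^ 2)]
  have hsum : ∑ v, α v • (v : E) = w0 := by
    rw [hα]
    simp [ite_smul]
    rfl
  have hmem : (1 : ℝ) ∈ {r : ℝ | ∃ α : W → ℝ, ∑ v, (α v) ^ 2 = 1 ∧
      r = ‖∑ v, α v • (v : E)‖ ^ 2} := by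
    refine ⟨α, hsq, ?_⟩
    rw [hsum, h1 w0 hw0]
    norm_num
  exact csInf_le hbdd hmem

end final
/-- If greedy never selects any column of W during the first r steps, with
r ≥ 32·|W|/σ_min(W), then greedy's value is at least half of f_A(W). -/
theorem greedy_css_unselected_half {m nA nB : ℕ}
    (A : Fin nA → EuclideanSpace ℝ (Fin m)) (B : Fin nB → EuclideanSpace ℝ (Fin m))
    (hB : ∀ j, ‖B j‖ = 1)
    (W : Finset (EuclideanSpace ℝ (Fin m))) (hWne : W.Nonempty)
    (hWsub : W ⊆ Finset.image B Finset.univ)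
    (hσ : 0 < sigmaMin W)
    (T : ℕ → Finset (EuclideanSpace ℝ (Fin m))) (b : ℕ → Fin nB)
    (hT : IsGreedySeq A B T b)
    (r : ℕ) (hr : (32 * W.card : ℝ) / sigmaMin W ≤ r)
    (hnosel : ∀ i < r, B (b i) ∉ W) :
    fMat A W / 2 ≤ fMat A (T r) := by
  obtain ⟨hT0, hTs⟩ := hT
  have hk : 1 ≤ (W.card : ℝ) := by
    exact_mod_cast Nat.one_le_iff_ne_zero.mpr (Finset.card_ne_zero_of_mem hWne.choose_spec)
  have hW1 : ∀ w ∈ W, ‖w‖ = 1 := by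
    intro w hw
    obtain ⟨j, _, rfl⟩ := Finset.mem_image.mp (hWsub hw)
    exact hB j
  have hσ1 : sigmaMin W ≤ 1 := sigmaMin_le_one W hWne hW1
  have hf0 : 0 ≤ fMat A W := fMat_nonneg A W
  rcases eq_or_lt_of_le hf0 with hf | hf
  · rw [← hf]
    simpa using fMat_nonneg A (T r)
  · have hmono : ∀ i, fMat A (T i) ≤ fMat A (T (i + 1)) := by
      intro i
      rw [(hTs i).1]
      exact fMat_mono A (Finset.subset_insert _ _)
    have hpos : ∀ i, 0 ≤ fMat A (T i) := fun i => fMat_nonneg A (T i)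
    have hstep : ∀ i, fMat A (T i) ≤ fMat A W →
        4 * fMat A W * ((W.card : ℝ) * fMat A (T i)) + sigmaMin W * (fMat A W - fMat A (T i)) ^ 2 ≤
          4 * fMat A W * ((W.card : ℝ) * fMat A (T (i + 1))) := by
      intro i hΦ
      refine greedy_step A W (fun w hw => le_of_eq (hW1 w hw)) (le_of_lt hσ) (T i) (T (i + 1)) ?_ hΦ
      intro w hw
      obtain ⟨j, _, rfl⟩ := Finset.mem_image.mp (hWsub hw)
      rw [(hTs i).1]
      exact (hTs i).2 j
    have hdec := decay hk hσ hσ1 hf (fun i => fMat A (T i)) hpos hmono hstep r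
    have hr' : 32 * (W.card : ℝ) ≤ sigmaMin W * r := by
      rw [div_le_iff₀ hσ] at hr
      nlinarith [hr]
    by_cases hcase : fMat A W ≤ fMat A (T r)
    · linarith
    · push_neg at hcase
      have hx0 : 0 ≤ fMat A W - fMat A (T r) := by linarith
      have h36 : 36 * (W.card : ℝ) ≤ sigmaMin W * r + 4 * W.card := by linarith
      nlinarith [mul_le_mul_of_nonneg_left h36 hx0, hdec, hpos r,
        mul_nonneg (by linarith : (0:ℝ) ≤ (W.card : ℝ)) hf0]
end

section
/- Let A ∈ ℝ^{m×n}, let S be a nonempty finite set of unit vectors in ℝ^m, and let T be a finite set of vectors in ℝ^m with f_A(S) ≥ f_A(T) and f_A(S) > 0. Then there exists v ∈ S such that f_A(T ∪ {v}) − f_A(T) ≥ σ_min(S)·(f_A(S) − f_A(T))² / (4·|S|·f_A(S)). -/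
open scoped RealInnerProductSpace

attribute [local instance] Classical.decEq

set_option maxHeartbeats 1000000

private lemma orthogonalProjection_inner_eq_zero {m : ℕ} {K : Submodule ℝ (EuclideanSpace ℝ (Fin m))}
    (v w : EuclideanSpace ℝ (Fin m)) (hw : w ∈ K) :
    ⟪v - (Submodule.orthogonalProjectionOnto K v : EuclideanSpace ℝ (Fin m)), w⟫ = 0 :=
  Submodule.starProjection_inner_eq_zero v w hw

section Aux

variable {m : ℕ}

private lemma aux_le_of_sq_le_mul {x y : ℝ} (hx : 0 ≤ x) (hy : 0 ≤ y)
    (h : x ^ 2 ≤ y * x) : x ≤ y := by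
  rcases hx.eq_or_lt with h0 | h0
  · rwa [← h0]
  · have : x * x ≤ y * x := by nlinarith
    exact le_of_mul_le_mul_right this h0

private lemma aux_inner_proj (K : Submodule ℝ (EuclideanSpace ℝ (Fin m)))
    (u z : EuclideanSpace ℝ (Fin m)) (hz : z ∈ K) :
    ⟪u, z⟫ = ⟪(Submodule.orthogonalProjectionOnto K u : EuclideanSpace ℝ (Fin m)), z⟫ := by
  have h := orthogonalProjection_inner_eq_zero u z hz
  rw [inner_sub_left] at h
  linarith

private lemma aux_inner_sq_le (K : Submodule ℝ (EuclideanSpace ℝ (Fin m)))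
    (u z : EuclideanSpace ℝ (Fin m)) (hz : z ∈ K) :
    ⟪u, z⟫ ^ 2 ≤ ‖(Submodule.orthogonalProjectionOnto K u : EuclideanSpace ℝ (Fin m))‖ ^ 2 * ‖z‖ ^ 2 := by
  rw [aux_inner_proj K u z hz]
  have h := abs_real_inner_le_norm
    ((Submodule.orthogonalProjectionOnto K u : EuclideanSpace ℝ (Fin m))) z
  nlinarith [abs_nonneg (⟪(Submodule.orthogonalProjectionOnto K u : EuclideanSpace ℝ (Fin m)), z⟫),
    sq_abs (⟪(Submodule.orthogonalProjectionOnto K u : EuclideanSpace ℝ (Fin m)), z⟫),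
    mul_nonneg (norm_nonneg ((Submodule.orthogonalProjectionOnto K u : EuclideanSpace ℝ (Fin m))))
      (norm_nonneg z)]

private lemma aux_norm_proj_le (K : Submodule ℝ (EuclideanSpace ℝ (Fin m)))
    (u : EuclideanSpace ℝ (Fin m)) :
    ‖(Submodule.orthogonalProjectionOnto K u : EuclideanSpace ℝ (Fin m))‖ ≤ ‖u‖ := by
  set p : EuclideanSpace ℝ (Fin m) := (Submodule.orthogonalProjectionOnto K u : EuclideanSpace ℝ (Fin m))
  have hpK : p ∈ K := SetLike.coe_mem _
  have h1 : ⟪u, p⟫ = ‖p‖ ^ 2 := by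
    have h := orthogonalProjection_inner_eq_zero u p hpK
    rw [inner_sub_left] at h
    have := real_inner_self_eq_norm_sq p
    linarith
  have h2 : ⟪u, p⟫ ≤ ‖u‖ * ‖p‖ := real_inner_le_norm u p
  exact aux_le_of_sq_le_mul (norm_nonneg _) (norm_nonneg _) (by linarith)

/-- Key marginal gain lemma for a single vector. -/
private lemma aux_fVec_insert_ge (u v : EuclideanSpace ℝ (Fin m))
    (T : Finset (EuclideanSpace ℝ (Fin m))) (hv : ‖v‖ ≤ 1) :
    fVec u T + ⟪u - (Submodule.orthogonalProjectionOnto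
        (Submodule.span ℝ (T : Set (EuclideanSpace ℝ (Fin m)))) u :
        EuclideanSpace ℝ (Fin m)), v⟫ ^ 2 ≤ fVec u (insert v T) := by
  set K : Submodule ℝ (EuclideanSpace ℝ (Fin m)) :=
    Submodule.span ℝ (T : Set (EuclideanSpace ℝ (Fin m))) with hK
  set K' : Submodule ℝ (EuclideanSpace ℝ (Fin m)) :=
    Submodule.span ℝ ((insert v T : Finset (EuclideanSpace ℝ (Fin m))) :
      Set (EuclideanSpace ℝ (Fin m))) with hK'
  have hKK' : K ≤ K' := by
    apply Submodule.span_mono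
    rw [Finset.coe_insert]
    exact Set.subset_insert _ _
  have hvK' : v ∈ K' := Submodule.subset_span (by simp)
  set p : EuclideanSpace ℝ (Fin m) := (Submodule.orthogonalProjectionOnto K u : EuclideanSpace ℝ (Fin m))
    with hp
  set q : EuclideanSpace ℝ (Fin m) := (Submodule.orthogonalProjectionOnto K' u : EuclideanSpace ℝ (Fin m))
    with hq
  set pv : EuclideanSpace ℝ (Fin m) := (Submodule.orthogonalProjectionOnto K v : EuclideanSpace ℝ (Fin m))
    with hpv
  set w : EuclideanSpace ℝ (Fin m) := v - pv with hw
  have hpK : p ∈ K := SetLike.coe_mem _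
  have hpvK : pv ∈ K := SetLike.coe_mem _
  have hrK : ∀ z ∈ K, ⟪u - p, z⟫ = 0 := fun z hz => orthogonalProjection_inner_eq_zero u z hz
  have hwK : ∀ z ∈ K, ⟪w, z⟫ = 0 := fun z hz => orthogonalProjection_inner_eq_zero v z hz
  have hvwp : v = w + pv := by rw [hw]; abel
  have hrv : ⟪u - p, v⟫ = ⟪u - p, w⟫ := by
    have h1 : ⟪u - p, pv⟫ = 0 := hrK pv hpvK
    have h2 : ⟪u - p, v⟫ = ⟪u - p, w⟫ + ⟪u - p, pv⟫ := by
      rw [← inner_add_right, ← hvwp]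
    rw [h2, h1, add_zero]
  have hpq : fVec u T = ‖p‖ ^ 2 := rfl
  have hq' : fVec u (insert v T) = ‖q‖ ^ 2 := rfl
  have hup : ⟪u, p⟫ = ‖p‖ ^ 2 := by
    have h := hrK p hpK
    rw [inner_sub_left] at h
    have := real_inner_self_eq_norm_sq p
    linarith
  have hpvw : ⟪pv, w⟫ = 0 := by
    have := hwK pv hpvK
    rwa [real_inner_comm] at this
  have hw2 : ‖w‖ ^ 2 ≤ 1 := by
    have hnorm : ‖v‖ ^ 2 = ‖pv‖ ^ 2 + 2 * ⟪pv, w⟫ + ‖w‖ ^ 2 := by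
      conv_lhs => rw [hvwp, add_comm w pv]
      exact norm_add_sq_real pv w
    nlinarith [sq_nonneg ‖pv‖, norm_nonneg v, norm_nonneg w]
  rw [hpq, hq', hrv]
  by_cases hw0 : w = 0
  · rw [hw0, inner_zero_right]
    have h1 : (‖p‖ ^ 2) ^ 2 ≤ ‖q‖ ^ 2 * ‖p‖ ^ 2 := by
      have h := aux_inner_sq_le K' u p (hKK' hpK)
      rw [hup] at h
      nlinarith
    have h2 : ‖p‖ ^ 2 ≤ ‖q‖ ^ 2 :=
      aux_le_of_sq_le_mul (sq_nonneg ‖p‖) (sq_nonneg ‖q‖) h1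
    have h3 : (0:ℝ) ^ 2 = 0 := by norm_num
    linarith
  · have hwn : 0 < ‖w‖ ^ 2 := by
      have : 0 < ‖w‖ := norm_pos_iff.2 hw0
      positivity
    set d : ℝ := ⟪u - p, w⟫ with hd
    set c : ℝ := d / ‖w‖ ^ 2 with hc
    set z : EuclideanSpace ℝ (Fin m) := p + c • w with hz
    have hzK' : z ∈ K' := by
      apply K'.add_mem (hKK' hpK)
      apply K'.smul_mem
      rw [hw]
      exact K'.sub_mem hvK' (hKK' hpvK)
    have hpw : ⟪p, w⟫ = 0 := by
      have := hwK p hpK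
      rwa [real_inner_comm] at this
    have huw : ⟪u, w⟫ = d := by
      rw [hd]
      have h := inner_sub_left (𝕜 := ℝ) u p w
      linarith [hpw, h]
    set a : ℝ := ‖p‖ ^ 2 + d ^ 2 / ‖w‖ ^ 2 with ha
    have hcd : c * d = d ^ 2 / ‖w‖ ^ 2 := by
      rw [hc]; field_simp
    have huz : ⟪u, z⟫ = a := by
      rw [hz, inner_add_right, real_inner_smul_right, huw, hup, ha, hcd]
    have hcc : c ^ 2 * ‖w‖ ^ 2 = d ^ 2 / ‖w‖ ^ 2 := by
      rw [hc, div_pow]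
      field_simp
    have hz2 : ‖z‖ ^ 2 = a := by
      have h1 : ‖z‖ ^ 2 = ‖p‖ ^ 2 + 2 * ⟪p, c • w⟫ + ‖c • w‖ ^ 2 := by
        rw [hz]; exact norm_add_sq_real p (c • w)
      have h2 : ⟪p, c • w⟫ = 0 := by
        rw [real_inner_smul_right, hpw, mul_zero]
      have h3 : ‖c • w‖ ^ 2 = c ^ 2 * ‖w‖ ^ 2 := by
        rw [norm_smul, mul_pow, Real.norm_eq_abs, sq_abs]
      rw [h1, h2, h3, hcc, ha]
      ring
    have ha0 : 0 ≤ a := by rw [ha]; positivity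
    have hq2a : a ≤ ‖q‖ ^ 2 := by
      have h := aux_inner_sq_le K' u z hzK'
      rw [huz, hz2] at h
      exact aux_le_of_sq_le_mul ha0 (sq_nonneg ‖q‖) h
    have hdd : d ^ 2 ≤ d ^ 2 / ‖w‖ ^ 2 := by
      rw [le_div_iff₀ hwn]
      nlinarith [sq_nonneg d]
    rw [ha] at hq2a
    linarith

private lemma aux_bddBelow (S : Finset (EuclideanSpace ℝ (Fin m))) :
    BddBelow {r : ℝ | ∃ α : S → ℝ, ∑ v, (α v) ^ 2 = 1 ∧
      r = ‖∑ v, α v • (v : EuclideanSpace ℝ (Fin m))‖ ^ 2} := by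
  refine ⟨0, fun r hr => ?_⟩
  obtain ⟨α, -, hr⟩ := hr
  rw [hr]; positivity

private lemma aux_sigmaMin_nonneg (S : Finset (EuclideanSpace ℝ (Fin m)))
    (hS : S.Nonempty) : 0 ≤ sigmaMin S := by
  obtain ⟨v₀, hv₀⟩ := hS
  apply le_csInf
  · refine ⟨‖∑ v : S, (if v = (⟨v₀, hv₀⟩ : S) then (1:ℝ) else 0) •
        (v : EuclideanSpace ℝ (Fin m))‖ ^ 2,
      fun v => if v = (⟨v₀, hv₀⟩ : S) then (1:ℝ) else 0, ?_, rfl⟩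
    simp [apply_ite (· ^ 2), Finset.sum_ite_eq']
  · rintro r ⟨α, -, hr⟩
    rw [hr]; positivity

private lemma aux_sigmaMin_mul_le (S : Finset (EuclideanSpace ℝ (Fin m)))
    (hS : S.Nonempty) (x : EuclideanSpace ℝ (Fin m))
    (hx : x ∈ Submodule.span ℝ (S : Set (EuclideanSpace ℝ (Fin m)))) :
    sigmaMin S * ‖x‖ ^ 2 ≤ ∑ v ∈ S, ⟪x, v⟫ ^ 2 := by
  have hσ0 : 0 ≤ sigmaMin S := aux_sigmaMin_nonneg S hS
  by_cases hx0 : x = 0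
  · simp [hx0]
  obtain ⟨f, -, hf⟩ := Submodule.mem_span_finset.1 hx
  set s : ℝ := ∑ v ∈ S, (f v) ^ 2 with hs
  have hs0 : 0 < s := by
    rcases (Finset.sum_nonneg (fun v _ => sq_nonneg (f v))).eq_or_lt with h | h
    · exfalso
      apply hx0
      rw [← hf]
      apply Finset.sum_eq_zero
      intro v hv
      have h2 : f v ^ 2 = 0 :=
        (Finset.sum_eq_zero_iff_of_nonneg (fun v _ => sq_nonneg (f v))).1 h.symm v hv
      have : f v = 0 := by nlinarith [sq_nonneg (f v)]
      rw [this, zero_smul]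
    · exact h
  have hxx : ‖x‖ ^ 2 = ∑ v ∈ S, f v * ⟪x, v⟫ := by
    rw [← real_inner_self_eq_norm_sq]
    nth_rewrite 2 [← hf]
    rw [inner_sum]
    apply Finset.sum_congr rfl
    intro v hv
    rw [real_inner_smul_right]
  have hCS : (‖x‖ ^ 2) ^ 2 ≤ s * ∑ v ∈ S, ⟪x, v⟫ ^ 2 := by
    rw [hxx]
    exact Finset.sum_mul_sq_le_sq_mul_sq S f (fun v => ⟪x, v⟫)
  have hmin : sigmaMin S * s ≤ ‖x‖ ^ 2 := by
    have hsqrt : 0 < Real.sqrt s := Real.sqrt_pos.2 hs0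
    have hsq : Real.sqrt s ^ 2 = s := Real.sq_sqrt hs0.le
    have h1 : ∑ v : S, (f v / Real.sqrt s) ^ 2 = 1 := by
      rw [Finset.sum_coe_sort S (fun v => (f v / Real.sqrt s) ^ 2)]
      have h1' : ∑ v ∈ S, (f v / Real.sqrt s) ^ 2 = (∑ v ∈ S, (f v) ^ 2) / s := by
        rw [Finset.sum_div]
        exact Finset.sum_congr rfl (fun v hv => by rw [div_pow, hsq])
      rw [h1', ← hs, div_self (ne_of_gt hs0)]
    have h2 : ∑ v : S, (f v / Real.sqrt s) • (v : EuclideanSpace ℝ (Fin m))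
        = (Real.sqrt s)⁻¹ • x := by
      rw [Finset.sum_coe_sort S
        (fun v => (f v / Real.sqrt s) • (v : EuclideanSpace ℝ (Fin m)))]
      rw [← hf, Finset.smul_sum]
      exact Finset.sum_congr rfl (fun v hv => by rw [smul_smul, div_eq_inv_mul])
    have h3 : sigmaMin S ≤ ‖(Real.sqrt s)⁻¹ • x‖ ^ 2 := by
      apply csInf_le (aux_bddBelow S)
      exact ⟨fun v => f v / Real.sqrt s, h1, by rw [h2]⟩
    have h4 : ‖(Real.sqrt s)⁻¹ • x‖ ^ 2 = ‖x‖ ^ 2 / s := by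
      rw [norm_smul, mul_pow, Real.norm_eq_abs, sq_abs, ← hsq]
      field_simp
      rw [Real.sqrt_sq hsqrt.le]
    rw [h4] at h3
    calc sigmaMin S * s ≤ (‖x‖ ^ 2 / s) * s := mul_le_mul_of_nonneg_right h3 hs0.le
      _ = ‖x‖ ^ 2 := by field_simp
  have hkey : s * (sigmaMin S * ‖x‖ ^ 2) ≤ s * ∑ v ∈ S, ⟪x, v⟫ ^ 2 := by
    have h5 := mul_le_mul_of_nonneg_right hmin (sq_nonneg ‖x‖)
    calc s * (sigmaMin S * ‖x‖ ^ 2) = (sigmaMin S * s) * ‖x‖ ^ 2 := by ring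
      _ ≤ ‖x‖ ^ 2 * ‖x‖ ^ 2 := h5
      _ = (‖x‖ ^ 2) ^ 2 := by ring
      _ ≤ s * ∑ v ∈ S, ⟪x, v⟫ ^ 2 := hCS
  exact le_of_mul_le_mul_left hkey hs0

end Aux

/-- Key lemma: some element of S gives large marginal gain (matrix version). -/
theorem exists_large_marginal_gain {m n : ℕ}
    (A : Fin n → EuclideanSpace ℝ (Fin m))
    (S T : Finset (EuclideanSpace ℝ (Fin m)))
    (hSne : S.Nonempty) (hSunit : ∀ v ∈ S, ‖v‖ = 1)
    (hST : fMat A T ≤ fMat A S) (hS0 : 0 < fMat A S) :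
    ∃ v ∈ S, sigmaMin S * (fMat A S - fMat A T) ^ 2 / (4 * S.card * fMat A S) ≤
      fMat A (insert v T) - fMat A T := by
  classical
  set KS : Submodule ℝ (EuclideanSpace ℝ (Fin m)) :=
    Submodule.span ℝ (S : Set (EuclideanSpace ℝ (Fin m))) with hKS
  set KT : Submodule ℝ (EuclideanSpace ℝ (Fin m)) :=
    Submodule.span ℝ (T : Set (EuclideanSpace ℝ (Fin m))) with hKT
  set r : Fin n → EuclideanSpace ℝ (Fin m) :=
    fun j => A j - (Submodule.orthogonalProjectionOnto KT (A j) : EuclideanSpace ℝ (Fin m)) with hr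
  set q : Fin n → EuclideanSpace ℝ (Fin m) :=
    fun j => (Submodule.orthogonalProjectionOnto KS (r j) : EuclideanSpace ℝ (Fin m)) with hqdef
  have hσ0 : 0 ≤ sigmaMin S := aux_sigmaMin_nonneg S hSne
  -- Step 1: pointwise gain bound
  have step1 : ∀ v ∈ S, ∑ j, ⟪r j, v⟫ ^ 2 ≤ fMat A (insert v T) - fMat A T := by
    intro v hv
    have hv1 : ‖v‖ ≤ 1 := le_of_eq (hSunit v hv)
    have h := Finset.sum_le_sum
      (fun j (_ : j ∈ (Finset.univ : Finset (Fin n))) =>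
        aux_fVec_insert_ge (A j) v T hv1)
    rw [Finset.sum_add_distrib] at h
    have e1 : fMat A T = ∑ j, fVec (A j) T := rfl
    have e2 : fMat A (insert v T) = ∑ j, fVec (A j) (insert v T) := rfl
    rw [e1, e2]
    linarith [h]
  set a : Fin n → ℝ := fun j => ‖(Submodule.orthogonalProjectionOnto KS (A j) : EuclideanSpace ℝ (Fin m))‖
    with hadef
  set b : Fin n → ℝ := fun j => ‖(Submodule.orthogonalProjectionOnto KT (A j) : EuclideanSpace ℝ (Fin m))‖
    with hbdef
  set c : Fin n → ℝ := fun j => ‖q j‖ with hcdef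
  have hfS : fMat A S = ∑ j, (a j) ^ 2 := rfl
  have hfT : fMat A T = ∑ j, (b j) ^ 2 := rfl
  have hc0 : 0 ≤ ∑ j, (c j) ^ 2 := Finset.sum_nonneg (fun j _ => sq_nonneg _)
  have hST' : ∑ j, (b j) ^ 2 ≤ ∑ j, (a j) ^ 2 := by rw [← hfS, ← hfT]; exact hST
  have hS0' : 0 < ∑ j, (a j) ^ 2 := by rw [← hfS]; exact hS0
  -- a j ≤ b j + c j
  have hamb : ∀ j, a j ≤ b j + c j := by
    intro j
    have hproj : (Submodule.orthogonalProjectionOnto KS (A j) : EuclideanSpace ℝ (Fin m)) =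
        (Submodule.orthogonalProjectionOnto KS ((Submodule.orthogonalProjectionOnto KT (A j) :
          EuclideanSpace ℝ (Fin m))) : EuclideanSpace ℝ (Fin m)) + q j := by
      have hsplit : A j = (Submodule.orthogonalProjectionOnto KT (A j) : EuclideanSpace ℝ (Fin m)) + r j :=
        (add_sub_cancel _ _).symm
      rw [hqdef]
      simp only
      conv_lhs => rw [hsplit]
      rw [map_add]
      push_cast
      rfl
    calc a j = ‖(Submodule.orthogonalProjectionOnto KS
          ((Submodule.orthogonalProjectionOnto KT (A j) : EuclideanSpace ℝ (Fin m))) :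
            EuclideanSpace ℝ (Fin m)) + q j‖ := by rw [hadef]; simp only; rw [hproj]
      _ ≤ ‖(Submodule.orthogonalProjectionOnto KS
          ((Submodule.orthogonalProjectionOnto KT (A j) : EuclideanSpace ℝ (Fin m))) :
            EuclideanSpace ℝ (Fin m))‖ + ‖q j‖ := norm_add_le _ _
      _ ≤ b j + c j :=
          add_le_add (aux_norm_proj_le KS
            ((Submodule.orthogonalProjectionOnto KT (A j) : EuclideanSpace ℝ (Fin m)))) le_rfl
  -- Step 2
  have step2 : (∑ j, (a j) ^ 2 - ∑ j, (b j) ^ 2) ^ 2 ≤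
      4 * (∑ j, (a j) ^ 2) * ∑ j, (c j) ^ 2 := by
    have h1 : ∑ j, (a j) ^ 2 - ∑ j, (b j) ^ 2 ≤ ∑ j, (a j + b j) * c j := by
      have hterm : ∀ j ∈ (Finset.univ : Finset (Fin n)),
          (a j) ^ 2 - (b j) ^ 2 ≤ (a j + b j) * c j := by
        intro j _
        have := hamb j
        have h0a : 0 ≤ a j := norm_nonneg _
        have h0b : 0 ≤ b j := norm_nonneg _
        have h0c : 0 ≤ c j := norm_nonneg _
        nlinarith
      have hsum := Finset.sum_le_sum hterm
      rw [Finset.sum_sub_distrib] at hsum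
      linarith
    have h2 : (∑ j, (a j + b j) * c j) ^ 2 ≤
        (∑ j, (a j + b j) ^ 2) * ∑ j, (c j) ^ 2 :=
      Finset.sum_mul_sq_le_sq_mul_sq _ _ _
    have h3 : ∑ j, (a j + b j) ^ 2 ≤ 4 * ∑ j, (a j) ^ 2 := by
      have hterm : ∀ j ∈ (Finset.univ : Finset (Fin n)),
          (a j + b j) ^ 2 ≤ 2 * (a j) ^ 2 + 2 * (b j) ^ 2 := by
        intro j _
        nlinarith [sq_nonneg (a j - b j)]
      have h4 := Finset.sum_le_sum hterm
      rw [Finset.sum_add_distrib, ← Finset.mul_sum, ← Finset.mul_sum] at h4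
      linarith
    have hnn : 0 ≤ ∑ j, (a j + b j) * c j := by linarith
    have h5 : (∑ j, (a j) ^ 2 - ∑ j, (b j) ^ 2) ^ 2 ≤ (∑ j, (a j + b j) * c j) ^ 2 := by
      nlinarith
    calc (∑ j, (a j) ^ 2 - ∑ j, (b j) ^ 2) ^ 2 ≤ (∑ j, (a j + b j) * c j) ^ 2 := h5
      _ ≤ (∑ j, (a j + b j) ^ 2) * ∑ j, (c j) ^ 2 := h2
      _ ≤ 4 * (∑ j, (a j) ^ 2) * ∑ j, (c j) ^ 2 := mul_le_mul_of_nonneg_right h3 hc0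
  -- Step 3
  have step3 : sigmaMin S * ∑ j, (c j) ^ 2 ≤ ∑ v ∈ S, ∑ j, ⟪r j, v⟫ ^ 2 := by
    have hper : ∀ j, sigmaMin S * (c j) ^ 2 ≤ ∑ v ∈ S, ⟪r j, v⟫ ^ 2 := by
      intro j
      have hqmem : q j ∈ KS := SetLike.coe_mem _
      have h := aux_sigmaMin_mul_le S hSne (q j) hqmem
      calc sigmaMin S * (c j) ^ 2 ≤ ∑ v ∈ S, ⟪q j, v⟫ ^ 2 := h
        _ = ∑ v ∈ S, ⟪r j, v⟫ ^ 2 := by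
            apply Finset.sum_congr rfl
            intro v hv
            congr 1
            exact (aux_inner_proj KS (r j) v (Submodule.subset_span hv)).symm
    calc sigmaMin S * ∑ j, (c j) ^ 2 = ∑ j, sigmaMin S * (c j) ^ 2 := Finset.mul_sum _ _ _
      _ ≤ ∑ j, ∑ v ∈ S, ⟪r j, v⟫ ^ 2 := Finset.sum_le_sum (fun j _ => hper j)
      _ = ∑ v ∈ S, ∑ j, ⟪r j, v⟫ ^ 2 := Finset.sum_comm
  -- combine
  have hcard : 0 < (S.card : ℝ) := by
    exact_mod_cast Finset.card_pos.2 hSne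
  set F : ℝ := ∑ j, (a j) ^ 2 with hF
  set G : ℝ := ∑ v ∈ S, (fMat A (insert v T) - fMat A T) with hG
  have hkey : sigmaMin S * (F - ∑ j, (b j) ^ 2) ^ 2 ≤ 4 * F * G := by
    have h5 : ∑ v ∈ S, ∑ j, ⟪r j, v⟫ ^ 2 ≤ G := by
      rw [hG]; exact Finset.sum_le_sum step1
    have h6 := mul_le_mul_of_nonneg_left step2 hσ0
    have h8 : 4 * F * (sigmaMin S * ∑ j, (c j) ^ 2) ≤ 4 * F * G := by
      apply mul_le_mul_of_nonneg_left (le_trans step3 h5)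
      linarith
    nlinarith [h6, h8]
  have hsum : ∑ v ∈ S, (sigmaMin S * (fMat A S - fMat A T) ^ 2 /
      (4 * S.card * fMat A S)) ≤ G := by
    rw [Finset.sum_const, nsmul_eq_mul]
    have hEq : (S.card : ℝ) * (sigmaMin S * (fMat A S - fMat A T) ^ 2 /
        (4 * S.card * fMat A S)) = sigmaMin S * (fMat A S - fMat A T) ^ 2 /
        (4 * fMat A S) := by
      rw [show (4 : ℝ) * S.card * fMat A S = (4 * fMat A S) * S.card by ring, ← div_div]
      rw [mul_comm]
      exact div_mul_cancel₀ _ (ne_of_gt hcard)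
    rw [hEq, div_le_iff₀ (by rw [hfS]; linarith : (0:ℝ) < 4 * fMat A S)]
    calc sigmaMin S * (fMat A S - fMat A T) ^ 2
        = sigmaMin S * (F - ∑ j, (b j) ^ 2) ^ 2 := by rw [hfS, hfT]
      _ ≤ 4 * F * G := hkey
      _ = G * (4 * fMat A S) := by rw [hfS]; ring
  rw [hG] at hsum
  obtain ⟨v, hv, hle⟩ := Finset.exists_le_of_sum_le hSne hsum
  exact ⟨v, hv, hle⟩
end

section
/- Let u ∈ ℝ^m, let S = {v_1, …, v_k} be a finite set of unit vectors in ℝ^m, and let T be a finite set of vectors in ℝ^m with f_u(S) ≥ f_u(T) and f_u(S) > 0. Then Σ_{i=1}^k ( f_u(T ∪ {v_i}) − f_u(T) ) ≥ σ_min(S)·(f_u(S) − f_u(T))² / (4·f_u(S)). -/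
open scoped RealInnerProductSpace

attribute [local instance] Classical.decEq

lemma proj_congr {m : ℕ} (u : EuclideanSpace ℝ (Fin m))
    {K K' : Submodule ℝ (EuclideanSpace ℝ (Fin m))} (h : K = K') :
    (Submodule.orthogonalProjectionOnto K u : EuclideanSpace ℝ (Fin m)) = Submodule.orthogonalProjectionOnto K' u := by
  subst h; rfl

lemma gain_lower {m : ℕ} (u v : EuclideanSpace ℝ (Fin m))
    (T : Finset (EuclideanSpace ℝ (Fin m))) (hv : ‖v‖ ≤ 1) :
    fVec u T + (⟪u - (Submodule.orthogonalProjectionOnto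
        (Submodule.span ℝ (T : Set (EuclideanSpace ℝ (Fin m)))) u :
        EuclideanSpace ℝ (Fin m)), v⟫) ^ 2 ≤ fVec u (insert v T) := by
  set K : Submodule ℝ (EuclideanSpace ℝ (Fin m)) := Submodule.span ℝ (T : Set (EuclideanSpace ℝ (Fin m))) with hK
  set K' : Submodule ℝ (EuclideanSpace ℝ (Fin m)) := Submodule.span ℝ ((insert v T : Finset (EuclideanSpace ℝ (Fin m))) : Set (EuclideanSpace ℝ (Fin m))) with hK'
  have hKK' : K ≤ K' := Submodule.span_mono (by simp [Set.subset_insert])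
  set p : EuclideanSpace ℝ (Fin m) := (Submodule.orthogonalProjectionOnto K u : EuclideanSpace ℝ (Fin m)) with hp
  set p' : EuclideanSpace ℝ (Fin m) := (Submodule.orthogonalProjectionOnto K' u : EuclideanSpace ℝ (Fin m)) with hp'
  have hvK' : v ∈ K' := Submodule.subset_span (by simp)
  have hpK : p ∈ K := Submodule.coe_mem _
  have hup : u - p ∈ Kᗮ := Submodule.sub_starProjection_mem_orthogonal u
  set w₀ : EuclideanSpace ℝ (Fin m) := v - (Submodule.orthogonalProjectionOnto K v : EuclideanSpace ℝ (Fin m)) with hw₀def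
  have hw₀ : w₀ ∈ Kᗮ := Submodule.sub_starProjection_mem_orthogonal v
  by_cases hw : w₀ = 0
  · have hvK : v ∈ K := by
      have h2 : v = (Submodule.orthogonalProjectionOnto K v : EuclideanSpace ℝ (Fin m)) := sub_eq_zero.mp hw
      rw [h2]; exact Submodule.coe_mem _
    have hKeq : K' = K := le_antisymm (Submodule.span_le.2 (by
      simp only [Finset.coe_insert, Set.insert_subset_iff]
      exact ⟨hvK, Submodule.subset_span⟩)) hKK'
    have hinner : ⟪u - p, v⟫ = 0 :=
      Submodule.inner_left_of_mem_orthogonal hvK hup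
    have heq : fVec u (insert v T) = fVec u T := by
      simp only [fVec]
      rw [proj_congr u (show Submodule.span ℝ ((insert v T : Finset (EuclideanSpace ℝ (Fin m))) : Set (EuclideanSpace ℝ (Fin m))) = Submodule.span ℝ (T : Set (EuclideanSpace ℝ (Fin m))) from hKeq)]
    rw [heq, hinner]
    norm_num
  · have hw₀pos : (0:ℝ) < ‖w₀‖ := norm_pos_iff.mpr hw
    have hw₀norm : ‖w₀‖ ≤ 1 := by
      refine le_trans ?_ hv
      have hsq : ‖w₀‖ ^ 2 = ⟪w₀, v⟫ := by
        have hz : ⟪w₀, (Submodule.orthogonalProjectionOnto K v : EuclideanSpace ℝ (Fin m))⟫ = 0 :=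
          Submodule.inner_left_of_mem_orthogonal (Submodule.coe_mem _) hw₀
        have hsub : ⟪w₀, v - (Submodule.orthogonalProjectionOnto K v : EuclideanSpace ℝ (Fin m))⟫ = ⟪w₀, v⟫ := by
          rw [inner_sub_right, hz, sub_zero]
        rw [← real_inner_self_eq_norm_sq, ← hsub, ← hw₀def]
      have hcs : ⟪w₀, v⟫ ≤ ‖w₀‖ * ‖v‖ := real_inner_le_norm w₀ v
      nlinarith
    set e : EuclideanSpace ℝ (Fin m) := ‖w₀‖⁻¹ • w₀ with he_def
    have he : ‖e‖ = 1 := by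
      rw [he_def, norm_smul, norm_inv, norm_norm, inv_mul_cancel₀ (ne_of_gt hw₀pos)]
    have heK' : e ∈ K' :=
      Submodule.smul_mem _ _ (Submodule.sub_mem _ hvK' (hKK' (Submodule.coe_mem _)))
    have heKperp : e ∈ Kᗮ := Submodule.smul_mem _ _ hw₀
    have hPp' : (Submodule.orthogonalProjectionOnto K p' : EuclideanSpace ℝ (Fin m)) = p := by
      rw [hp', hp]
      exact congrArg _ (Submodule.orthogonalProjectionOnto_starProjection_of_le hKK' u)
    have horth : ⟪p, p' - p⟫ = 0 := by
      have hmem : p' - p ∈ Kᗮ := by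
        have : p' - (Submodule.orthogonalProjectionOnto K p' : EuclideanSpace ℝ (Fin m)) ∈ Kᗮ :=
          Submodule.sub_starProjection_mem_orthogonal (K := K) p'
        rwa [hPp'] at this
      exact Submodule.inner_right_of_mem_orthogonal hpK hmem
    have hpyth0 : ‖p + (p' - p)‖ ^ 2 = ‖p‖ ^ 2 + ‖p' - p‖ ^ 2 := by
      rw [norm_add_sq_real, horth]; ring
    have hpyth : ‖p'‖ ^ 2 = ‖p‖ ^ 2 + ‖p' - p‖ ^ 2 := by
      rw [show p + (p' - p) = p' by abel] at hpyth0; exact hpyth0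
    have h1 : (⟪p' - p, e⟫) ^ 2 ≤ ‖p' - p‖ ^ 2 := by
      have habs := abs_real_inner_le_norm (p' - p) e
      rw [he, mul_one] at habs
      nlinarith [abs_nonneg (⟪p' - p, e⟫), sq_abs (⟪p' - p, e⟫), norm_nonneg (p' - p)]
    have h2 : ⟪p' - p, e⟫ = ⟪u - p, e⟫ := by
      have ha : ⟪u - p', e⟫ = 0 :=
        Submodule.inner_left_of_mem_orthogonal heK'
          (Submodule.sub_starProjection_mem_orthogonal (K := K') u)
      simp only [inner_sub_left] at ha ⊢
      linarith
    have h3 : ⟪u - p, e⟫ = ‖w₀‖⁻¹ * ⟪u - p, v⟫ := by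
      have hz : ⟪u - p, (Submodule.orthogonalProjectionOnto K v : EuclideanSpace ℝ (Fin m))⟫ = 0 :=
        Submodule.inner_left_of_mem_orthogonal (Submodule.coe_mem _) hup
      rw [he_def, real_inner_smul_right, hw₀def, inner_sub_right, hz, sub_zero]
    have key : (⟪u - p, v⟫) ^ 2 ≤ ‖p' - p‖ ^ 2 := by
      have e1 : ⟪u - p, v⟫ = ‖w₀‖ * ⟪p' - p, e⟫ := by
        rw [h2, h3]
        field_simp
      rw [e1]
      have hsq : (‖w₀‖ * ⟪p' - p, e⟫) ^ 2 = ‖w₀‖ ^ 2 * (⟪p' - p, e⟫) ^ 2 := by ring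
      rw [hsq]
      have hw2 : ‖w₀‖ ^ 2 ≤ 1 := by nlinarith
      calc ‖w₀‖ ^ 2 * (⟪p' - p, e⟫) ^ 2 ≤ 1 * (⟪p' - p, e⟫) ^ 2 :=
            mul_le_mul_of_nonneg_right hw2 (sq_nonneg _)
        _ = (⟪p' - p, e⟫) ^ 2 := one_mul _
        _ ≤ ‖p' - p‖ ^ 2 := h1
    have hg1 : fVec u T = ‖p‖ ^ 2 := rfl
    have hg2 : fVec u (insert v T) = ‖p'‖ ^ 2 := rfl
    rw [hg1, hg2, hpyth]
    have : (⟪u - p, v⟫) ^ 2 ≤ ‖p' - p‖ ^ 2 := key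
    linarith

lemma sigmaMin_nonneg {m : ℕ} (S : Finset (EuclideanSpace ℝ (Fin m))) : 0 ≤ sigmaMin S :=
  Real.sInf_nonneg (by rintro r ⟨α, -, rfl⟩; positivity)

lemma sigma_bound {m : ℕ} (S : Finset (EuclideanSpace ℝ (Fin m)))
    (w : EuclideanSpace ℝ (Fin m))
    (hw : w ∈ Submodule.span ℝ (S : Set (EuclideanSpace ℝ (Fin m)))) :
    sigmaMin S * ‖w‖ ^ 2 ≤ ∑ v ∈ S, (⟪w, v⟫) ^ 2 := by
  obtain ⟨β, -, hβ⟩ := Submodule.mem_span_finset.mp hw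
  set B := ∑ v ∈ S, β v ^ 2 with hB
  have hBnn : 0 ≤ B := Finset.sum_nonneg fun _ _ => sq_nonneg _
  have hQnn : 0 ≤ ∑ v ∈ S, (⟪w, v⟫) ^ 2 := Finset.sum_nonneg fun _ _ => sq_nonneg _
  by_cases hB0 : B = 0
  · have hw0 : w = 0 := by
      rw [← hβ]
      refine Finset.sum_eq_zero fun v hv => ?_
      have hall := (Finset.sum_eq_zero_iff_of_nonneg
        (fun i _ => sq_nonneg (β i))).mp hB0
      have : β v = 0 := by
        have := hall v hv
        exact pow_eq_zero_iff (n := 2) (by norm_num) |>.mp this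
      rw [this, zero_smul]
    rw [hw0]
    simpa using hQnn
  · have hBpos : 0 < B := lt_of_le_of_ne hBnn (Ne.symm hB0)
    have hsqrtpos : 0 < Real.sqrt B := Real.sqrt_pos.mpr hBpos
    have hcs : (‖w‖ ^ 2) ^ 2 ≤ B * ∑ v ∈ S, (⟪w, v⟫) ^ 2 := by
      have h1 : ‖w‖ ^ 2 = ∑ v ∈ S, β v * ⟪w, v⟫ := by
        calc ‖w‖ ^ 2 = ⟪w, w⟫ := (real_inner_self_eq_norm_sq w).symm
          _ = ⟪w, ∑ v ∈ S, β v • v⟫ := congrArg (fun x => (⟪w, x⟫ : ℝ)) hβ.symm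
          _ = ∑ v ∈ S, β v * ⟪w, v⟫ := by
              rw [inner_sum]
              exact Finset.sum_congr rfl fun v _ => real_inner_smul_right w v (β v)
      rw [h1]
      exact Finset.sum_mul_sq_le_sq_mul_sq S β (fun v => ⟪w, v⟫)
    have hmem : ‖w‖ ^ 2 / B ∈ {r : ℝ | ∃ α : S → ℝ, ∑ v, (α v) ^ 2 = 1 ∧
        r = ‖∑ v, α v • (v : EuclideanSpace ℝ (Fin m))‖ ^ 2} := by
      refine ⟨fun v => β v / Real.sqrt B, ?_, ?_⟩
      · rw [Finset.sum_coe_sort S (fun v => (β v / Real.sqrt B) ^ 2)]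
        simp only [div_pow, Real.sq_sqrt hBnn]
        rw [← Finset.sum_div, ← hB, div_self hB0]
      · have hsum : ∑ v : S, (β v / Real.sqrt B) • (v : EuclideanSpace ℝ (Fin m))
            = (Real.sqrt B)⁻¹ • w := by
          rw [Finset.sum_coe_sort S (fun v => (β v / Real.sqrt B) • (v : EuclideanSpace ℝ (Fin m)))]
          rw [← hβ, Finset.smul_sum]
          refine Finset.sum_congr rfl fun v hv => ?_
          rw [smul_smul, div_eq_inv_mul]
        rw [hsum, norm_smul, mul_pow, norm_inv, Real.norm_eq_abs,
          abs_of_pos hsqrtpos, ← Real.sqrt_inv, Real.sq_sqrt (inv_nonneg.mpr hBnn),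
          inv_mul_eq_div]
    have hbdd : BddBelow {r : ℝ | ∃ α : S → ℝ, ∑ v, (α v) ^ 2 = 1 ∧
        r = ‖∑ v, α v • (v : EuclideanSpace ℝ (Fin m))‖ ^ 2} := by
      refine ⟨0, ?_⟩
      rintro r ⟨α, -, rfl⟩; positivity
    have hle : sigmaMin S ≤ ‖w‖ ^ 2 / B := csInf_le hbdd hmem
    have hmul := mul_le_mul_of_nonneg_right hle (sq_nonneg ‖w‖)
    refine hmul.trans ?_
    rw [div_mul_eq_mul_div, div_le_iff₀ hBpos]
    calc ‖w‖ ^ 2 * ‖w‖ ^ 2 = (‖w‖ ^ 2) ^ 2 := by ring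
      _ ≤ B * ∑ v ∈ S, (⟪w, v⟫) ^ 2 := hcs
      _ = (∑ v ∈ S, (⟪w, v⟫) ^ 2) * B := mul_comm _ _

/-- Single-vector version of the large marginal gain lemma. -/
theorem sum_marginal_gain_single_vector {m : ℕ}
    (u : EuclideanSpace ℝ (Fin m))
    (S T : Finset (EuclideanSpace ℝ (Fin m)))
    (hSunit : ∀ v ∈ S, ‖v‖ = 1)
    (hST : fVec u T ≤ fVec u S) (hS0 : 0 < fVec u S) :
    sigmaMin S * (fVec u S - fVec u T) ^ 2 / (4 * fVec u S) ≤
      ∑ v ∈ S, (fVec u (insert v T) - fVec u T) := by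
  set KS : Submodule ℝ (EuclideanSpace ℝ (Fin m)) :=
    Submodule.span ℝ (S : Set (EuclideanSpace ℝ (Fin m))) with hKS
  set KT : Submodule ℝ (EuclideanSpace ℝ (Fin m)) :=
    Submodule.span ℝ (T : Set (EuclideanSpace ℝ (Fin m))) with hKT
  set pS : EuclideanSpace ℝ (Fin m) := (Submodule.orthogonalProjectionOnto KS u : EuclideanSpace ℝ (Fin m))
  set pT : EuclideanSpace ℝ (Fin m) := (Submodule.orthogonalProjectionOnto KT u : EuclideanSpace ℝ (Fin m))
  set u' : EuclideanSpace ℝ (Fin m) := u - pT with hu'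
  set w : EuclideanSpace ℝ (Fin m) := (Submodule.orthogonalProjectionOnto KS u' : EuclideanSpace ℝ (Fin m))
    with hwdef
  -- step 1: sum of gains dominates sum of squared inner products
  have step1 : ∑ v ∈ S, (⟪u', v⟫) ^ 2 ≤ ∑ v ∈ S, (fVec u (insert v T) - fVec u T) := by
    refine Finset.sum_le_sum fun v hv => ?_
    have := gain_lower u v T (le_of_eq (hSunit v hv))
    linarith
  -- step 2: inner products with u' equal inner products with w, for v ∈ S
  have step2 : ∀ v ∈ S, ⟪w, v⟫ = ⟪u', v⟫ := by
    intro v hv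
    have hvS : v ∈ KS := Submodule.subset_span hv
    have horth : u' - w ∈ KSᗮ := Submodule.sub_starProjection_mem_orthogonal u'
    have := Submodule.inner_left_of_mem_orthogonal hvS horth
    rw [inner_sub_left] at this
    linarith
  have step2' : ∑ v ∈ S, (⟪w, v⟫) ^ 2 = ∑ v ∈ S, (⟪u', v⟫) ^ 2 :=
    Finset.sum_congr rfl fun v hv => by rw [step2 v hv]
  -- step 3: sigma bound
  have step3 : sigmaMin S * ‖w‖ ^ 2 ≤ ∑ v ∈ S, (⟪w, v⟫) ^ 2 :=
    sigma_bound S w (Submodule.coe_mem _)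
  -- step 4: norm lower bound on w
  set a : ℝ := ‖pS‖ with ha
  set b : ℝ := ‖pT‖ with hb
  set c : ℝ := ‖w‖ with hc
  have hfS : fVec u S = a ^ 2 := rfl
  have hfT : fVec u T = b ^ 2 := rfl
  have hwsplit : w = pS - (Submodule.orthogonalProjectionOnto KS pT : EuclideanSpace ℝ (Fin m)) := by
    rw [hwdef, hu', map_sub]
    rfl
  have hprojle : ‖(Submodule.orthogonalProjectionOnto KS pT : EuclideanSpace ℝ (Fin m))‖ ≤ b := by
    have h1 := (Submodule.orthogonalProjectionOnto KS).le_opNorm pT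
    have h2 := Submodule.orthogonalProjectionOnto_norm_le KS
    have h3 : ‖(Submodule.orthogonalProjectionOnto KS pT : EuclideanSpace ℝ (Fin m))‖
        = ‖Submodule.orthogonalProjectionOnto KS pT‖ := rfl
    rw [h3]
    calc ‖Submodule.orthogonalProjectionOnto KS pT‖ ≤ ‖Submodule.orthogonalProjectionOnto KS‖ * ‖pT‖ := h1
      _ ≤ 1 * ‖pT‖ := mul_le_mul_of_nonneg_right h2 (norm_nonneg _)
      _ = b := one_mul _
  have htri : a ≤ c + b := by
    calc a = ‖w + (Submodule.orthogonalProjectionOnto KS pT : EuclideanSpace ℝ (Fin m))‖ := by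
          rw [hwsplit, sub_add_cancel]
      _ ≤ c + ‖(Submodule.orthogonalProjectionOnto KS pT : EuclideanSpace ℝ (Fin m))‖ := norm_add_le _ _
      _ ≤ c + b := by linarith
  have haN : (0:ℝ) ≤ a := norm_nonneg _
  have hb0 : (0:ℝ) ≤ b := norm_nonneg _
  have hc0 : (0:ℝ) ≤ c := norm_nonneg _
  clear hwdef hwsplit hprojle hu' hKS hKT ha hb hc
  clear_value a b c w u' pS pT KS KT
  -- arithmetic
  have ha0 : 0 < a := by
    rw [hfS] at hS0
    nlinarith
  have hba : b ≤ a := by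
    rw [hfS, hfT] at hST
    nlinarith
  have hσ : 0 ≤ sigmaMin S := sigmaMin_nonneg S
  have hfinal : sigmaMin S * (fVec u S - fVec u T) ^ 2 / (4 * fVec u S)
      ≤ sigmaMin S * c ^ 2 := by
    rw [hfS, hfT, div_le_iff₀ (by positivity)]
    have h1 : (a - b) ^ 2 ≤ c ^ 2 := by nlinarith
    have h2 : (a + b) ^ 2 ≤ 4 * a ^ 2 := by nlinarith
    have h3 : (a ^ 2 - b ^ 2) ^ 2 = (a - b) ^ 2 * (a + b) ^ 2 := by ring
    have h4 : (a - b) ^ 2 * (a + b) ^ 2 ≤ c ^ 2 * (4 * a ^ 2) :=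
      mul_le_mul h1 h2 (sq_nonneg _) (sq_nonneg _)
    calc sigmaMin S * (a ^ 2 - b ^ 2) ^ 2 = sigmaMin S * ((a - b) ^ 2 * (a + b) ^ 2) := by
          rw [h3]
      _ ≤ sigmaMin S * (c ^ 2 * (4 * a ^ 2)) := mul_le_mul_of_nonneg_left h4 hσ
      _ = sigmaMin S * c ^ 2 * (4 * a ^ 2) := by ring
  calc sigmaMin S * (fVec u S - fVec u T) ^ 2 / (4 * fVec u S)
      ≤ sigmaMin S * c ^ 2 := hfinal
    _ ≤ ∑ v ∈ S, (⟪w, v⟫) ^ 2 := step3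
    _ = ∑ v ∈ S, (⟪u', v⟫) ^ 2 := step2'
    _ ≤ ∑ v ∈ S, (fVec u (insert v T) - fVec u T) := step1
end

section
/- Let A ∈ ℝ^{m×n}, let S be a finite set of unit vectors in ℝ^m with σ_min(S) > 0 and f_A(S) > 0, and let T be any finite set of vectors in ℝ^m. Then Σ_{v∈S} ( f_A(T ∪ {v}) − f_A(T) ) ≥ σ_min(S)·( Σ_{j=1}^n max{0, f_{A_j}(S) − f_{A_j}(T)} )² / (4·f_A(S)); in particular Σ_{v∈S} ( f_A(T ∪ {v}) − f_A(T) ) ≥ σ_min(S)·( max{0, f_A(S) − f_A(T)} )² / (4·f_A(S)). -/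
open scoped RealInnerProductSpace

attribute [local instance] Classical.decEq

section Aux

variable {m : ℕ}
local notation "E" => EuclideanSpace ℝ (Fin m)

lemma proj_pyth (K : Submodule ℝ E) (u : E) :
    ‖u‖ ^ 2 = ‖(Submodule.orthogonalProjectionOnto K u : E)‖ ^ 2 + ‖u - Submodule.orthogonalProjectionOnto K u‖ ^ 2 := by
  have h := Submodule.sub_starProjection_mem_orthogonal (K := K) u
  have hz : ⟪(Submodule.orthogonalProjectionOnto K u : E), u - Submodule.orthogonalProjectionOnto K u⟫ = 0 :=
    Submodule.inner_right_of_mem_orthogonal (Submodule.orthogonalProjectionOnto K u).2 h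
  have := norm_add_sq_real (Submodule.orthogonalProjectionOnto K u : E) (u - Submodule.orthogonalProjectionOnto K u)
  simp only [add_sub_cancel] at this
  rw [this, hz]; ring

lemma proj_min (K : Submodule ℝ E) (u y : E) (hy : y ∈ K) :
    ‖u - Submodule.orthogonalProjectionOnto K u‖ ^ 2 ≤ ‖u - y‖ ^ 2 := by
  have h := Submodule.sub_starProjection_mem_orthogonal (K := K) u
  have hz : ⟪u - Submodule.orthogonalProjectionOnto K u, (Submodule.orthogonalProjectionOnto K u : E) - y⟫ = 0 := by
    rw [real_inner_comm]
    exact Submodule.inner_right_of_mem_orthogonal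
      (Submodule.sub_mem K (Submodule.orthogonalProjectionOnto K u).2 hy) h
  have hdecomp : u - y =
      (u - Submodule.orthogonalProjectionOnto K u) + ((Submodule.orthogonalProjectionOnto K u : E) - y) := by abel
  rw [hdecomp, norm_add_sq_real, hz]
  nlinarith [sq_nonneg ‖(Submodule.orthogonalProjectionOnto K u : E) - y‖]

lemma gain_ge (u v : E) (T : Finset E) (hv : ‖v‖ = 1) :
    ⟪u - Submodule.orthogonalProjectionOnto (Submodule.span ℝ (T : Set E)) u, v⟫ ^ 2 ≤
      fVec u (insert v T) - fVec u T := by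
  set K := Submodule.span ℝ (T : Set E) with hK
  set K' := Submodule.span ℝ ((insert v T : Finset E) : Set E) with hK'
  have hKle : K ≤ K' := by
    apply Submodule.span_mono; rw [Finset.coe_insert]; exact Set.subset_insert _ _
  have hvK' : v ∈ K' := by
    apply Submodule.subset_span; rw [Finset.coe_insert]; exact Set.mem_insert _ _
  have hfu0 : fVec u T = ‖(Submodule.orthogonalProjectionOnto K u : E)‖ ^ 2 := rfl
  have hfi0 : fVec u (insert v T) = ‖(Submodule.orthogonalProjectionOnto K' u : E)‖ ^ 2 := rfl
  set r : E := u - Submodule.orthogonalProjectionOnto K u with hr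
  set w : E := v - Submodule.orthogonalProjectionOnto K v with hw
  have hrK : r ∈ Kᗮ := Submodule.sub_starProjection_mem_orthogonal u
  have hrw : ⟪r, w⟫ = ⟪r, v⟫ := by
    have : ⟪r, (Submodule.orthogonalProjectionOnto K v : E)⟫ = 0 := by
      rw [real_inner_comm]
      exact Submodule.inner_right_of_mem_orthogonal (Submodule.orthogonalProjectionOnto K v).2 hrK
    rw [hw, inner_sub_right, this, sub_zero]
  have hfu : fVec u T = ‖u‖ ^ 2 - ‖r‖ ^ 2 := by
    have h := proj_pyth K u; rw [← hr] at h; rw [hfu0]; linarith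
  have hfins : fVec u (insert v T) = ‖u‖ ^ 2 - ‖u - Submodule.orthogonalProjectionOnto K' u‖ ^ 2 := by
    have h := proj_pyth K' u; rw [hfi0]; linarith
  by_cases hw0 : w = 0
  · have hvK : v ∈ K := by
      have h1 : v = (Submodule.orthogonalProjectionOnto K v : E) := sub_eq_zero.mp hw0
      rw [h1]; exact (Submodule.orthogonalProjectionOnto K v).2
    have h0 : ⟪r, v⟫ = 0 := by
      rw [real_inner_comm]; exact Submodule.inner_right_of_mem_orthogonal hvK hrK
    have hmono := proj_min K' u (Submodule.orthogonalProjectionOnto K u : E)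
      (hKle (Submodule.orthogonalProjectionOnto K u).2)
    rw [← hr] at hmono
    rw [h0]; norm_num; linarith
  · have hwK' : w ∈ K' := Submodule.sub_mem K' hvK' (hKle (Submodule.orthogonalProjectionOnto K v).2)
    have hwpos : (0:ℝ) < ‖w‖ ^ 2 := pow_pos (norm_pos_iff.mpr hw0) 2
    have hwle : ‖w‖ ^ 2 ≤ 1 := by
      have h := proj_pyth K v; rw [← hw] at h
      have h2 : ‖(Submodule.orthogonalProjectionOnto K v : E)‖ ^ 2 ≥ 0 := by positivity
      rw [hv] at h; nlinarith
    set c : ℝ := ⟪r, w⟫ / ‖w‖ ^ 2 with hc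
    set y : E := (Submodule.orthogonalProjectionOnto K u : E) + c • w with hy
    have hyK' : y ∈ K' := Submodule.add_mem K' (hKle (Submodule.orthogonalProjectionOnto K u).2)
      (Submodule.smul_mem K' c hwK')
    have huy : ‖u - y‖ ^ 2 = ‖r‖ ^ 2 - ⟪r, w⟫ ^ 2 / ‖w‖ ^ 2 := by
      have hdec : u - y = r - c • w := by rw [hy, hr]; abel
      rw [hdec, norm_sub_sq_real, inner_smul_right, norm_smul, mul_pow, hc,
        Real.norm_eq_abs, sq_abs]
      field_simp
      ring
    have hproj : ‖u - Submodule.orthogonalProjectionOnto K' u‖ ^ 2 ≤ ‖u - y‖ ^ 2 := proj_min K' u y hyK'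
    have hle : ⟪r, v⟫ ^ 2 ≤ ⟪r, w⟫ ^ 2 / ‖w‖ ^ 2 := by
      rw [hrw, le_div_iff₀ hwpos]
      nlinarith [sq_nonneg (⟪r, v⟫ : ℝ)]
    linarith

lemma sigma_le (S : Finset E) (q : E) (hq : q ∈ Submodule.span ℝ (S : Set E)) :
    sigmaMin S * ‖q‖ ^ 2 ≤ ∑ v ∈ S, ⟪q, v⟫ ^ 2 := by
  have hRHS : (0:ℝ) ≤ ∑ v ∈ S, ⟪q, v⟫ ^ 2 := Finset.sum_nonneg fun v _ => sq_nonneg _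
  by_cases hq0 : q = 0
  · simp [hq0]
  obtain ⟨f, -, hf⟩ := Submodule.mem_span_finset.mp hq
  set N2 : ℝ := ∑ i ∈ S, f i ^ 2 with hN2
  have hN2nn : 0 ≤ N2 := Finset.sum_nonneg fun i _ => sq_nonneg _
  have hN2pos : 0 < N2 := by
    rcases hN2nn.lt_or_eq with h | h
    · exact h
    · exfalso; apply hq0
      have hall : ∀ i ∈ S, f i = 0 := by
        intro i hi
        have := (Finset.sum_eq_zero_iff_of_nonneg (fun i _ => sq_nonneg (f i))).mp h.symm i hi
        exact pow_eq_zero_iff (by norm_num) |>.mp this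
      rw [← hf]
      exact Finset.sum_eq_zero fun i hi => by rw [hall i hi, zero_smul]
  have hsqrt : Real.sqrt N2 ^ 2 = N2 := Real.sq_sqrt hN2nn
  have hsqrtpos : 0 < Real.sqrt N2 := Real.sqrt_pos.mpr hN2pos
  have hmem : ‖q‖ ^ 2 / N2 ∈ {r : ℝ | ∃ α : S → ℝ, ∑ v, (α v) ^ 2 = 1 ∧
      r = ‖∑ v, α v • (v : E)‖ ^ 2} := by
    refine ⟨fun v => f ↑v / Real.sqrt N2, ?_, ?_⟩
    · have h1 : ∑ v : S, (f ↑v / Real.sqrt N2) ^ 2 = ∑ v : S, f ↑v ^ 2 / N2 := by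
        apply Finset.sum_congr rfl; intro v _; rw [div_pow, hsqrt]
      rw [h1, ← Finset.sum_div, Finset.sum_coe_sort S (fun i => f i ^ 2)]
      field_simp
      exact hN2.symm
    · have hsum : ∑ v : S, (f ↑v / Real.sqrt N2) • (v : E) =
          (Real.sqrt N2)⁻¹ • q := by
        rw [← hf, ← Finset.sum_coe_sort S (fun i => f i • i), Finset.smul_sum]
        apply Finset.sum_congr rfl; intro v _
        rw [smul_smul, div_eq_mul_inv, mul_comm]
      rw [hsum, norm_smul, Real.norm_eq_abs, abs_of_pos (by positivity), mul_pow, inv_pow, hsqrt]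
      field_simp
  have hbdd : BddBelow {r : ℝ | ∃ α : S → ℝ, ∑ v, (α v) ^ 2 = 1 ∧
      r = ‖∑ v, α v • (v : E)‖ ^ 2} := by
    refine ⟨0, fun x hx => ?_⟩
    obtain ⟨α, _, hx⟩ := hx
    rw [hx]; positivity
  have hσle : sigmaMin S ≤ ‖q‖ ^ 2 / N2 := csInf_le hbdd hmem
  have hqq : ‖q‖ ^ 2 = ∑ i ∈ S, f i * ⟪q, i⟫ := by
    rw [← real_inner_self_eq_norm_sq]
    calc ⟪q, q⟫ = ⟪q, ∑ i ∈ S, f i • i⟫ := by rw [hf]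
      _ = ∑ i ∈ S, ⟪q, f i • i⟫ := inner_sum S (fun i => f i • i) q
      _ = ∑ i ∈ S, f i * ⟪q, i⟫ := by
          apply Finset.sum_congr rfl; intro i _; rw [real_inner_smul_right]
  have hcs : (∑ i ∈ S, f i * ⟪q, i⟫) ^ 2 ≤ N2 * ∑ i ∈ S, ⟪q, i⟫ ^ 2 :=
    Finset.sum_mul_sq_le_sq_mul_sq S f (fun i => ⟪q, i⟫)
  have hq2pos : (0:ℝ) < ‖q‖ ^ 2 := pow_pos (norm_pos_iff.mpr hq0) 2
  have h4 : (‖q‖ ^ 2) ^ 2 ≤ N2 * ∑ i ∈ S, ⟪q, i⟫ ^ 2 := by rw [hqq]; exact hcs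
  calc sigmaMin S * ‖q‖ ^ 2 ≤ (‖q‖ ^ 2 / N2) * ‖q‖ ^ 2 :=
        mul_le_mul_of_nonneg_right hσle hq2pos.le
    _ ≤ ∑ i ∈ S, ⟪q, i⟫ ^ 2 := by
        rw [div_mul_eq_mul_div, div_le_iff₀ hN2pos]
        nlinarith [h4]

/-- Transfer: `∑_{v∈S} ⟪r,v⟫²` dominates `σ_min(S) ‖P_S r‖²`. -/
lemma sum_inner_sq_ge (S : Finset E) (r : E) :
    sigmaMin S * ‖(Submodule.orthogonalProjectionOnto (Submodule.span ℝ (S : Set E)) r : E)‖ ^ 2 ≤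
      ∑ v ∈ S, ⟪r, v⟫ ^ 2 := by
  set q : E := (Submodule.orthogonalProjectionOnto (Submodule.span ℝ (S : Set E)) r : E) with hqdef
  have hq : q ∈ Submodule.span ℝ (S : Set E) :=
    (Submodule.orthogonalProjectionOnto (Submodule.span ℝ (S : Set E)) r).2
  have heq : ∀ v ∈ S, ⟪r, v⟫ = ⟪q, v⟫ := by
    intro v hv
    have hperp : r - q ∈ (Submodule.span ℝ (S : Set E))ᗮ :=
      Submodule.sub_starProjection_mem_orthogonal r
    have hvmem : v ∈ Submodule.span ℝ (S : Set E) := Submodule.subset_span hv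
    have : ⟪r - q, v⟫ = 0 := by
      rw [real_inner_comm]
      exact Submodule.inner_right_of_mem_orthogonal hvmem hperp
    rw [inner_sub_left] at this
    linarith
  calc sigmaMin S * ‖q‖ ^ 2 ≤ ∑ v ∈ S, ⟪q, v⟫ ^ 2 := sigma_le S q hq
    _ = ∑ v ∈ S, ⟪r, v⟫ ^ 2 := by
        apply Finset.sum_congr rfl; intro v hv; rw [heq v hv]

/-- Gap bound per column. -/
lemma gap_le (S T : Finset E) (u : E) :
    max 0 (fVec u S - fVec u T) ≤
      2 * ‖(Submodule.orthogonalProjectionOnto (Submodule.span ℝ (S : Set E)) u : E)‖ *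
        ‖(Submodule.orthogonalProjectionOnto (Submodule.span ℝ (S : Set E))
            (u - Submodule.orthogonalProjectionOnto (Submodule.span ℝ (T : Set E)) u) : E)‖ := by
  set KS := Submodule.span ℝ (S : Set E) with hKS
  set KT := Submodule.span ℝ (T : Set E) with hKT
  set p : E := (Submodule.orthogonalProjectionOnto KS u : E) with hp
  set pt : E := (Submodule.orthogonalProjectionOnto KT u : E) with hpt
  set q' : E := (Submodule.orthogonalProjectionOnto KS pt : E) with hq'
  have hdiff : (Submodule.orthogonalProjectionOnto KS (u - pt) : E) = p - q' := by
    rw [hp, hq', map_sub]; rfl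
  rw [hdiff]
  have hS : fVec u S = ‖p‖ ^ 2 := rfl
  have hT : fVec u T = ‖pt‖ ^ 2 := rfl
  have hq'le : ‖q'‖ ^ 2 ≤ ‖pt‖ ^ 2 := by
    have h := proj_pyth KS pt; rw [← hq'] at h
    nlinarith [sq_nonneg ‖pt - q'‖]
  have hrhs : (0:ℝ) ≤ 2 * ‖p‖ * ‖p - q'‖ := by positivity
  apply max_le hrhs
  rw [hS, hT]
  have h1 : ‖p‖ - ‖q'‖ ≤ ‖p - q'‖ := norm_sub_norm_le p q'
  nlinarith [mul_le_mul_of_nonneg_left h1 (by positivity : (0:ℝ) ≤ 2 * ‖p‖),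
    sq_nonneg (‖p‖ - ‖q'‖), norm_nonneg p, norm_nonneg q', norm_nonneg (p - q')]

end Aux

/-- Summed marginal gains dominate a truncated squared gap (matrix version). -/
theorem sum_marginal_gain_matrix {m n : ℕ}
    (A : Fin n → EuclideanSpace ℝ (Fin m))
    (S T : Finset (EuclideanSpace ℝ (Fin m)))
    (hSunit : ∀ v ∈ S, ‖v‖ = 1)
    (hσ : 0 < sigmaMin S) (hS0 : 0 < fMat A S) :
    (sigmaMin S * (∑ j, max 0 (fVec (A j) S - fVec (A j) T)) ^ 2 / (4 * fMat A S) ≤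
      ∑ v ∈ S, (fMat A (insert v T) - fMat A T)) ∧
    (sigmaMin S * (max 0 (fMat A S - fMat A T)) ^ 2 / (4 * fMat A S) ≤
      ∑ v ∈ S, (fMat A (insert v T) - fMat A T)) := by
  classical
  let E' := EuclideanSpace ℝ (Fin m)
  set KS := Submodule.span ℝ ((S : Set (EuclideanSpace ℝ (Fin m)))) with hKS
  set KT := Submodule.span ℝ (T : Set E') with hKT
  set r : Fin n → E' := fun j => A j - Submodule.orthogonalProjectionOnto KT (A j) with hrdef
  set a : Fin n → ℝ := fun j => ‖(Submodule.orthogonalProjectionOnto KS (A j) : E')‖ with hadef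
  set b : Fin n → ℝ := fun j => ‖(Submodule.orthogonalProjectionOnto KS (r j) : E')‖ with hbdef
  set R : ℝ := ∑ j, b j ^ 2 with hRdef
  set G : ℝ := ∑ v ∈ S, (fMat A (insert v T) - fMat A T) with hGdef
  have hRnn : 0 ≤ R := Finset.sum_nonneg fun j _ => sq_nonneg _
  -- Step 1 : σ R ≤ G
  have h1 : sigmaMin S * R ≤ G := by
    have hGeq : G = ∑ v ∈ S, ∑ j, (fVec (A j) (insert v T) - fVec (A j) T) := by
      rw [hGdef]
      apply Finset.sum_congr rfl; intro v _
      rw [fMat, fMat, ← Finset.sum_sub_distrib]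
    have hstep : ∀ v ∈ S, ∑ j, ⟪r j, v⟫ ^ 2 ≤
        ∑ j, (fVec (A j) (insert v T) - fVec (A j) T) := by
      intro v hv
      apply Finset.sum_le_sum; intro j _
      exact gain_ge (A j) v T (hSunit v hv)
    have hlow : ∑ v ∈ S, ∑ j, ⟪r j, v⟫ ^ 2 ≤ G := by
      rw [hGeq]; exact Finset.sum_le_sum hstep
    have hswap : ∑ v ∈ S, ∑ j, ⟪r j, v⟫ ^ 2 = ∑ j, ∑ v ∈ S, ⟪r j, v⟫ ^ 2 :=
      Finset.sum_comm
    have hsig : ∑ j, sigmaMin S * b j ^ 2 ≤ ∑ j, ∑ v ∈ S, ⟪r j, v⟫ ^ 2 := by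
      apply Finset.sum_le_sum; intro j _
      exact sum_inner_sq_ge S (r j)
    have : sigmaMin S * R = ∑ j, sigmaMin S * b j ^ 2 := by
      rw [hRdef, Finset.mul_sum]
    linarith [hsig, hswap ▸ hlow]
  -- Step 2 : (∑ max)² ≤ 4 (fMat A S) R
  have haS : fMat A S = ∑ j, a j ^ 2 := rfl
  have h2 : (∑ j, max 0 (fVec (A j) S - fVec (A j) T)) ^ 2 ≤ 4 * fMat A S * R := by
    have hsum : ∑ j, max 0 (fVec (A j) S - fVec (A j) T) ≤ ∑ j, 2 * a j * b j := by
      apply Finset.sum_le_sum; intro j _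
      exact gap_le S T (A j)
    have hnn : 0 ≤ ∑ j, max 0 (fVec (A j) S - fVec (A j) T) :=
      Finset.sum_nonneg fun j _ => le_max_left _ _
    have hcs : (∑ j, a j * b j) ^ 2 ≤ (∑ j, a j ^ 2) * ∑ j, b j ^ 2 :=
      Finset.sum_mul_sq_le_sq_mul_sq Finset.univ a b
    have h2ab : ∑ j, 2 * a j * b j = 2 * ∑ j, a j * b j := by
      rw [Finset.mul_sum]; apply Finset.sum_congr rfl; intro j _; ring
    have hsq : (∑ j, max 0 (fVec (A j) S - fVec (A j) T)) ^ 2 ≤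
        (2 * ∑ j, a j * b j) ^ 2 := by
      apply pow_le_pow_left₀ hnn; rw [← h2ab]; exact hsum
    rw [haS, hRdef]
    nlinarith [hcs, hsq]
  have h4pos : (0:ℝ) < 4 * fMat A S := by linarith
  -- first conjunct
  have hfirst : sigmaMin S * (∑ j, max 0 (fVec (A j) S - fVec (A j) T)) ^ 2 /
      (4 * fMat A S) ≤ G := by
    rw [div_le_iff₀ h4pos]
    have ha := mul_le_mul_of_nonneg_left h2 hσ.le
    have hb := mul_le_mul_of_nonneg_left h1 h4pos.le
    nlinarith [ha, hb]
  refine ⟨hfirst, ?_⟩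
  -- second conjunct
  have hmaxle : max 0 (fMat A S - fMat A T) ≤
      ∑ j, max 0 (fVec (A j) S - fVec (A j) T) := by
    apply max_le
    · exact Finset.sum_nonneg fun j _ => le_max_left _ _
    · have : fMat A S - fMat A T = ∑ j, (fVec (A j) S - fVec (A j) T) := by
        rw [fMat, fMat, ← Finset.sum_sub_distrib]
      rw [this]
      exact Finset.sum_le_sum fun j _ => le_max_right _ _
  have hmaxnn : 0 ≤ max 0 (fMat A S - fMat A T) := le_max_left _ _
  have hsq2 : (max 0 (fMat A S - fMat A T)) ^ 2 ≤
      (∑ j, max 0 (fVec (A j) S - fVec (A j) T)) ^ 2 :=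
    pow_le_pow_left₀ hmaxnn hmaxle 2
  calc sigmaMin S * (max 0 (fMat A S - fMat A T)) ^ 2 / (4 * fMat A S) ≤
        sigmaMin S * (∑ j, max 0 (fVec (A j) S - fVec (A j) T)) ^ 2 / (4 * fMat A S) := by
        gcongr
    _ ≤ G := hfirst
end

section
/- Let u ∈ ℝ^m, let S and T be finite sets of vectors in ℝ^m with f_u(S) ≥ f_u(T) and f_u(S) > 0, and let x be a unit vector in span(S) with ⟨x, u⟩² = f_u(S). Then |⟨x − Π_T x, u⟩| ≥ (f_u(S) − f_u(T)) / (2·√(f_u(S))), where Π_T denotes orthogonal projection onto span(T). -/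
open scoped RealInnerProductSpace

attribute [local instance] Classical.decEq

/-- Lower bound on the inner product of the T-orthogonal part of the maximizer
x of the projection of u onto span(S). -/
theorem inner_orth_part_lower_bound {m : ℕ}
    (u : EuclideanSpace ℝ (Fin m))
    (S T : Finset (EuclideanSpace ℝ (Fin m)))
    (hST : fVec u T ≤ fVec u S) (hS0 : 0 < fVec u S)
    (x : EuclideanSpace ℝ (Fin m))
    (hxS : x ∈ Submodule.span ℝ (S : Set (EuclideanSpace ℝ (Fin m))))
    (hxnorm : ‖x‖ = 1)
    (hxmax : ⟪x, u⟫ ^ 2 = fVec u S) :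
    (fVec u S - fVec u T) / (2 * Real.sqrt (fVec u S)) ≤
      |⟪x - (Submodule.orthogonalProjectionOnto
          (Submodule.span ℝ (T : Set (EuclideanSpace ℝ (Fin m)))) x :
          EuclideanSpace ℝ (Fin m)), u⟫| := by

  classical
  set K := Submodule.span ℝ (T : Set (EuclideanSpace ℝ (Fin m))) with hK
  set Px : EuclideanSpace ℝ (Fin m) := (Submodule.orthogonalProjectionOnto K x : EuclideanSpace ℝ (Fin m)) with hPx
  set Pu : EuclideanSpace ℝ (Fin m) := (Submodule.orthogonalProjectionOnto K u : EuclideanSpace ℝ (Fin m)) with hPu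
  have hfT : fVec u T = ‖Pu‖ ^ 2 := rfl
  have hfTnn : 0 ≤ fVec u T := by rw [hfT]; positivity
  -- inner of Px with u equals inner with Pu
  have hPxu : ⟪Px, u⟫ = ⟪Px, Pu⟫ := by
    have h0 : ⟪u - Pu, Px⟫ = 0 :=
      Submodule.starProjection_inner_eq_zero (K := K) u Px (Submodule.orthogonalProjectionOnto K x).2
    have h1 : ⟪Px, u - Pu⟫ = 0 := by rw [real_inner_comm]; exact h0
    rw [inner_sub_right] at h1
    linarith
  have hPxnorm : ‖Px‖ ≤ 1 := by
    calc ‖Px‖ ≤ ‖Submodule.orthogonalProjectionOnto K‖ * ‖x‖ := (Submodule.orthogonalProjectionOnto K).le_opNorm x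
    _ ≤ 1 * ‖x‖ := by
        have := Submodule.orthogonalProjectionOnto_norm_le K
        nlinarith [norm_nonneg x]
    _ = ‖x‖ := one_mul _
    _ = 1 := hxnorm
  have hPxnorm' : 0 ≤ ‖Pu‖ := norm_nonneg _
  have hPxu_le : |⟪Px, u⟫| ≤ ‖Pu‖ := by
    rw [hPxu]
    calc |⟪Px, Pu⟫| ≤ ‖Px‖ * ‖Pu‖ := abs_real_inner_le_norm _ _
    _ ≤ 1 * ‖Pu‖ := by nlinarith
    _ = ‖Pu‖ := one_mul _
  have hxu : |⟪x, u⟫| = Real.sqrt (fVec u S) := by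
    rw [← hxmax, Real.sqrt_sq_eq_abs]
  have hsub : ⟪x - Px, u⟫ = ⟪x, u⟫ - ⟪Px, u⟫ := inner_sub_left _ _ _
  have hlb : Real.sqrt (fVec u S) - ‖Pu‖ ≤ |⟪x - Px, u⟫| := by
    rw [hsub]
    calc Real.sqrt (fVec u S) - ‖Pu‖ ≤ |⟪x, u⟫| - |⟪Px, u⟫| := by
          rw [hxu]; linarith
    _ ≤ |⟪x, u⟫ - ⟪Px, u⟫| := abs_sub_abs_le_abs_sub _ _
  refine le_trans ?_ hlb
  have ha : Real.sqrt (fVec u S) ^ 2 = fVec u S := Real.sq_sqrt hS0.le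
  have hb : ‖Pu‖ ^ 2 = fVec u T := hfT.symm
  have hba : ‖Pu‖ ≤ Real.sqrt (fVec u S) := by
    rw [hfT] at hST
    nlinarith [Real.sqrt_nonneg (fVec u S)]
  have hapos : 0 < Real.sqrt (fVec u S) := Real.sqrt_pos.mpr hS0
  rw [div_le_iff₀ (by positivity)]
  nlinarith
end

section
/- Let A ∈ ℝ^{m×n}, let V be a finite set of vectors in ℝ^m with σ_min(V) > 0, and let (I, J) be any partition of V (I ∪ J = V, I ∩ J = ∅). Then f_A(I) + f_A(J) ≥ f_A(V) / (2·κ(V)), i.e., f_A(I) + f_A(J) ≥ σ_min(V)·f_A(V) / (2·σ_max(V)). -/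
open scoped RealInnerProductSpace

attribute [local instance] Classical.decEq

namespace AuxPartition

variable {m : ℕ}

/-- The set of Rayleigh-type values appearing in `sigmaMin`/`sigmaMax`. -/
def sigSet (V : Finset (EuclideanSpace ℝ (Fin m))) : Set ℝ :=
  {r : ℝ | ∃ α : V → ℝ, ∑ v, (α v) ^ 2 = 1 ∧
    r = ‖∑ v, α v • (v : EuclideanSpace ℝ (Fin m))‖ ^ 2}

lemma sigmaMin_eq (V : Finset (EuclideanSpace ℝ (Fin m))) :
    sigmaMin V = sInf (sigSet V) := rfl

lemma sigmaMax_eq (V : Finset (EuclideanSpace ℝ (Fin m))) :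
    sigmaMax V = sSup (sigSet V) := rfl

lemma sigSet_bddBelow (V : Finset (EuclideanSpace ℝ (Fin m))) : BddBelow (sigSet V) := by
  refine ⟨0, fun r hr => ?_⟩
  obtain ⟨α, -, rfl⟩ := hr
  positivity

lemma sigSet_bddAbove (V : Finset (EuclideanSpace ℝ (Fin m))) : BddAbove (sigSet V) := by
  refine ⟨∑ v ∈ V, ‖v‖ ^ 2, fun r hr => ?_⟩
  obtain ⟨α, hα, rfl⟩ := hr
  have h1 : ‖∑ v, α v • (v : EuclideanSpace ℝ (Fin m))‖ ≤
      ∑ v : V, |α v| * ‖(v : EuclideanSpace ℝ (Fin m))‖ := by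
    refine (norm_sum_le _ _).trans_eq ?_
    exact Finset.sum_congr rfl fun v _ => by rw [norm_smul, Real.norm_eq_abs]
  have h2 : (∑ v : V, |α v| * ‖(v : EuclideanSpace ℝ (Fin m))‖) ^ 2 ≤
      (∑ v : V, |α v| ^ 2) * ∑ v : V, ‖(v : EuclideanSpace ℝ (Fin m))‖ ^ 2 :=
    Finset.sum_mul_sq_le_sq_mul_sq _ _ _
  have h3 : (∑ v : V, |α v| ^ 2) = 1 := by simpa [sq_abs] using hα
  have h4 : (∑ v : V, ‖(v : EuclideanSpace ℝ (Fin m))‖ ^ 2) =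
      ∑ v ∈ V, ‖v‖ ^ 2 := Finset.sum_coe_sort V (fun v => ‖v‖ ^ 2)
  calc ‖∑ v, α v • (v : EuclideanSpace ℝ (Fin m))‖ ^ 2
      ≤ (∑ v : V, |α v| * ‖(v : EuclideanSpace ℝ (Fin m))‖) ^ 2 :=
        pow_le_pow_left₀ (norm_nonneg _) h1 2
    _ ≤ (∑ v : V, |α v| ^ 2) * ∑ v : V, ‖(v : EuclideanSpace ℝ (Fin m))‖ ^ 2 := h2
    _ = ∑ v ∈ V, ‖v‖ ^ 2 := by rw [h3, h4, one_mul]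

lemma sigSet_nonempty {V : Finset (EuclideanSpace ℝ (Fin m))} (hV : V.Nonempty) :
    (sigSet V).Nonempty := by
  obtain ⟨v0, hv0⟩ := hV
  refine ⟨_, fun v => if v = ⟨v0, hv0⟩ then (1 : ℝ) else 0, ?_, rfl⟩
  simp

lemma V_nonempty {V : Finset (EuclideanSpace ℝ (Fin m))} (hσ : 0 < sigmaMin V) :
    V.Nonempty := by
  by_contra h
  rw [Finset.not_nonempty_iff_eq_empty] at h
  subst h
  have hset : sigSet (∅ : Finset (EuclideanSpace ℝ (Fin m))) = ∅ := by
    ext r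
    simp only [sigSet, Set.mem_setOf_eq, Set.mem_empty_iff_false, iff_false]
    rintro ⟨α, hα, -⟩
    simp at hα
  rw [sigmaMin_eq, hset, Real.sInf_empty] at hσ
  exact lt_irrefl 0 hσ

lemma sigmaMin_le_sigmaMax {V : Finset (EuclideanSpace ℝ (Fin m))} (hV : V.Nonempty) :
    sigmaMin V ≤ sigmaMax V := by
  rw [sigmaMin_eq, sigmaMax_eq]
  exact csInf_le_csSup (sigSet_nonempty hV) (sigSet_bddBelow V) (sigSet_bddAbove V)

lemma quad_bounds (V : Finset (EuclideanSpace ℝ (Fin m))) (hV : V.Nonempty)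
    (β : EuclideanSpace ℝ (Fin m) → ℝ) :
    sigmaMin V * ∑ v ∈ V, β v ^ 2 ≤ ‖∑ v ∈ V, β v • v‖ ^ 2 ∧
    ‖∑ v ∈ V, β v • v‖ ^ 2 ≤ sigmaMax V * ∑ v ∈ V, β v ^ 2 := by
  set s := ∑ v ∈ V, β v ^ 2 with hs
  have hs0 : 0 ≤ s := Finset.sum_nonneg fun v _ => sq_nonneg _
  rcases eq_or_lt_of_le hs0 with h0 | hpos
  · have hz : ∀ v ∈ V, β v = 0 := by
      intro v hv
      have h := (Finset.sum_eq_zero_iff_of_nonneg (fun v _ => sq_nonneg (β v))).1 h0.symm v hv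
      nlinarith [h]
    have hx : (∑ v ∈ V, β v • v) = 0 :=
      Finset.sum_eq_zero fun v hv => by rw [hz v hv, zero_smul]
    rw [hx, ← h0]
    simp
  · set c := Real.sqrt s with hc
    have hcpos : 0 < c := Real.sqrt_pos.2 hpos
    have hc2 : c ^ 2 = s := Real.sq_sqrt hs0
    set α : V → ℝ := fun v => β v / c with hαdef
    have hsum1 : (∑ v : V, β (v : EuclideanSpace ℝ (Fin m)) ^ 2) = s :=
      Finset.sum_coe_sort V (fun v => β v ^ 2)
    have h1 : ∑ v, (α v) ^ 2 = 1 := by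
      simp only [hαdef, div_pow]
      rw [← Finset.sum_div, hsum1, hc2]
      exact div_self (ne_of_gt hpos)
    have hsum2 : (∑ v : V, β (v : EuclideanSpace ℝ (Fin m)) • (v : EuclideanSpace ℝ (Fin m)))
        = ∑ v ∈ V, β v • v := Finset.sum_coe_sort V (fun v => β v • v)
    have h2 : (∑ v, α v • (v : EuclideanSpace ℝ (Fin m)))
        = c⁻¹ • ∑ v ∈ V, β v • v := by
      rw [← hsum2, Finset.smul_sum]
      refine Finset.sum_congr rfl fun v _ => ?_
      rw [smul_smul, hαdef]
      congr 1
      field_simp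
    have h3 : ‖∑ v, α v • (v : EuclideanSpace ℝ (Fin m))‖ ^ 2
        = ‖∑ v ∈ V, β v • v‖ ^ 2 / s := by
      rw [h2, norm_smul, mul_pow, norm_inv, Real.norm_eq_abs, abs_of_pos hcpos, inv_pow, hc2]
      rw [div_eq_inv_mul]
    have hmem : ‖∑ v ∈ V, β v • v‖ ^ 2 / s ∈ sigSet V := ⟨α, h1, h3.symm⟩
    have hlow : sigmaMin V ≤ ‖∑ v ∈ V, β v • v‖ ^ 2 / s := by
      rw [sigmaMin_eq]; exact csInf_le (sigSet_bddBelow V) hmem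
    have hhigh : ‖∑ v ∈ V, β v • v‖ ^ 2 / s ≤ sigmaMax V := by
      rw [sigmaMax_eq]; exact le_csSup (sigSet_bddAbove V) hmem
    constructor
    · exact (le_div_iff₀ hpos).1 hlow
    · exact (div_le_iff₀ hpos).1 hhigh

lemma inner_eq_inner_proj (K : Submodule ℝ (EuclideanSpace ℝ (Fin m)))
    [K.HasOrthogonalProjection] (u w : EuclideanSpace ℝ (Fin m)) (hw : w ∈ K) :
    ⟪u, w⟫ = ⟪((K.orthogonalProjectionOnto u : K) : EuclideanSpace ℝ (Fin m)), w⟫ := by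
  have h := K.starProjection_inner_eq_zero u w hw
  rw [Submodule.starProjection_apply, inner_sub_left] at h
  linarith


lemma arith_key (smin smax a p q fI fJ ny nz sI sJ sV : ℝ)
    (hsmin : 0 < smin) (hsmax : 0 < smax) (hpq : p + q = a)
    (hp : p ^ 2 ≤ fI * ny) (hq : q ^ 2 ≤ fJ * nz)
    (hyb : ny ≤ smax * sI) (hzb : nz ≤ smax * sJ)
    (hxb : smin * sV ≤ a) (hsplit : sV = sI + sJ)
    (hsI : 0 ≤ sI) (hsJ : 0 ≤ sJ) (hfI : 0 ≤ fI) (hfJ : 0 ≤ fJ)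
    (hny : 0 ≤ ny) (hnz : 0 ≤ nz) (ha0 : 0 ≤ a) :
    smin * a ≤ 2 * smax * (fI + fJ) := by
  rcases eq_or_lt_of_le ha0 with h0 | hapos
  · rw [← h0, mul_zero]
    positivity
  · have hsV0 : 0 ≤ sV := by rw [hsplit]; linarith
    have step1 : a ^ 2 ≤ 2 * (p ^ 2 + q ^ 2) := by nlinarith [sq_nonneg (p - q)]
    have hyb' : ny ≤ smax * sV := by nlinarith [mul_nonneg hsmax.le hsJ]
    have hzb' : nz ≤ smax * sV := by nlinarith [mul_nonneg hsmax.le hsI]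
    have step3 : fI * ny + fJ * nz ≤ (fI + fJ) * (smax * sV) := by
      nlinarith [mul_le_mul_of_nonneg_left hyb' hfI, mul_le_mul_of_nonneg_left hzb' hfJ]
    have step4 : smin * a ^ 2 ≤ smin * (2 * ((fI + fJ) * (smax * sV))) := by
      apply mul_le_mul_of_nonneg_left _ hsmin.le
      linarith
    have step6 : 2 * smax * (fI + fJ) * (smin * sV) ≤ 2 * smax * (fI + fJ) * a := by
      apply mul_le_mul_of_nonneg_left hxb
      positivity
    have final : smin * a * a ≤ 2 * smax * (fI + fJ) * a := by
      nlinarith [step4, step6]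
    exact le_of_mul_le_mul_right final hapos

/-- The per-column key inequality. -/
lemma fVec_key (V I J : Finset (EuclideanSpace ℝ (Fin m)))
    (hσ : 0 < sigmaMin V) (hunion : I ∪ J = V) (hinter : I ∩ J = ∅)
    (u : EuclideanSpace ℝ (Fin m)) :
    sigmaMin V * fVec u V ≤ 2 * sigmaMax V * (fVec u I + fVec u J) := by
  have hV : V.Nonempty := V_nonempty hσ
  have hmax : 0 < sigmaMax V := lt_of_lt_of_le hσ (sigmaMin_le_sigmaMax hV)
  have hIV : I ⊆ V := hunion ▸ Finset.subset_union_left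
  have hJV : J ⊆ V := hunion ▸ Finset.subset_union_right
  have hdisj : Disjoint I J := Finset.disjoint_iff_inter_eq_empty.2 hinter
  set KV := Submodule.span ℝ ((V : Set (EuclideanSpace ℝ (Fin m))))
  set x : EuclideanSpace ℝ (Fin m) := (KV.orthogonalProjectionOnto u : EuclideanSpace ℝ (Fin m))
    with hxdef
  have hxK : x ∈ KV := (KV.orthogonalProjectionOnto u).2
  obtain ⟨α, -, hα⟩ := Submodule.mem_span_finset.1 hxK
  set y : EuclideanSpace ℝ (Fin m) := ∑ v ∈ I, α v • v with hydef
  set z : EuclideanSpace ℝ (Fin m) := ∑ v ∈ J, α v • v with hzdef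
  have hxyz : x = y + z := by
    rw [← hα, ← hunion, Finset.sum_union hdisj]
  have hyI : y ∈ Submodule.span ℝ ((I : Set (EuclideanSpace ℝ (Fin m)))) :=
    Submodule.sum_mem _ fun v hv => Submodule.smul_mem _ _ (Submodule.subset_span hv)
  have hzJ : z ∈ Submodule.span ℝ ((J : Set (EuclideanSpace ℝ (Fin m)))) :=
    Submodule.sum_mem _ fun v hv => Submodule.smul_mem _ _ (Submodule.subset_span hv)
  -- coefficient vectors extended by zero
  set βI : EuclideanSpace ℝ (Fin m) → ℝ := fun v => if v ∈ I then α v else 0 with hβI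
  set βJ : EuclideanSpace ℝ (Fin m) → ℝ := fun v => if v ∈ J then α v else 0 with hβJ
  have hIy : (∑ v ∈ V, βI v • v) = y := by
    rw [hydef, hβI]
    rw [show (∑ v ∈ V, (if v ∈ I then α v else 0) • v)
        = ∑ v ∈ V, (if v ∈ I then α v • v else 0) from
      Finset.sum_congr rfl fun v _ => by split <;> simp]
    rw [Finset.sum_ite_mem, Finset.inter_eq_right.2 hIV]
  have hJz : (∑ v ∈ V, βJ v • v) = z := by
    rw [hzdef, hβJ]
    rw [show (∑ v ∈ V, (if v ∈ J then α v else 0) • v)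
        = ∑ v ∈ V, (if v ∈ J then α v • v else 0) from
      Finset.sum_congr rfl fun v _ => by split <;> simp]
    rw [Finset.sum_ite_mem, Finset.inter_eq_right.2 hJV]
  have hIsq : (∑ v ∈ V, βI v ^ 2) = ∑ v ∈ I, α v ^ 2 := by
    rw [hβI]
    rw [show (∑ v ∈ V, (if v ∈ I then α v else 0) ^ 2)
        = ∑ v ∈ V, (if v ∈ I then α v ^ 2 else 0) from
      Finset.sum_congr rfl fun v _ => by split <;> simp]
    rw [Finset.sum_ite_mem, Finset.inter_eq_right.2 hIV]
  have hJsq : (∑ v ∈ V, βJ v ^ 2) = ∑ v ∈ J, α v ^ 2 := by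
    rw [hβJ]
    rw [show (∑ v ∈ V, (if v ∈ J then α v else 0) ^ 2)
        = ∑ v ∈ V, (if v ∈ J then α v ^ 2 else 0) from
      Finset.sum_congr rfl fun v _ => by split <;> simp]
    rw [Finset.sum_ite_mem, Finset.inter_eq_right.2 hJV]
  set sI := ∑ v ∈ I, α v ^ 2 with hsI
  set sJ := ∑ v ∈ J, α v ^ 2 with hsJ
  set sV := ∑ v ∈ V, α v ^ 2 with hsV
  have hsplit : sV = sI + sJ := by
    rw [hsV, hsI, hsJ, ← hunion, Finset.sum_union hdisj]
  have hsInn : 0 ≤ sI := Finset.sum_nonneg fun v _ => sq_nonneg _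
  have hsJnn : 0 ≤ sJ := Finset.sum_nonneg fun v _ => sq_nonneg _
  -- quadratic form bounds
  have hyb : ‖y‖ ^ 2 ≤ sigmaMax V * sI := by
    have := (quad_bounds V hV βI).2
    rwa [hIy, hIsq] at this
  have hzb : ‖z‖ ^ 2 ≤ sigmaMax V * sJ := by
    have := (quad_bounds V hV βJ).2
    rwa [hJz, hJsq] at this
  have hxb : sigmaMin V * sV ≤ ‖x‖ ^ 2 := by
    have := (quad_bounds V hV α).1
    rwa [hα] at this
  -- inner product identities
  have hux : ⟪u, x⟫ = ‖x‖ ^ 2 := by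
    rw [inner_eq_inner_proj KV u x hxK, ← hxdef, real_inner_self_eq_norm_sq]
  set p := ⟪u, y⟫ with hp
  set q := ⟪u, z⟫ with hq
  have hpq : p + q = ‖x‖ ^ 2 := by
    rw [hp, hq, ← inner_add_right, ← hxyz, hux]
  have hpI : p ^ 2 ≤ fVec u I * ‖y‖ ^ 2 := by
    have h1 : p = ⟪(Submodule.orthogonalProjectionOnto (Submodule.span ℝ
        ((I : Set (EuclideanSpace ℝ (Fin m))))) u : EuclideanSpace ℝ (Fin m)), y⟫ :=
      inner_eq_inner_proj _ u y hyI
    have h2 : |p| ≤ ‖(Submodule.orthogonalProjectionOnto (Submodule.span ℝ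
        ((I : Set (EuclideanSpace ℝ (Fin m))))) u : EuclideanSpace ℝ (Fin m))‖ * ‖y‖ := by
      rw [h1]; exact abs_real_inner_le_norm _ _
    have h3 := pow_le_pow_left₀ (abs_nonneg p) h2 2
    rw [sq_abs, mul_pow] at h3
    rwa [fVec]
  have hqJ : q ^ 2 ≤ fVec u J * ‖z‖ ^ 2 := by
    have h1 : q = ⟪(Submodule.orthogonalProjectionOnto (Submodule.span ℝ
        ((J : Set (EuclideanSpace ℝ (Fin m))))) u : EuclideanSpace ℝ (Fin m)), z⟫ :=
      inner_eq_inner_proj _ u z hzJ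
    have h2 : |q| ≤ ‖(Submodule.orthogonalProjectionOnto (Submodule.span ℝ
        ((J : Set (EuclideanSpace ℝ (Fin m))))) u : EuclideanSpace ℝ (Fin m))‖ * ‖z‖ := by
      rw [h1]; exact abs_real_inner_le_norm _ _
    have h3 := pow_le_pow_left₀ (abs_nonneg q) h2 2
    rw [sq_abs, mul_pow] at h3
    rwa [fVec]
  have hfV : fVec u V = ‖x‖ ^ 2 := rfl
  rw [hfV]
  exact arith_key (sigmaMin V) (sigmaMax V) (‖x‖ ^ 2) p q (fVec u I) (fVec u J)
    (‖y‖ ^ 2) (‖z‖ ^ 2) sI sJ sV hσ hmax hpq hpI hqJ hyb hzb hxb hsplit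
    hsInn hsJnn (sq_nonneg _) (sq_nonneg _) (sq_nonneg _) (sq_nonneg _) (sq_nonneg _)

end AuxPartition

/-- Near-additivity of f_A under partitioning, up to the condition number. -/
theorem fMat_partition_additivity {m n : ℕ}
    (A : Fin n → EuclideanSpace ℝ (Fin m))
    (V I J : Finset (EuclideanSpace ℝ (Fin m)))
    (hσ : 0 < sigmaMin V)
    (hunion : I ∪ J = V) (hinter : I ∩ J = ∅) :
    sigmaMin V * fMat A V / (2 * sigmaMax V) ≤ fMat A I + fMat A J := by
  have hV : V.Nonempty := AuxPartition.V_nonempty hσ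
  have hmax : 0 < sigmaMax V := lt_of_lt_of_le hσ (AuxPartition.sigmaMin_le_sigmaMax hV)
  have h2max : 0 < 2 * sigmaMax V := by linarith
  rw [div_le_iff₀ h2max]
  have hkey : ∀ j, sigmaMin V * fVec (A j) V
      ≤ 2 * sigmaMax V * (fVec (A j) I + fVec (A j) J) := fun j =>
    AuxPartition.fVec_key V I J hσ hunion hinter (A j)
  have hsum : sigmaMin V * fMat A V
      ≤ 2 * sigmaMax V * (fMat A I + fMat A J) := by
    rw [fMat, Finset.mul_sum]
    calc (∑ j, sigmaMin V * fVec (A j) V)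
        ≤ ∑ j, 2 * sigmaMax V * (fVec (A j) I + fVec (A j) J) :=
          Finset.sum_le_sum fun j _ => hkey j
      _ = 2 * sigmaMax V * (fMat A I + fMat A J) := by
          rw [← Finset.mul_sum, fMat, fMat, Finset.sum_add_distrib]
  linarith
end

section
/- Let u ∈ ℝ^m, let V be a finite set of vectors in ℝ^m with σ_min(V) > 0, and let (I, J) be any partition of V (I ∪ J = V, I ∩ J = ∅). Then f_u(I) + f_u(J) ≥ σ_min(V)·f_u(V) / (2·σ_max(V)). -/
open scoped RealInnerProductSpace

attribute [local instance] Classical.decEq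

private lemma sigmaSet_bddBelow {m : ℕ} (V : Finset (EuclideanSpace ℝ (Fin m))) :
    BddBelow {r : ℝ | ∃ α : V → ℝ, ∑ v, (α v) ^ 2 = 1 ∧
      r = ‖∑ v, α v • (v : EuclideanSpace ℝ (Fin m))‖ ^ 2} := by
  refine ⟨0, ?_⟩
  rintro r ⟨α, -, rfl⟩
  positivity

private lemma sigmaSet_bddAbove {m : ℕ} (V : Finset (EuclideanSpace ℝ (Fin m))) :
    BddAbove {r : ℝ | ∃ α : V → ℝ, ∑ v, (α v) ^ 2 = 1 ∧
      r = ‖∑ v, α v • (v : EuclideanSpace ℝ (Fin m))‖ ^ 2} := by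
  refine ⟨∑ v ∈ V, ‖v‖ ^ 2, ?_⟩
  rintro r ⟨α, hα, rfl⟩
  have h1 : ‖∑ v : V, α v • (v : EuclideanSpace ℝ (Fin m))‖ ≤
      ∑ v : V, |α v| * ‖(v : EuclideanSpace ℝ (Fin m))‖ := by
    refine (norm_sum_le _ _).trans_eq ?_
    exact Finset.sum_congr rfl fun v _ => by rw [norm_smul, Real.norm_eq_abs]
  have h2 : (∑ v : V, |α v| * ‖(v : EuclideanSpace ℝ (Fin m))‖) ^ 2 ≤
      (∑ v : V, |α v| ^ 2) * ∑ v : V, ‖(v : EuclideanSpace ℝ (Fin m))‖ ^ 2 :=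
    Finset.sum_mul_sq_le_sq_mul_sq _ _ _
  have h3 : (∑ v : V, |α v| ^ 2) = 1 := by
    simpa [sq_abs] using hα
  have h4 : (∑ v : V, ‖(v : EuclideanSpace ℝ (Fin m))‖ ^ 2) = ∑ v ∈ V, ‖v‖ ^ 2 :=
    Finset.sum_coe_sort V (fun v => ‖v‖ ^ 2)
  have h5 := pow_le_pow_left₀ (norm_nonneg _) h1 2
  rw [h3, one_mul, h4] at h2
  exact h5.trans h2

private lemma sigmaMin_mul_le_s9 {m : ℕ} (V : Finset (EuclideanSpace ℝ (Fin m)))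
    (c : EuclideanSpace ℝ (Fin m) → ℝ) :
    sigmaMin V * ∑ v ∈ V, c v ^ 2 ≤ ‖∑ v ∈ V, c v • v‖ ^ 2 := by
  set S := ∑ v ∈ V, c v ^ 2 with hS
  have hS0 : 0 ≤ S := Finset.sum_nonneg fun _ _ => sq_nonneg _
  rcases eq_or_lt_of_le hS0 with h | h
  · have hz : ∀ v ∈ V, c v = 0 := by
      intro v hv
      have := (Finset.sum_eq_zero_iff_of_nonneg (fun _ _ => sq_nonneg _)).1 h.symm v hv
      exact pow_eq_zero_iff two_ne_zero |>.mp this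
    have : (∑ v ∈ V, c v • v) = 0 :=
      Finset.sum_eq_zero fun v hv => by rw [hz v hv, zero_smul]
    rw [← h, this]
    simp
  · have key : sigmaMin V ≤ ‖∑ v ∈ V, c v • v‖ ^ 2 / S := by
      apply csInf_le (sigmaSet_bddBelow V)
      refine ⟨fun v => c ↑v / Real.sqrt S, ?_, ?_⟩
      · rw [Finset.sum_coe_sort V (fun v => (c v / Real.sqrt S) ^ 2)]
        simp only [div_pow, Real.sq_sqrt hS0]
        rw [← Finset.sum_div, ← hS, div_self h.ne']
      · rw [Finset.sum_coe_sort V (fun v => (c v / Real.sqrt S) • v)]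
        have : (∑ v ∈ V, (c v / Real.sqrt S) • v) =
            (Real.sqrt S)⁻¹ • ∑ v ∈ V, c v • v := by
          rw [Finset.smul_sum]
          exact Finset.sum_congr rfl fun v _ => by
            rw [smul_smul, div_eq_inv_mul]
        rw [this, norm_smul, mul_pow, norm_inv, Real.norm_eq_abs,
          abs_of_nonneg (Real.sqrt_nonneg _), ← Real.sqrt_inv, Real.sq_sqrt (by positivity),
          inv_mul_eq_div]
    calc sigmaMin V * S ≤ (‖∑ v ∈ V, c v • v‖ ^ 2 / S) * S :=
          mul_le_mul_of_nonneg_right key hS0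
      _ = ‖∑ v ∈ V, c v • v‖ ^ 2 := div_mul_cancel₀ _ h.ne'

private lemma le_sigmaMax_mul {m : ℕ} (V : Finset (EuclideanSpace ℝ (Fin m)))
    (c : EuclideanSpace ℝ (Fin m) → ℝ) :
    ‖∑ v ∈ V, c v • v‖ ^ 2 ≤ sigmaMax V * ∑ v ∈ V, c v ^ 2 := by
  set S := ∑ v ∈ V, c v ^ 2 with hS
  have hS0 : 0 ≤ S := Finset.sum_nonneg fun _ _ => sq_nonneg _
  rcases eq_or_lt_of_le hS0 with h | h
  · have hz : ∀ v ∈ V, c v = 0 := by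
      intro v hv
      have := (Finset.sum_eq_zero_iff_of_nonneg (fun _ _ => sq_nonneg _)).1 h.symm v hv
      exact pow_eq_zero_iff two_ne_zero |>.mp this
    have : (∑ v ∈ V, c v • v) = 0 :=
      Finset.sum_eq_zero fun v hv => by rw [hz v hv, zero_smul]
    rw [← h, this]
    simp
  · have key : ‖∑ v ∈ V, c v • v‖ ^ 2 / S ≤ sigmaMax V := by
      apply le_csSup (sigmaSet_bddAbove V)
      refine ⟨fun v => c ↑v / Real.sqrt S, ?_, ?_⟩
      · rw [Finset.sum_coe_sort V (fun v => (c v / Real.sqrt S) ^ 2)]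
        simp only [div_pow, Real.sq_sqrt hS0]
        rw [← Finset.sum_div, ← hS, div_self h.ne']
      · rw [Finset.sum_coe_sort V (fun v => (c v / Real.sqrt S) • v)]
        have : (∑ v ∈ V, (c v / Real.sqrt S) • v) =
            (Real.sqrt S)⁻¹ • ∑ v ∈ V, c v • v := by
          rw [Finset.smul_sum]
          exact Finset.sum_congr rfl fun v _ => by
            rw [smul_smul, div_eq_inv_mul]
        rw [this, norm_smul, mul_pow, norm_inv, Real.norm_eq_abs,
          abs_of_nonneg (Real.sqrt_nonneg _), ← Real.sqrt_inv, Real.sq_sqrt (by positivity),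
          inv_mul_eq_div]
    calc ‖∑ v ∈ V, c v • v‖ ^ 2 = (‖∑ v ∈ V, c v • v‖ ^ 2 / S) * S :=
          (div_mul_cancel₀ _ h.ne').symm
      _ ≤ sigmaMax V * S := mul_le_mul_of_nonneg_right key hS0

private lemma sq_add_le_aux (a b p q X Y : ℝ) (hp : 0 ≤ p) (hq : 0 ≤ q) (hX : 0 ≤ X) (hY : 0 ≤ Y)
    (ha : a ^ 2 ≤ p * X) (hb : b ^ 2 ≤ q * Y) : (a + b) ^ 2 ≤ (p + q) * (X + Y) := by
  have h1 : |a| ≤ Real.sqrt p * Real.sqrt X := by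
    rw [← Real.sqrt_mul hp, ← Real.sqrt_sq_eq_abs]
    exact Real.sqrt_le_sqrt ha
  have h2 : |b| ≤ Real.sqrt q * Real.sqrt Y := by
    rw [← Real.sqrt_mul hq, ← Real.sqrt_sq_eq_abs]
    exact Real.sqrt_le_sqrt hb
  have hsp := Real.sq_sqrt hp
  have hsq := Real.sq_sqrt hq
  have hsX := Real.sq_sqrt hX
  have hsY := Real.sq_sqrt hY
  have h3 : |a + b| ≤ Real.sqrt p * Real.sqrt X + Real.sqrt q * Real.sqrt Y :=
    (abs_add_le a b).trans (add_le_add h1 h2)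
  calc (a + b) ^ 2 = |a + b| ^ 2 := (sq_abs _).symm
    _ ≤ (Real.sqrt p * Real.sqrt X + Real.sqrt q * Real.sqrt Y) ^ 2 :=
        pow_le_pow_left₀ (abs_nonneg _) h3 2
    _ ≤ (p + q) * (X + Y) := by
        nlinarith [sq_nonneg (Real.sqrt p * Real.sqrt Y - Real.sqrt q * Real.sqrt X)]

/-- Near-additivity of f_u under partitioning, up to the condition number
(single-vector version). -/
theorem fVec_partition_additivity {m : ℕ}
    (u : EuclideanSpace ℝ (Fin m))
    (V I J : Finset (EuclideanSpace ℝ (Fin m)))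
    (hσ : 0 < sigmaMin V)
    (hunion : I ∪ J = V) (hinter : I ∩ J = ∅) :
    sigmaMin V * fVec u V / (2 * sigmaMax V) ≤ fVec u I + fVec u J := by
  classical
  -- V nonempty
  have hVne : V.Nonempty := by
    by_contra h
    rw [Finset.not_nonempty_iff_eq_empty] at h
    subst h
    have hempty : {r : ℝ | ∃ α : (∅ : Finset (EuclideanSpace ℝ (Fin m))) → ℝ,
        ∑ v, (α v) ^ 2 = 1 ∧
        r = ‖∑ v, α v • (v : EuclideanSpace ℝ (Fin m))‖ ^ 2} = ∅ := by
      rw [Set.eq_empty_iff_forall_notMem]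
      rintro r ⟨α, hα, -⟩
      simp at hα
    have : sigmaMin (∅ : Finset (EuclideanSpace ℝ (Fin m))) = 0 := by
      rw [sigmaMin, hempty, Real.sInf_empty]
    rw [this] at hσ
    exact lt_irrefl 0 hσ
  -- set nonempty
  have hsetne : {r : ℝ | ∃ α : V → ℝ, ∑ v, (α v) ^ 2 = 1 ∧
      r = ‖∑ v, α v • (v : EuclideanSpace ℝ (Fin m))‖ ^ 2}.Nonempty := by
    obtain ⟨v₀, hv₀⟩ := hVne
    refine ⟨_, fun v => if v = (⟨v₀, hv₀⟩ : V) then 1 else 0, ?_, rfl⟩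
    rw [Finset.sum_eq_single (⟨v₀, hv₀⟩ : V)] <;> simp
  have hmaxpos : 0 < sigmaMax V :=
    lt_of_lt_of_le hσ (csInf_le_csSup hsetne (sigmaSet_bddBelow V) (sigmaSet_bddAbove V))
  set K := Submodule.span ℝ (V : Set (EuclideanSpace ℝ (Fin m))) with hK
  set w : (EuclideanSpace ℝ (Fin m)) := (K.orthogonalProjectionOnto u : (EuclideanSpace ℝ (Fin m))) with hw
  have hwK : w ∈ K := (K.orthogonalProjectionOnto u).2
  obtain ⟨c, -, hc⟩ := Submodule.mem_span_finset.mp hwK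
  set x : (EuclideanSpace ℝ (Fin m)) := ∑ v ∈ I, c v • v with hx
  set y : (EuclideanSpace ℝ (Fin m)) := ∑ v ∈ J, c v • v with hy
  have hdisj : Disjoint I J := Finset.disjoint_iff_inter_eq_empty.mpr hinter
  have hxy : x + y = w := by rw [hx, hy, ← Finset.sum_union hdisj, hunion, hc]
  -- membership
  have hxI : x ∈ Submodule.span ℝ (I : Set (EuclideanSpace ℝ (Fin m))) :=
    Submodule.sum_mem _ fun v hv => Submodule.smul_mem _ _ (Submodule.subset_span hv)
  have hyJ : y ∈ Submodule.span ℝ (J : Set (EuclideanSpace ℝ (Fin m))) :=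
    Submodule.sum_mem _ fun v hv => Submodule.smul_mem _ _ (Submodule.subset_span hv)
  -- inner product bounds
  have hC : ∀ (S : Finset (EuclideanSpace ℝ (Fin m))) (z : (EuclideanSpace ℝ (Fin m))), z ∈ Submodule.span ℝ (S : Set (EuclideanSpace ℝ (Fin m))) →
      ⟪u, z⟫ ^ 2 ≤ fVec u S * ‖z‖ ^ 2 := by
    intro S z hz
    have h0 := Submodule.starProjection_inner_eq_zero u z hz
    rw [Submodule.starProjection_apply, inner_sub_left] at h0
    have heq : ⟪u, z⟫ =
        ⟪(Submodule.orthogonalProjectionOnto (Submodule.span ℝ (S : Set (EuclideanSpace ℝ (Fin m)))) u : (EuclideanSpace ℝ (Fin m))), z⟫ := by linarith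
    rw [heq]
    have habs := abs_real_inner_le_norm
      ((Submodule.orthogonalProjectionOnto (Submodule.span ℝ (S : Set (EuclideanSpace ℝ (Fin m)))) u : (EuclideanSpace ℝ (Fin m)))) z
    calc ⟪(Submodule.orthogonalProjectionOnto (Submodule.span ℝ (S : Set (EuclideanSpace ℝ (Fin m)))) u : (EuclideanSpace ℝ (Fin m))), z⟫ ^ 2
        = |⟪(Submodule.orthogonalProjectionOnto (Submodule.span ℝ (S : Set (EuclideanSpace ℝ (Fin m)))) u : (EuclideanSpace ℝ (Fin m))), z⟫| ^ 2 :=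
          (sq_abs _).symm
      _ ≤ (‖(Submodule.orthogonalProjectionOnto (Submodule.span ℝ (S : Set (EuclideanSpace ℝ (Fin m)))) u : (EuclideanSpace ℝ (Fin m)))‖ * ‖z‖) ^ 2 :=
          pow_le_pow_left₀ (abs_nonneg _) habs 2
      _ = fVec u S * ‖z‖ ^ 2 := by rw [mul_pow]; rfl
  have hCx := hC I x hxI
  have hCy := hC J y hyJ
  -- inner sum
  have hD : ⟪u, x⟫ + ⟪u, y⟫ = ‖w‖ ^ 2 := by
    have h2 := Submodule.starProjection_inner_eq_zero u w hwK
    rw [Submodule.starProjection_apply, inner_sub_left] at h2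
    have h3 : ⟪w, w⟫ = ‖w‖ ^ 2 := real_inner_self_eq_norm_sq w
    have h4 : ⟪u, x⟫ + ⟪u, y⟫ = ⟪u, w⟫ := by rw [← hxy, inner_add_right]
    linarith
  -- norm bounds via sigmaMax
  have hBsub : ∀ S : Finset (EuclideanSpace ℝ (Fin m)), S ⊆ V →
      ‖∑ v ∈ S, c v • v‖ ^ 2 ≤ sigmaMax V * ∑ v ∈ S, c v ^ 2 := by
    intro S hSV
    have := le_sigmaMax_mul V (fun v => if v ∈ S then c v else 0)
    have e1 : (∑ v ∈ V, (if v ∈ S then c v else 0) • v) = ∑ v ∈ S, c v • v := by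
      have h : ∀ v : (EuclideanSpace ℝ (Fin m)), (if v ∈ S then c v else 0) • v =
          if v ∈ S then c v • v else 0 := fun v => by split <;> simp
      simp_rw [h]
      rw [Finset.sum_ite_mem, Finset.inter_eq_right.mpr hSV]
    have e2 : (∑ v ∈ V, (if v ∈ S then c v else 0) ^ 2) = ∑ v ∈ S, c v ^ 2 := by
      have h : ∀ v : (EuclideanSpace ℝ (Fin m)), (if v ∈ S then c v else 0) ^ 2 =
          if v ∈ S then c v ^ 2 else 0 := fun v => by split <;> simp
      simp_rw [h]
      rw [Finset.sum_ite_mem, Finset.inter_eq_right.mpr hSV]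
    rwa [e1, e2] at this
  have hBx := hBsub I (by rw [← hunion]; exact Finset.subset_union_left)
  have hBy := hBsub J (by rw [← hunion]; exact Finset.subset_union_right)
  set S := ∑ v ∈ V, c v ^ 2 with hSdef
  have hSsplit : S = (∑ v ∈ I, c v ^ 2) + ∑ v ∈ J, c v ^ 2 := by
    rw [hSdef, ← hunion, Finset.sum_union hdisj]
  have hA : sigmaMin V * S ≤ ‖w‖ ^ 2 := by
    have := sigmaMin_mul_le_s9 V c
    rwa [hc] at this
  -- nonnegativity
  have hfI : 0 ≤ fVec u I := sq_nonneg _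
  have hfJ : 0 ≤ fVec u J := sq_nonneg _
  have hS0 : 0 ≤ S := Finset.sum_nonneg fun _ _ => sq_nonneg _
  -- key inequality
  have hkey : (‖w‖ ^ 2) ^ 2 ≤ (fVec u I + fVec u J) * (‖x‖ ^ 2 + ‖y‖ ^ 2) := by
    rw [← hD]
    exact sq_add_le_aux _ _ _ _ _ _ hfI hfJ (sq_nonneg _) (sq_nonneg _) hCx hCy
  have hnorms : ‖x‖ ^ 2 + ‖y‖ ^ 2 ≤ sigmaMax V * S := by
    rw [hSsplit, mul_add]; exact add_le_add hBx hBy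
  -- finish
  have hfV : fVec u V = ‖w‖ ^ 2 := rfl
  have hF : 0 ≤ fVec u I + fVec u J := add_nonneg hfI hfJ
  rw [hfV, div_le_iff₀ (by positivity)]
  rcases eq_or_lt_of_le (sq_nonneg ‖w‖) with hW | hW
  · nlinarith [mul_nonneg hF hmaxpos.le]
  · have h5 : (‖w‖ ^ 2) ^ 2 ≤ (fVec u I + fVec u J) * (sigmaMax V * S) :=
      hkey.trans (mul_le_mul_of_nonneg_left hnorms hF)
    have h6 : sigmaMin V * (‖w‖ ^ 2) ^ 2 ≤
        sigmaMin V * ((fVec u I + fVec u J) * (sigmaMax V * S)) :=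
      mul_le_mul_of_nonneg_left h5 hσ.le
    have h7 : (fVec u I + fVec u J) * sigmaMax V * (sigmaMin V * S) ≤
        (fVec u I + fVec u J) * sigmaMax V * ‖w‖ ^ 2 :=
      mul_le_mul_of_nonneg_left hA (mul_nonneg hF hmaxpos.le)
    have h8 : sigmaMin V * ‖w‖ ^ 2 * ‖w‖ ^ 2 ≤
        (fVec u I + fVec u J) * sigmaMax V * ‖w‖ ^ 2 := by
      calc sigmaMin V * ‖w‖ ^ 2 * ‖w‖ ^ 2 = sigmaMin V * (‖w‖ ^ 2) ^ 2 := by ring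
        _ ≤ sigmaMin V * ((fVec u I + fVec u J) * (sigmaMax V * S)) := h6
        _ = (fVec u I + fVec u J) * sigmaMax V * (sigmaMin V * S) := by ring
        _ ≤ (fVec u I + fVec u J) * sigmaMax V * ‖w‖ ^ 2 := h7
    have h9 : sigmaMin V * ‖w‖ ^ 2 ≤ (fVec u I + fVec u J) * sigmaMax V :=
      le_of_mul_le_mul_right h8 hW
    have h10 : 0 ≤ (fVec u I + fVec u J) * sigmaMax V := mul_nonneg hF hmaxpos.le
    have h11 : (fVec u I + fVec u J) * (2 * sigmaMax V) =
        (fVec u I + fVec u J) * sigmaMax V + (fVec u I + fVec u J) * sigmaMax V := by ring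
    rw [h11]
    linarith
end
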